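/- arXiv:2510.18031 — 12 statements merged into one kernel-verified Lean document; each statement's English description precedes it below -/
import Mathlib

section
/- Let n ≥ 1 and let Γ, Δ be n×n real matrices with nonnegative entries such that ΓΔ = ΔΓ and the sum Γ + Δ is irreducible. Then Γ and Δ have a common eigenvector with strictly positive entries: there exist a vector v ∈ ℝⁿ with v_k > 0 for all k and nonnegative real numbers λ, μ such that Γv = λv and Δv = μv. -/
open Finset

/-- Entries of powers of a nonnegative matrix are nonnegative. -/
lemma aux_pow_entry_nonneg {n : ℕ} (A : Matrix (Fin n) (Fin n) ℝ)
    (hA : ∀ i j, 0 ≤ A i j) : ∀ (k : ℕ) (i j : Fin n), 0 ≤ (A ^ k) i j := by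
  intro k
  induction k with
  | zero =>
    intro i j
    simp only [pow_zero, Matrix.one_apply]
    split <;> norm_num
  | succ k ih =>
    intro i j
    rw [pow_succ, Matrix.mul_apply]
    exact Finset.sum_nonneg fun l _ => mul_nonneg (ih i l) (hA l j)

/-- Entries of `A^k` are bounded by entries of `(1+A)^M` for `k ≤ M`, when `A ≥ 0`. -/
lemma aux_pow_le_one_add_pow {n : ℕ} (A : Matrix (Fin n) (Fin n) ℝ)
    (hA : ∀ i j, 0 ≤ A i j) :
    ∀ (M k : ℕ), k ≤ M → ∀ i j, (A ^ k) i j ≤ ((1 + A) ^ M) i j := by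
  have h1A : ∀ i j, 0 ≤ (1 + A) i j := by
    intro i j
    simp only [Matrix.add_apply, Matrix.one_apply]
    have := hA i j
    split <;> linarith
  intro M
  induction M with
  | zero =>
    intro k hk i j
    interval_cases k
    simp
  | succ M ih =>
    intro k hk i j
    have hexp : (1 + A) ^ (M + 1) = (1 + A) ^ M + (1 + A) ^ M * A := by
      rw [pow_succ, mul_add, mul_one]
    rw [hexp, Matrix.add_apply]
    rcases Nat.lt_or_ge k (M + 1) with h | h
    · have h2 : (0:ℝ) ≤ ((1 + A) ^ M * A) i j := by
        rw [Matrix.mul_apply]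
        exact Finset.sum_nonneg fun l _ =>
          mul_nonneg (aux_pow_entry_nonneg _ h1A M i l) (hA l j)
      have := ih k (Nat.lt_succ_iff.mp h) i j
      linarith
    · have hk' : k = M + 1 := le_antisymm hk h
      subst hk'
      have h1 : (0:ℝ) ≤ ((1 + A) ^ M) i j := aux_pow_entry_nonneg _ h1A M i j
      have h2 : (A ^ (M + 1)) i j ≤ ((1 + A) ^ M * A) i j := by
        rw [pow_succ, Matrix.mul_apply, Matrix.mul_apply]
        exact Finset.sum_le_sum fun l _ =>
          mul_le_mul_of_nonneg_right (ih M le_rfl i l) (hA l j)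
      linarith

/-- Perron–Frobenius existence: an irreducible nonnegative matrix has a strictly
positive eigenvector with nonnegative eigenvalue. -/
lemma aux_perron (n : ℕ) (hn : 1 ≤ n) (A : Matrix (Fin n) (Fin n) ℝ)
    (hA0 : ∀ i j, 0 ≤ A i j)
    (hirr : ∀ i j, ∃ m : ℕ, 1 ≤ m ∧ 0 < (A ^ m) i j) :
    ∃ (v : Fin n → ℝ) (ρ : ℝ), (∀ k, 0 < v k) ∧ 0 ≤ ρ ∧ A.mulVec v = ρ • v := by
  haveI : NeZero n := ⟨by omega⟩
  have hne : (Finset.univ : Finset (Fin n)).Nonempty := Finset.univ_nonempty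
  -- a power of (1+A) with all entries positive
  choose m hm1 hmpos using hirr
  set M := Finset.univ.sup (fun p : Fin n × Fin n => m p.1 p.2) with hM
  set B := (1 + A) ^ M with hB
  have h1A : ∀ i j, 0 ≤ (1 + A) i j := by
    intro i j
    simp only [Matrix.add_apply, Matrix.one_apply]
    have := hA0 i j
    split <;> linarith
  have hBnn : ∀ i j, 0 ≤ B i j := fun i j => aux_pow_entry_nonneg _ h1A M i j
  have hBpos : ∀ i j, 0 < B i j := by
    intro i j
    have hle : m i j ≤ M := Finset.le_sup (f := fun p : Fin n × Fin n => m p.1 p.2) (Finset.mem_univ (i, j))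
    exact lt_of_lt_of_le (hmpos i j) (aux_pow_le_one_add_pow A hA0 M (m i j) hle i j)
  have hBA : B * A = A * B := by
    have : Commute (1 + A) A := ((Commute.one_left A).add_left (Commute.refl A))
    exact (this.pow_left M).eq
  -- nonnegativity of mulVec
  have hmulVec_apply : ∀ (C : Matrix (Fin n) (Fin n) ℝ) (x : Fin n → ℝ) (i : Fin n),
      C.mulVec x i = ∑ j, C i j * x j := by
    intro C x i; rfl
  -- the compact set K
  set S := stdSimplex ℝ (Fin n) with hS
  have hBcont : Continuous (fun x : Fin n → ℝ => B.mulVec x) := by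
    apply continuous_pi
    intro i
    simp only [hmulVec_apply]
    exact continuous_finset_sum _ fun j _ => continuous_const.mul (continuous_apply j)
  set K := (fun x : Fin n → ℝ => B.mulVec x) '' S with hK
  have hKcomp : IsCompact K := (isCompact_stdSimplex ℝ (Fin n)).image hBcont
  have hSne : S.Nonempty := by
    obtain ⟨i0⟩ := (inferInstance : Nonempty (Fin n))
    refine ⟨fun i => if i = i0 then 1 else 0, fun i => by positivity, ?_⟩
    simp
  have hKne : K.Nonempty := hSne.image _
  have hKpos : ∀ x ∈ K, ∀ i, 0 < x i := by
    rintro _ ⟨y, ⟨hy0, hy1⟩, rfl⟩ i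
    have hyj : ∃ j, 0 < y j := by
      by_contra hcon
      push_neg at hcon
      have : ∑ j, y j ≤ 0 := Finset.sum_nonpos fun j _ => hcon j
      rw [hy1] at this; linarith
    obtain ⟨j, hj⟩ := hyj
    show 0 < B.mulVec y i
    rw [hmulVec_apply]
    have hterm : 0 < B i j * y j := mul_pos (hBpos i j) hj
    have hle : B i j * y j ≤ ∑ l, B i l * y l :=
      Finset.single_le_sum (fun l _ => mul_nonneg (hBnn i l) (hy0 l)) (Finset.mem_univ j)
    linarith
  -- the Collatz–Wielandt function
  set r : (Fin n → ℝ) → ℝ :=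
    fun x => Finset.univ.inf' hne (fun i => A.mulVec x i / x i) with hr
  have hrcont : ContinuousOn r K := by
    apply ContinuousOn.finset_inf'_apply hne
    intro i _
    apply ContinuousOn.div
    · apply Continuous.continuousOn
      simp only [hmulVec_apply]
      exact continuous_finset_sum _ fun j _ => continuous_const.mul (continuous_apply j)
    · exact (continuous_apply i).continuousOn
    · exact fun x hx => (hKpos x hx i).ne'
  obtain ⟨v, hvK, hvmax⟩ := hKcomp.exists_isMaxOn hKne hrcont
  set ρ := r v with hρ
  have hvpos : ∀ i, 0 < v i := hKpos v hvK
  have hAvnn : ∀ (x : Fin n → ℝ), (∀ i, 0 ≤ x i) → ∀ i, 0 ≤ A.mulVec x i := by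
    intro x hx i
    rw [hmulVec_apply]
    exact Finset.sum_nonneg fun j _ => mul_nonneg (hA0 i j) (hx j)
  have hρ0 : 0 ≤ ρ :=
    Finset.le_inf' hne _ fun i _ => div_nonneg (hAvnn v (fun i => (hvpos i).le) i) (hvpos i).le
  have hAv_ge : ∀ i, ρ * v i ≤ A.mulVec v i := fun i =>
    (le_div_iff₀ (hvpos i)).mp (Finset.inf'_le _ (Finset.mem_univ i))
  by_cases huz : A.mulVec v = ρ • v
  · exact ⟨v, ρ, hvpos, hρ0, huz⟩
  · exfalso
    set u := A.mulVec v - ρ • v with hu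
    have hu0 : ∀ i, 0 ≤ u i := by
      intro i
      simp only [hu, Pi.sub_apply, Pi.smul_apply, smul_eq_mul, sub_nonneg]
      exact hAv_ge i
    have hune : u ≠ 0 := sub_ne_zero.mpr huz
    obtain ⟨k0, hk0⟩ : ∃ k0, 0 < u k0 := by
      obtain ⟨k0, hk0⟩ := Function.ne_iff.mp hune
      exact ⟨k0, lt_of_le_of_ne (hu0 k0) (Ne.symm hk0)⟩
    have hBu : ∀ i, 0 < B.mulVec u i := by
      intro i
      rw [hmulVec_apply]
      have hterm : 0 < B i k0 * u k0 := mul_pos (hBpos i k0) hk0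
      have hle : B i k0 * u k0 ≤ ∑ l, B i l * u l :=
        Finset.single_le_sum (fun l _ => mul_nonneg (hBnn i l) (hu0 l)) (Finset.mem_univ k0)
      linarith
    set w := B.mulVec v with hw
    have hwpos : ∀ i, 0 < w i := by
      intro i
      rw [hw, hmulVec_apply]
      have hterm : 0 < B i i * v i := mul_pos (hBpos i i) (hvpos i)
      have hle : B i i * v i ≤ ∑ l, B i l * v l :=
        Finset.single_le_sum (fun l _ => mul_nonneg (hBnn i l) (hvpos l).le) (Finset.mem_univ i)
      linarith
    have hAveq : A.mulVec v = ρ • v + u := by simp [hu]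
    have hAw : A.mulVec w = ρ • w + B.mulVec u := by
      rw [hw, Matrix.mulVec_mulVec, ← hBA, ← Matrix.mulVec_mulVec, hAveq,
        Matrix.mulVec_add, Matrix.mulVec_smul]
    have hrw : ρ < r w := by
      rw [hr]
      rw [Finset.lt_inf'_iff]
      intro i _
      rw [lt_div_iff₀ (hwpos i)]
      have : A.mulVec w i = ρ * w i + B.mulVec u i := by
        rw [hAw]; simp [mul_comm]
      rw [this]
      have := hBu i
      linarith
    -- rescale w into K
    set c := ∑ i, v i with hc
    have hcpos : 0 < c := by
      rw [hc]
      exact Finset.sum_pos (fun i _ => hvpos i) hne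
    have hvS : c⁻¹ • v ∈ S := by
      refine ⟨fun i => by
        have h1 := hvpos i
        simp only [Pi.smul_apply, smul_eq_mul]
        positivity, ?_⟩
      simp only [Pi.smul_apply, smul_eq_mul, ← Finset.mul_sum, ← hc]
      field_simp
    have hwK : c⁻¹ • w ∈ K := ⟨c⁻¹ • v, hvS, by show B.mulVec (c⁻¹ • v) = c⁻¹ • w; rw [Matrix.mulVec_smul, hw]⟩
    have hrscale : r (c⁻¹ • w) = r w := by
      show (Finset.univ.inf' hne fun i => A.mulVec (c⁻¹ • w) i / (c⁻¹ • w) i)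
        = Finset.univ.inf' hne fun i => A.mulVec w i / w i
      refine Finset.inf'_congr hne rfl fun i _ => ?_
      rw [Matrix.mulVec_smul]
      simp only [Pi.smul_apply, smul_eq_mul]
      rw [mul_div_mul_left _ _ (inv_ne_zero hcpos.ne')]
    have hle : r (c⁻¹ • w) ≤ r v := hvmax hwK
    rw [hrscale] at hle
    exact absurd hle (not_le.mpr hrw)

/-- If `C` is nonnegative, commutes with an irreducible nonnegative `A`, and `v` is a
positive eigenvector of `A`, then `v` is an eigenvector of `C` with nonnegative eigenvalue. -/
lemma aux_common_eig (n : ℕ) (hn : 1 ≤ n) (A C : Matrix (Fin n) (Fin n) ℝ)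
    (hA0 : ∀ i j, 0 ≤ A i j) (hC0 : ∀ i j, 0 ≤ C i j)
    (hirr : ∀ i j, ∃ m : ℕ, 1 ≤ m ∧ 0 < (A ^ m) i j)
    (hcomm : A * C = C * A)
    (v : Fin n → ℝ) (ρ : ℝ) (hv : ∀ k, 0 < v k) (hAv : A.mulVec v = ρ • v) :
    ∃ lam : ℝ, 0 ≤ lam ∧ C.mulVec v = lam • v := by
  haveI : NeZero n := ⟨by omega⟩
  have hne : (Finset.univ : Finset (Fin n)).Nonempty := Finset.univ_nonempty
  have hmulVec_apply : ∀ (D : Matrix (Fin n) (Fin n) ℝ) (x : Fin n → ℝ) (i : Fin n),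
      D.mulVec x i = ∑ j, D i j * x j := fun D x i => rfl
  set w := C.mulVec v with hwdef
  have hw0 : ∀ i, 0 ≤ w i := by
    intro i
    rw [hwdef, hmulVec_apply]
    exact Finset.sum_nonneg fun j _ => mul_nonneg (hC0 i j) (hv j).le
  set lam := Finset.univ.inf' hne (fun i => w i / v i) with hlam
  obtain ⟨j, _, hj⟩ := Finset.exists_mem_eq_inf' hne (fun i => w i / v i)
  have hlam0 : 0 ≤ lam := by
    rw [hlam, hj]
    exact div_nonneg (hw0 j) (hv j).le
  set u := w - lam • v with hu
  have hu0 : ∀ i, 0 ≤ u i := by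
    intro i
    have := (le_div_iff₀ (hv i)).mp (Finset.inf'_le (fun i => w i / v i) (Finset.mem_univ i))
    simp only [hu, Pi.sub_apply, Pi.smul_apply, smul_eq_mul, sub_nonneg]
    linarith
  have huj : u j = 0 := by
    simp only [hu, Pi.sub_apply, Pi.smul_apply, smul_eq_mul]
    rw [hlam, hj, div_mul_cancel₀ _ (hv j).ne', sub_self]
  have hAu : A.mulVec u = ρ • u := by
    rw [hu, Matrix.mulVec_sub, Matrix.mulVec_smul, hAv, hwdef,
      Matrix.mulVec_mulVec, hcomm, ← Matrix.mulVec_mulVec, hAv, Matrix.mulVec_smul]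
    rw [smul_sub, smul_comm ρ lam]
  have hpow : ∀ mm : ℕ, (A ^ mm).mulVec u = ρ ^ mm • u := by
    intro mm
    induction mm with
    | zero => simp [Matrix.one_mulVec]
    | succ k ih =>
      rw [pow_succ, ← Matrix.mulVec_mulVec, hAu, Matrix.mulVec_smul, ih,
        smul_smul, pow_succ, mul_comm]
  by_cases huz : u = 0
  · refine ⟨lam, hlam0, ?_⟩
    have : w - lam • v = 0 := huz
    rw [hwdef] at this ⊢
    linear_combination (norm := abel) this
  · exfalso
    obtain ⟨k0, hk0ne⟩ := Function.ne_iff.mp huz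
    have hk0 : 0 < u k0 := lt_of_le_of_ne (hu0 k0) (Ne.symm hk0ne)
    obtain ⟨mm, hmm1, hmmpos⟩ := hirr j k0
    have hA0' : ∀ i l, 0 ≤ (A ^ mm) i l := fun i l => aux_pow_entry_nonneg A hA0 mm i l
    have hsum : 0 < (A ^ mm).mulVec u j := by
      rw [hmulVec_apply]
      have hterm : 0 < (A ^ mm) j k0 * u k0 := mul_pos hmmpos hk0
      have hle : (A ^ mm) j k0 * u k0 ≤ ∑ l, (A ^ mm) j l * u l :=
        Finset.single_le_sum (fun l _ => mul_nonneg (hA0' j l) (hu0 l)) (Finset.mem_univ k0)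
      linarith
    rw [hpow] at hsum
    simp only [Pi.smul_apply, smul_eq_mul, huj, mul_zero] at hsum
    exact lt_irrefl 0 hsum

/-- If `Γ, Δ` are `n × n` nonnegative real matrices that commute and whose
sum is irreducible, then they have a common eigenvector with strictly positive entries,
with nonnegative eigenvalues. Irreducibility is phrased as: for all `i j` there is
`m ≥ 1` with `((Γ + Δ)^m) i j > 0`. -/
theorem commuting_nonneg_irreducible_common_positive_eigenvector
    (n : ℕ) (hn : 1 ≤ n) (Γ Δ : Matrix (Fin n) (Fin n) ℝ)
    (hΓ0 : ∀ i j, 0 ≤ Γ i j) (hΔ0 : ∀ i j, 0 ≤ Δ i j)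
    (hcomm : Γ * Δ = Δ * Γ)
    (hirr : ∀ i j, ∃ m : ℕ, 1 ≤ m ∧ 0 < ((Γ + Δ) ^ m) i j) :
    ∃ (v : Fin n → ℝ) (lam mu : ℝ),
      (∀ k, 0 < v k) ∧ 0 ≤ lam ∧ 0 ≤ mu ∧
      Γ.mulVec v = lam • v ∧ Δ.mulVec v = mu • v := by
  set A := Γ + Δ with hA
  have hA0 : ∀ i j, 0 ≤ A i j := fun i j => by
    simp only [hA, Matrix.add_apply]
    exact add_nonneg (hΓ0 i j) (hΔ0 i j)
  obtain ⟨v, ρ, hvpos, hρ0, hAv⟩ := aux_perron n hn A hA0 hirr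
  have hcommΓ : A * Γ = Γ * A := by
    simp only [hA, add_mul, mul_add, hcomm]
  have hcommΔ : A * Δ = Δ * A := by
    simp only [hA, add_mul, mul_add, hcomm]
  obtain ⟨lam, hlam0, hΓv⟩ := aux_common_eig n hn A Γ hA0 hΓ0 hirr hcommΓ v ρ hvpos hAv
  obtain ⟨mu, hmu0, hΔv⟩ := aux_common_eig n hn A Δ hA0 hΔ0 hirr hcommΔ v ρ hvpos hAv
  exact ⟨v, lam, mu, hvpos, hlam0, hmu0, hΓv, hΔv⟩
end

section
/- Let n ≥ 1 and let Γ, Δ be n×n real matrices with nonnegative entries such that ΓΔ = ΔΓ and Γ + Δ is irreducible. Suppose S ⊆ {1,…,n} and its complement Sᶜ are both nonempty and Γ_{ij} = 0 whenever exactly one of i, j lies in S. Then there exist a nonnegative real λ, a vector v indexed by S with all entries positive, and a vector w indexed by Sᶜ with all entries positive, such that the principal submatrices satisfy Γ[S]v = λv and Γ[Sᶜ]w = λw; moreover every real eigenvalue μ of Γ[S] and every real eigenvalue μ of Γ[Sᶜ] satisfies |μ| ≤ λ. (In particular, the diagonal blocks of Γ have the same dominant eigenvalue.) -/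
open Finset

set_option linter.unusedSectionVars false

namespace PFaux

variable {ι : Type*} [Fintype ι]

lemma mulVec_entry_nonneg (M : Matrix ι ι ℝ) (hM : ∀ i j, 0 ≤ M i j)
    (x : ι → ℝ) (hx : ∀ i, 0 ≤ x i) (i : ι) : 0 ≤ M.mulVec x i :=
  Finset.sum_nonneg fun j _ => mul_nonneg (hM i j) (hx j)

lemma mulVec_entry_pos (M : Matrix ι ι ℝ) (hM : ∀ i j, 0 < M i j)
    (x : ι → ℝ) (hx : ∀ i, 0 ≤ x i) (hx0 : x ≠ 0) (i : ι) : 0 < M.mulVec x i := by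
  obtain ⟨k, hk⟩ : ∃ k, x k ≠ 0 := Function.ne_iff.mp hx0
  have hk' : 0 < x k := lt_of_le_of_ne (hx k) (Ne.symm hk)
  have : M i k * x k ≤ M.mulVec x i :=
    Finset.single_le_sum (f := fun j => M i j * x j)
      (fun j _ => mul_nonneg (le_of_lt (hM i j)) (hx j)) (Finset.mem_univ k)
  exact lt_of_lt_of_le (mul_pos (hM i k) hk') this

/-- Dominance: nonneg matrix with positive eigenvector `v` dominates every real eigenvalue. -/
lemma dominance [Nonempty ι] (M : Matrix ι ι ℝ) (hM : ∀ i j, 0 ≤ M i j)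
    (v : ι → ℝ) (hv : ∀ i, 0 < v i) (lam : ℝ) (hev : M.mulVec v = lam • v)
    (μ : ℝ) (x : ι → ℝ) (hx0 : x ≠ 0) (hx : M.mulVec x = μ • x) : |μ| ≤ lam := by
  have hne : (Finset.univ : Finset ι).Nonempty := Finset.univ_nonempty
  obtain ⟨i0, -, hi0⟩ := Finset.exists_mem_eq_sup' hne (fun i => |x i| / v i)
  set c : ℝ := |x i0| / v i0 with hcdef
  have hle : ∀ j, |x j| / v j ≤ c := fun j =>
    (Finset.le_sup' (fun i => |x i| / v i) (Finset.mem_univ j)).trans hi0.le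
  have hle' : ∀ j, |x j| ≤ c * v j := fun j => by
    have := hle j
    rwa [div_le_iff₀ (hv j)] at this
  have hcpos : 0 < c := by
    obtain ⟨k, hk⟩ : ∃ k, x k ≠ 0 := Function.ne_iff.mp hx0
    exact lt_of_lt_of_le (div_pos (abs_pos.mpr hk) (hv k)) (hle k)
  have hxi0 : |x i0| = c * v i0 := by
    rw [hcdef, div_mul_cancel₀ _ (hv i0).ne']
  have key : |μ| * |x i0| ≤ lam * (c * v i0) := by
    have h1 : |μ * x i0| = |(M.mulVec x) i0| := by rw [hx]; simp
    have h2 : |(M.mulVec x) i0| ≤ ∑ j, M i0 j * |x j| := by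
      refine le_trans (Finset.abs_sum_le_sum_abs _ _) ?_
      exact Finset.sum_le_sum fun j _ => by rw [abs_mul, abs_of_nonneg (hM i0 j)]
    have h3 : ∑ j, M i0 j * |x j| ≤ ∑ j, M i0 j * (c * v j) :=
      Finset.sum_le_sum fun j _ => mul_le_mul_of_nonneg_left (hle' j) (hM i0 j)
    have h4 : ∑ j, M i0 j * (c * v j) = c * (M.mulVec v i0) := by
      simp only [Matrix.mulVec, dotProduct, Finset.mul_sum]
      refine Finset.sum_congr rfl fun j _ => ?_
      ring
    have h5 : c * (M.mulVec v i0) = lam * (c * v i0) := by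
      rw [hev]; simp; ring
    calc |μ| * |x i0| = |μ * x i0| := (abs_mul μ (x i0)).symm
      _ = |(M.mulVec x) i0| := h1
      _ ≤ ∑ j, M i0 j * |x j| := h2
      _ ≤ ∑ j, M i0 j * (c * v j) := h3
      _ = c * (M.mulVec v i0) := h4
      _ = lam * (c * v i0) := h5
  rw [hxi0] at key
  have hpos : 0 < c * v i0 := mul_pos hcpos (hv i0)
  exact le_of_mul_le_mul_right (by linarith [key]) hpos

/-- Eigenvectors of a strictly positive matrix for an eigenvalue with a positive
eigenvector are multiples of that eigenvector. -/
lemma eig_unique [Nonempty ι] (B : Matrix ι ι ℝ) (hB : ∀ i j, 0 < B i j)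
    (lam : ℝ) (z : ι → ℝ) (hz : ∀ i, 0 < z i)
    (hez : B.mulVec z = lam • z)
    (x : ι → ℝ) (hex : B.mulVec x = lam • x) : ∃ t : ℝ, x = t • z := by
  have hne : (Finset.univ : Finset ι).Nonempty := Finset.univ_nonempty
  obtain ⟨i0, -, hi0⟩ := Finset.exists_mem_eq_sup' hne (fun i => x i / z i)
  set t : ℝ := x i0 / z i0 with htdef
  refine ⟨t, ?_⟩
  set y : ι → ℝ := t • z - x with hy
  have hy0 : ∀ i, 0 ≤ y i := by
    intro i
    have : x i / z i ≤ t :=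
      (Finset.le_sup' (fun i => x i / z i) (Finset.mem_univ i)).trans hi0.le
    rw [div_le_iff₀ (hz i)] at this
    simp only [hy, Pi.sub_apply, Pi.smul_apply, smul_eq_mul, sub_nonneg]
    linarith
  have hyi0 : y i0 = 0 := by
    simp only [hy, Pi.sub_apply, Pi.smul_apply, smul_eq_mul, htdef,
      div_mul_cancel₀ _ (hz i0).ne']
    ring
  have hey : B.mulVec y = lam • y := by
    rw [hy, Matrix.mulVec_sub, Matrix.mulVec_smul, hez, hex]
    ext i
    simp [mul_sub]
    ring
  by_contra hxy
  have hyne : y ≠ 0 := by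
    rw [hy]
    exact sub_ne_zero_of_ne fun h => hxy h.symm
  have hpos := mulVec_entry_pos B hB y hy0 hyne i0
  rw [hey] at hpos
  simp only [Pi.smul_apply, smul_eq_mul, hyi0, mul_zero] at hpos
  exact lt_irrefl 0 hpos

/-- Perron's theorem for entrywise positive matrices: existence of a positive
eigenvector with positive eigenvalue. -/
lemma perron_positive [Nonempty ι] (B : Matrix ι ι ℝ) (hB : ∀ i j, 0 < B i j) :
    ∃ (lam : ℝ) (z : ι → ℝ), 0 < lam ∧ (∀ i, 0 < z i) ∧ B.mulVec z = lam • z := by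
  classical
  have hne : (Finset.univ : Finset ι).Nonempty := Finset.univ_nonempty
  set K : Set (ι → ℝ) := stdSimplex ℝ ι with hK
  have hKcpt : IsCompact K := isCompact_stdSimplex ℝ ι
  have hKne : K.Nonempty := by
    refine ⟨fun _ => (Fintype.card ι : ℝ)⁻¹, fun i => by positivity, ?_⟩
    have hcard : (Fintype.card ι : ℝ) ≠ 0 := by
      exact_mod_cast Fintype.card_ne_zero
    simp [Finset.sum_const, Finset.card_univ, hcard]
  -- T := B.mulVec, continuous
  have contT : Continuous (fun x : ι → ℝ => B.mulVec x) := by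
    refine continuous_pi fun i => ?_
    simp only [Matrix.mulVec, dotProduct]
    exact continuous_finset_sum _ fun j _ => continuous_const.mul (continuous_apply j)
  have hTpos : ∀ x ∈ K, ∀ i, 0 < B.mulVec x i := by
    intro x hx i
    obtain ⟨hx0, hxs⟩ := hx
    refine mulVec_entry_pos B hB x hx0 ?_ i
    intro h
    rw [h] at hxs
    simp at hxs
  set c : (ι → ℝ) → ℝ := fun x => ∑ i, B.mulVec x i with hc
  have contc : Continuous c := continuous_finset_sum _ fun i _ => (continuous_apply i).comp contT
  have hcpos : ∀ x ∈ K, 0 < c x := fun x hx =>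
    Finset.sum_pos (fun i _ => hTpos x hx i) hne
  set Φ : (ι → ℝ) → (ι → ℝ) := fun x => (c x)⁻¹ • B.mulVec x with hΦ
  have hΦK : ∀ x ∈ K, Φ x ∈ K := by
    intro x hx
    refine ⟨fun i => ?_, ?_⟩
    · exact mul_nonneg (inv_nonneg.mpr (hcpos x hx).le) (hTpos x hx i).le
    · simp only [hΦ, Pi.smul_apply, smul_eq_mul, ← Finset.mul_sum]
      exact inv_mul_cancel₀ (hcpos x hx).ne'
  have contΦ : ContinuousOn Φ K := fun x hx =>
    (contc.continuousWithinAt.inv₀ (hcpos x hx).ne').smul contT.continuousWithinAt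
  set K' : Set (ι → ℝ) := Φ '' K with hK'
  have hK'cpt : IsCompact K' := hKcpt.image_of_continuousOn contΦ
  have hK'ne : K'.Nonempty := hKne.image Φ
  have hK'sub : K' ⊆ K := by
    rintro _ ⟨x, hx, rfl⟩
    exact hΦK x hx
  have hK'pos : ∀ z ∈ K', ∀ i, 0 < z i := by
    rintro _ ⟨x, hx, rfl⟩ i
    exact mul_pos (inv_pos.mpr (hcpos x hx)) (hTpos x hx i)
  set g : (ι → ℝ) → ℝ := fun x => Finset.univ.inf' hne (fun i => B.mulVec x i / x i) with hg
  have contg : ContinuousOn g K' := by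
    refine ContinuousOn.finset_inf'_apply hne fun i _ => ?_
    intro x hx
    exact (((continuous_apply i).comp contT).continuousWithinAt).div
      (continuous_apply i).continuousWithinAt (hK'pos x hx i).ne'
  obtain ⟨z, hzK', hmax⟩ := hK'cpt.exists_isMaxOn hK'ne contg
  set lam : ℝ := g z with hlam
  have hzpos : ∀ i, 0 < z i := hK'pos z hzK'
  have hzK : z ∈ K := hK'sub hzK'
  have hTz : ∀ i, 0 < B.mulVec z i := hTpos z hzK
  have hlam_pos : 0 < lam := by
    rw [hlam, hg]
    exact (Finset.lt_inf'_iff hne).mpr fun i _ => div_pos (hTz i) (hzpos i)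
  have hge : ∀ i, lam * z i ≤ B.mulVec z i := by
    intro i
    have : lam ≤ B.mulVec z i / z i := Finset.inf'_le _ (Finset.mem_univ i)
    rwa [le_div_iff₀ (hzpos i)] at this
  refine ⟨lam, z, hlam_pos, hzpos, ?_⟩
  set y : ι → ℝ := B.mulVec z - lam • z with hy
  have hy0 : ∀ i, 0 ≤ y i := fun i => by
    simp only [hy, Pi.sub_apply, Pi.smul_apply, smul_eq_mul, sub_nonneg]
    exact hge i
  have hyz : y = 0 := by
    by_contra hyne
    have hBy : ∀ i, 0 < B.mulVec y i := mulVec_entry_pos B hB y hy0 hyne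
    have hstrict : ∀ i, lam * B.mulVec z i < B.mulVec (B.mulVec z) i := by
      intro i
      have := hBy i
      rw [hy, Matrix.mulVec_sub, Matrix.mulVec_smul] at this
      simp only [Pi.sub_apply, Pi.smul_apply, smul_eq_mul, sub_pos] at this
      exact this
    have hΦzK' : Φ z ∈ K' := ⟨z, hzK, rfl⟩
    have hgΦz : lam < g (Φ z) := by
      rw [hg]
      refine (Finset.lt_inf'_iff hne).mpr fun i _ => ?_
      have hcz : (c z)⁻¹ ≠ 0 := inv_ne_zero (hcpos z hzK).ne'
      have hΦz : B.mulVec (Φ z) = (c z)⁻¹ • B.mulVec (B.mulVec z) := by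
        rw [hΦ]
        exact Matrix.mulVec_smul B _ _
      rw [hΦz]
      simp only [hΦ, Pi.smul_apply, smul_eq_mul]
      rw [mul_div_mul_left _ _ hcz]
      rw [lt_div_iff₀ (hTz i)]
      exact hstrict i
    exact absurd (hmax hΦzK') (not_le.mpr hgΦz)
  exact sub_eq_zero.mp hyz

variable [DecidableEq ι]

lemma pow_entry_nonneg (A : Matrix ι ι ℝ) (hA : ∀ i j, 0 ≤ A i j) (k : ℕ) :
    ∀ i j, 0 ≤ (A ^ k) i j := by
  induction k with
  | zero => intro i j; rw [pow_zero]; by_cases h : i = j <;> simp [Matrix.one_apply, h]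
  | succ k ih =>
    intro i j
    rw [pow_succ, Matrix.mul_apply]
    exact Finset.sum_nonneg fun l _ => mul_nonneg (ih i l) (hA l j)

lemma one_add_entry_nonneg (A : Matrix ι ι ℝ) (hA : ∀ i j, 0 ≤ A i j) :
    ∀ i j, 0 ≤ (1 + A) i j := by
  intro i j
  rw [Matrix.add_apply]
  by_cases h : i = j
  · subst h; rw [Matrix.one_apply_eq]; linarith [hA i i]
  · rw [Matrix.one_apply_ne h, zero_add]; exact hA i j

lemma pow_entry_le (A : Matrix ι ι ℝ) (hA : ∀ i j, 0 ≤ A i j) (k : ℕ) :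
    ∀ i j, (A ^ k) i j ≤ ((1 + A) ^ k) i j := by
  induction k with
  | zero => intro i j; simp
  | succ k ih =>
    intro i j
    rw [pow_succ, pow_succ, Matrix.mul_apply, Matrix.mul_apply]
    refine Finset.sum_le_sum fun l _ => ?_
    refine mul_le_mul (ih i l) ?_ (hA l j) ?_
    · rw [Matrix.add_apply]
      exact le_add_of_nonneg_left (by by_cases h : l = j <;> simp [Matrix.one_apply, h])
    · exact pow_entry_nonneg (1 + A) (one_add_entry_nonneg A hA) k i l

lemma one_add_pow_diag (A : Matrix ι ι ℝ) (hA : ∀ i j, 0 ≤ A i j) (k : ℕ) (j : ι) :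
    1 ≤ ((1 + A) ^ k) j j := by
  induction k with
  | zero => simp
  | succ k ih =>
    rw [pow_succ, Matrix.mul_apply]
    have hsingle : ((1 + A) ^ k) j j * (1 + A) j j ≤ ∑ l, ((1 + A) ^ k) j l * (1 + A) l j :=
      Finset.single_le_sum (f := fun l => ((1 + A) ^ k) j l * (1 + A) l j)
        (fun l _ => mul_nonneg (pow_entry_nonneg (1 + A) (one_add_entry_nonneg A hA) k j l)
          (one_add_entry_nonneg A hA l j)) (Finset.mem_univ j)
    have hdiag : (1 : ℝ) ≤ (1 + A) j j := by
      rw [Matrix.add_apply, Matrix.one_apply_eq]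
      linarith [hA j j]
    calc (1:ℝ) = 1 * 1 := by ring
      _ ≤ ((1 + A) ^ k) j j * (1 + A) j j := mul_le_mul ih hdiag zero_le_one
          (le_trans zero_le_one ih)
      _ ≤ _ := hsingle

lemma one_add_pow_pos (A : Matrix ι ι ℝ) (hA : ∀ i j, 0 ≤ A i j) (N : ℕ)
    (i j : ι) (m : ℕ) (hm : m ≤ N) (hpos : 0 < (A ^ m) i j) :
    0 < ((1 + A) ^ N) i j := by
  have hMnn := one_add_entry_nonneg A hA
  have hdecomp : (1 + A) ^ N = (1 + A) ^ m * (1 + A) ^ (N - m) := by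
    rw [← pow_add, Nat.add_sub_cancel' hm]
  rw [hdecomp, Matrix.mul_apply]
  have hsingle : ((1 + A) ^ m) i j * ((1 + A) ^ (N - m)) j j
      ≤ ∑ l, ((1 + A) ^ m) i l * ((1 + A) ^ (N - m)) l j :=
    Finset.single_le_sum (f := fun l => ((1 + A) ^ m) i l * ((1 + A) ^ (N - m)) l j)
      (fun l _ => mul_nonneg (pow_entry_nonneg (1 + A) hMnn m i l)
        (pow_entry_nonneg (1 + A) hMnn (N - m) l j)) (Finset.mem_univ j)
  have h1 : 0 < ((1 + A) ^ m) i j := lt_of_lt_of_le hpos (pow_entry_le A hA m i j)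
  have h2 : (1:ℝ) ≤ ((1 + A) ^ (N - m)) j j := one_add_pow_diag A hA (N - m) j
  nlinarith [hsingle, h1, h2]

end PFaux

namespace PFaux2

lemma restrict_block {n : ℕ} (Γ : Matrix (Fin n) (Fin n) ℝ) (T : Finset (Fin n))
    (z : Fin n → ℝ) (t : ℝ) (ht : Γ.mulVec z = t • z)
    (hb : ∀ i j, i ∈ T → j ∉ T → Γ i j = 0) :
    (Γ.submatrix (Subtype.val : {x // x ∈ T} → Fin n) Subtype.val).mulVec
      (fun j : {x // x ∈ T} => z j.val) = t • (fun j : {x // x ∈ T} => z j.val) := by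
  funext i
  have h1 : (Γ.mulVec z) i.val = t * z i.val := by rw [ht]; simp
  have h2 : ∑ j ∈ T, Γ i.val j * z j + ∑ j ∈ Tᶜ, Γ i.val j * z j = ∑ j, Γ i.val j * z j :=
    Finset.sum_add_sum_compl T _
  have h3 : ∑ j ∈ Tᶜ, Γ i.val j * z j = 0 :=
    Finset.sum_eq_zero fun j hj => by
      rw [hb i.val j i.2 (Finset.mem_compl.mp hj), zero_mul]
  have h4 : (Γ.mulVec z) i.val = ∑ j, Γ i.val j * z j := rfl
  have h5 : ((Γ.submatrix (Subtype.val : {x // x ∈ T} → Fin n) Subtype.val).mulVec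
      (fun j : {x // x ∈ T} => z j.val)) i = ∑ j : {x // x ∈ T}, Γ i.val j.val * z j.val := rfl
  have h6 : ∑ j : {x // x ∈ T}, Γ i.val j.val * z j.val = ∑ j ∈ T, Γ i.val j * z j :=
    Finset.sum_coe_sort T (fun j => Γ i.val j * z j)
  have : ((Γ.submatrix (Subtype.val : {x // x ∈ T} → Fin n) Subtype.val).mulVec
      (fun j : {x // x ∈ T} => z j.val)) i = t * z i.val := by
    rw [h5, h6]
    have := h2
    rw [h3, add_zero] at this
    rw [this, ← h4, h1]
  rw [this]
  simp

end PFaux2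

/-- Let `Γ, Δ` be commuting nonnegative `n × n` real matrices with `Γ + Δ`
irreducible. If `S` and its complement are nonempty and `Γ i j = 0` whenever exactly one
of `i, j` lies in `S`, then the two diagonal blocks `Γ[S]` and `Γ[Sᶜ]` have a common
dominant eigenvalue `lam ≥ 0`, each with a strictly positive eigenvector, and every real
eigenvalue `μ` of either block satisfies `|μ| ≤ lam`. -/
theorem diagonal_blocks_same_dominant_eigenvalue
    (n : ℕ) (hn : 1 ≤ n) (Γ Δ : Matrix (Fin n) (Fin n) ℝ)
    (hΓ0 : ∀ i j, 0 ≤ Γ i j) (hΔ0 : ∀ i j, 0 ≤ Δ i j)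
    (hcomm : Γ * Δ = Δ * Γ)
    (hirr : ∀ i j, ∃ m : ℕ, 1 ≤ m ∧ 0 < ((Γ + Δ) ^ m) i j)
    (S : Finset (Fin n)) (hS : S.Nonempty) (hSc : Sᶜ.Nonempty)
    (hblock : ∀ i j : Fin n, ((i ∈ S ∧ j ∉ S) ∨ (i ∉ S ∧ j ∈ S)) → Γ i j = 0) :
    ∃ (lam : ℝ) (v : {x // x ∈ S} → ℝ) (w : {x // x ∈ Sᶜ} → ℝ),
      0 ≤ lam ∧ (∀ i, 0 < v i) ∧ (∀ i, 0 < w i) ∧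
      (Γ.submatrix (Subtype.val : {x // x ∈ S} → Fin n) Subtype.val).mulVec v = lam • v ∧
      (Γ.submatrix (Subtype.val : {x // x ∈ Sᶜ} → Fin n) Subtype.val).mulVec w = lam • w ∧
      (∀ μ : ℝ, (∃ x : {x // x ∈ S} → ℝ, x ≠ 0 ∧
        (Γ.submatrix (Subtype.val : {x // x ∈ S} → Fin n) Subtype.val).mulVec x = μ • x) →
        |μ| ≤ lam) ∧
      (∀ μ : ℝ, (∃ x : {x // x ∈ Sᶜ} → ℝ, x ≠ 0 ∧
        (Γ.submatrix (Subtype.val : {x // x ∈ Sᶜ} → Fin n) Subtype.val).mulVec x = μ • x) →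
        |μ| ≤ lam) := by
  classical
  have hι : Nonempty (Fin n) := ⟨⟨0, hn⟩⟩
  set A : Matrix (Fin n) (Fin n) ℝ := Γ + Δ with hA
  have hA0 : ∀ i j, 0 ≤ A i j := fun i j => by
    rw [hA, Matrix.add_apply]; exact add_nonneg (hΓ0 i j) (hΔ0 i j)
  choose m hm1 hm2 using hirr
  set N : ℕ := Finset.univ.sup fun i => Finset.univ.sup (m i) with hN
  have hmN : ∀ i j, m i j ≤ N := fun i j =>
    le_trans (Finset.le_sup (Finset.mem_univ j)) (Finset.le_sup (f := fun i => Finset.univ.sup (m i)) (Finset.mem_univ i))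
  set B : Matrix (Fin n) (Fin n) ℝ := (1 + A) ^ N with hB
  have hBpos : ∀ i j, 0 < B i j := fun i j =>
    PFaux.one_add_pow_pos A hA0 N i j (m i j) (hmN i j) (hm2 i j)
  obtain ⟨lam0, z, hlam0, hz, hez⟩ := PFaux.perron_positive B hBpos
  -- Γ commutes with B
  have hΓA : Γ * A = A * Γ := by
    rw [hA, mul_add, add_mul, hcomm]
  have hΓ1A : Commute Γ (1 + A) := by
    unfold Commute SemiconjBy
    rw [mul_add, add_mul, mul_one, one_mul, hΓA]
  have hcommB : Γ * B = B * Γ := (hΓ1A.pow_right N).eq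
  -- Γ z is in the lam0-eigenspace of B
  have hΓz : B.mulVec (Γ.mulVec z) = lam0 • (Γ.mulVec z) := by
    rw [Matrix.mulVec_mulVec, ← hcommB, ← Matrix.mulVec_mulVec, hez, Matrix.mulVec_smul]
  obtain ⟨t, ht⟩ := PFaux.eig_unique B hBpos lam0 z hz hez (Γ.mulVec z) hΓz
  have ht0 : 0 ≤ t := by
    obtain ⟨i⟩ := hι
    have h1 : 0 ≤ (Γ.mulVec z) i :=
      PFaux.mulVec_entry_nonneg Γ hΓ0 z (fun k => (hz k).le) i
    rw [ht] at h1
    simp only [Pi.smul_apply, smul_eq_mul] at h1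
    by_contra h
    push_neg at h
    nlinarith [hz i]
  -- restrictions
  have hbS : ∀ i j, i ∈ S → j ∉ S → Γ i j = 0 := fun i j hi hj => hblock i j (Or.inl ⟨hi, hj⟩)
  have hbSc : ∀ i j, i ∈ Sᶜ → j ∉ Sᶜ → Γ i j = 0 := fun i j hi hj => by
    rw [Finset.mem_compl] at hi
    rw [Finset.mem_compl, not_not] at hj
    exact hblock i j (Or.inr ⟨hi, hj⟩)
  have hvS := PFaux2.restrict_block Γ S z t ht hbS
  have hvSc := PFaux2.restrict_block Γ Sᶜ z t ht hbSc
  have hneS : Nonempty {x // x ∈ S} := ⟨⟨hS.choose, hS.choose_spec⟩⟩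
  have hneSc : Nonempty {x // x ∈ Sᶜ} := ⟨⟨hSc.choose, hSc.choose_spec⟩⟩
  refine ⟨t, fun j => z j.val, fun j => z j.val, ht0, fun i => hz i.val, fun i => hz i.val,
    hvS, hvSc, ?_, ?_⟩
  · rintro μ ⟨x, hx0, hx⟩
    exact PFaux.dominance (Γ.submatrix (Subtype.val : {x // x ∈ S} → Fin n) Subtype.val)
      (fun i j => hΓ0 i.val j.val) (fun j => z j.val) (fun i => hz i.val) t hvS μ x hx0 hx
  · rintro μ ⟨x, hx0, hx⟩
    exact PFaux.dominance (Γ.submatrix (Subtype.val : {x // x ∈ Sᶜ} → Fin n) Subtype.val)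
      (fun i j => hΓ0 i.val j.val) (fun j => z j.val) (fun i => hz i.val) t hvSc μ x hx0 hx
end

section
/- Let Γ, Δ be n×n real matrices with nonnegative entries and let ε : {1,…,n} → {0,1} be a coloring with Γ_{ij} = Δ_{ij} = 0 whenever ε_i = ε_j. Let ∼ be an equivalence relation on {1,…,n} along which both Γ and Δ are foldable and such that ε is constant on each equivalence class; let Γ′, Δ′ be the folded matrices and ε′ the induced coloring on equivalence classes. Let N ≥ 1 be an integer. If every tropical T-system for (Γ, Δ, ε) with any initial labeling is periodic with period N, then every tropical T-system for (Γ′, Δ′, ε′) with any initial labeling is periodic with period N. -/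
/-- A tropical T-system for bipartite data `(Γ, Δ, ε)` with initial labeling `l`:
a family `u : V → ℤ → ℝ` with `u k 0 = l k` for white `k` (`ε k = 0`),
`u k 1 = l k` for black `k` (`ε k = 1`), and the tropical exchange relation
at every `k` and every time `t` with `t + ε k` odd. -/
def IsTropicalTSystem {V : Type*} [Fintype V] (Γ Δ : Matrix V V ℝ) (ε : V → Fin 2)
    (l : V → ℝ) (u : V → ℤ → ℝ) : Prop :=
  (∀ k, ε k = 0 → u k 0 = l k) ∧
  (∀ k, ε k = 1 → u k 1 = l k) ∧
  (∀ (k : V) (t : ℤ), Odd (t + ((ε k : ℕ) : ℤ)) →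
    u k (t + 1) + u k (t - 1) = max (∑ i, Γ i k * u i t) (∑ j, Δ j k * u j t))

/-- A tropical T-system is periodic with period `N` if `u k (t + 2N) = u k t`
for all `k` and all `t` with `t + ε k` even. -/
def IsPeriodicTropicalTSystem {V : Type*} (ε : V → Fin 2) (N : ℕ) (u : V → ℤ → ℝ) : Prop :=
  ∀ (k : V) (t : ℤ), Even (t + ((ε k : ℕ) : ℤ)) → u k (t + 2 * N) = u k t

/-- Periodicity of tropical T-systems is inherited under folding.
The equivalence relation on `{1,…,n}` is encoded by a surjection `π : Fin n → Fin m`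
onto the set of equivalence classes (the classes being its fibers); `Γ', Δ'` are the
folded matrices and `ε'` the induced coloring. If every tropical T-system for
`(Γ, Δ, ε)` with any initial labeling is periodic with period `N`, then the same holds
for `(Γ', Δ', ε')`. -/
theorem folding_preserves_tropical_periodicity
    (n m : ℕ) (π : Fin n → Fin m) (hπ : Function.Surjective π)
    (Γ Δ : Matrix (Fin n) (Fin n) ℝ)
    (hΓ0 : ∀ i j, 0 ≤ Γ i j) (hΔ0 : ∀ i j, 0 ≤ Δ i j)
    (ε : Fin n → Fin 2)
    (hbip : ∀ i j, ε i = ε j → Γ i j = 0 ∧ Δ i j = 0)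
    (hεconst : ∀ i j, π i = π j → ε i = ε j)
    (Γ' Δ' : Matrix (Fin m) (Fin m) ℝ)
    (hΓ' : ∀ (I : Fin m) (j : Fin n),
      Γ' I (π j) = ∑ i ∈ Finset.univ.filter (fun i => π i = I), Γ i j)
    (hΔ' : ∀ (I : Fin m) (j : Fin n),
      Δ' I (π j) = ∑ i ∈ Finset.univ.filter (fun i => π i = I), Δ i j)
    (ε' : Fin m → Fin 2) (hε' : ∀ i, ε' (π i) = ε i)
    (N : ℕ) (hN : 1 ≤ N)
    (hper : ∀ (l : Fin n → ℝ) (u : Fin n → ℤ → ℝ),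
      IsTropicalTSystem Γ Δ ε l u → IsPeriodicTropicalTSystem ε N u) :
    ∀ (l' : Fin m → ℝ) (u' : Fin m → ℤ → ℝ),
      IsTropicalTSystem Γ' Δ' ε' l' u' → IsPeriodicTropicalTSystem ε' N u' := by
  
  intro l' u' hT k t ht
  obtain ⟨k0, rfl⟩ := hπ k
  set u : Fin n → ℤ → ℝ := fun i s => u' (π i) s with hu
  have hsumΓ : ∀ (j : Fin n) (s : ℤ), ∑ i, Γ i j * u i s = ∑ I, Γ' I (π j) * u' I s := by
    intro j s
    rw [← Finset.sum_fiberwise_of_maps_to (g := π) (fun i _ => Finset.mem_univ _)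
      (fun i => Γ i j * u i s)]
    refine Finset.sum_congr rfl fun I _ => ?_
    rw [hΓ' I j, Finset.sum_mul]
    refine Finset.sum_congr rfl fun i hi => ?_
    simp only [Finset.mem_filter] at hi
    rw [hu]; simp [hi.2]
  have hsumΔ : ∀ (j : Fin n) (s : ℤ), ∑ i, Δ i j * u i s = ∑ I, Δ' I (π j) * u' I s := by
    intro j s
    rw [← Finset.sum_fiberwise_of_maps_to (g := π) (fun i _ => Finset.mem_univ _)
      (fun i => Δ i j * u i s)]
    refine Finset.sum_congr rfl fun I _ => ?_
    rw [hΔ' I j, Finset.sum_mul]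
    refine Finset.sum_congr rfl fun i hi => ?_
    simp only [Finset.mem_filter] at hi
    rw [hu]; simp [hi.2]
  obtain ⟨h0, h1, hrel⟩ := hT
  have hTS : IsTropicalTSystem Γ Δ ε (fun i => l' (π i)) u := by
    refine ⟨fun i hi => h0 (π i) (by rw [hε', hi]), fun i hi => h1 (π i) (by rw [hε', hi]),
      fun j s hs => ?_⟩
    have := hrel (π j) s (by rw [hε' j]; exact hs)
    rw [hu]
    simp only
    rw [this, hsumΓ j s, hsumΔ j s]
  exact hper _ u hTS k0 t (by rw [hε' k0] at ht; exact ht)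
end

section
/- Let Γ, Δ be n×n real matrices with nonnegative entries, let ε : {1,…,n} → {0,1} be a coloring with Γ_{ij} = Δ_{ij} = 0 whenever ε_i = ε_j, and suppose there exists c ∈ ℝⁿ with all entries positive such that c_i Γ_{ij} = c_j Γ_{ji} and c_i Δ_{ij} = c_j Δ_{ji} for all i, j. Let N ≥ 1 be an integer. Then every tropical T-system for (Γ, Δ, ε) with any initial labeling is periodic with period N if and only if every tropical T-system for (Γᵀ, Δᵀ, ε) with any initial labeling is periodic with period N. -/
lemma scale_tsystem {n : ℕ} (Γ Δ : Matrix (Fin n) (Fin n) ℝ) (ε : Fin n → Fin 2)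
    (c : Fin n → ℝ) (hc : ∀ i, 0 < c i)
    (hcΓ : ∀ i j, c i * Γ i j = c j * Γ j i)
    (hcΔ : ∀ i j, c i * Δ i j = c j * Δ j i)
    (l : Fin n → ℝ) (u : Fin n → ℤ → ℝ)
    (h : IsTropicalTSystem Γ.transpose Δ.transpose ε l u) :
    IsTropicalTSystem Γ Δ ε (fun k => c k * l k) (fun k t => c k * u k t) := by
  obtain ⟨h0, h1, hrec⟩ := h
  refine ⟨fun k hk => by dsimp; rw [h0 k hk], fun k hk => by dsimp; rw [h1 k hk],
    fun k t ht => ?_⟩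
  have := hrec k t ht
  have hsum : ∀ (M : Matrix (Fin n) (Fin n) ℝ), (∀ i j, c i * M i j = c j * M j i) →
      (∑ i, M i k * (c i * u i t)) = c k * ∑ i, M.transpose i k * u i t := by
    intro M hM
    rw [Finset.mul_sum]
    refine Finset.sum_congr rfl fun i _ => ?_
    have := hM i k
    simp only [Matrix.transpose_apply]
    linear_combination u i t * hM i k
  show c k * u k (t + 1) + c k * u k (t - 1) = _
  rw [hsum Γ hcΓ, hsum Δ hcΔ, ← mul_add, this, mul_max_of_nonneg _ _ (le_of_lt (hc k))]

/-- For skew-symmetrizable bipartite data (symmetrizer `c`), all tropical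
T-systems for `(Γ, Δ, ε)` are periodic with period `N` iff all tropical T-systems for
the transposed data `(Γᵀ, Δᵀ, ε)` are periodic with period `N`. -/
theorem transpose_tropical_periodicity_iff
    (n : ℕ) (Γ Δ : Matrix (Fin n) (Fin n) ℝ)
    (hΓ0 : ∀ i j, 0 ≤ Γ i j) (hΔ0 : ∀ i j, 0 ≤ Δ i j)
    (ε : Fin n → Fin 2)
    (hbip : ∀ i j, ε i = ε j → Γ i j = 0 ∧ Δ i j = 0)
    (c : Fin n → ℝ) (hc : ∀ i, 0 < c i)
    (hcΓ : ∀ i j, c i * Γ i j = c j * Γ j i)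
    (hcΔ : ∀ i j, c i * Δ i j = c j * Δ j i)
    (N : ℕ) (hN : 1 ≤ N) :
    (∀ (l : Fin n → ℝ) (u : Fin n → ℤ → ℝ),
      IsTropicalTSystem Γ Δ ε l u → IsPeriodicTropicalTSystem ε N u) ↔
    (∀ (l : Fin n → ℝ) (u : Fin n → ℤ → ℝ),
      IsTropicalTSystem Γ.transpose Δ.transpose ε l u → IsPeriodicTropicalTSystem ε N u) := by

  constructor
  · intro h l u hu k t ht
    have hv := scale_tsystem Γ Δ ε c hc hcΓ hcΔ l u hu
    have := h _ _ hv k t ht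
    exact mul_left_cancel₀ (ne_of_gt (hc k)) this
  · intro h l u hu k t ht
    have hcΓ' : ∀ i j, (c i)⁻¹ * Γ.transpose i j = (c j)⁻¹ * Γ.transpose j i := by
      intro i j
      have := hcΓ j i
      have hi := (hc i).ne'
      have hj := (hc j).ne'
      simp only [Matrix.transpose_apply]
      field_simp
      nlinarith
    have hcΔ' : ∀ i j, (c i)⁻¹ * Δ.transpose i j = (c j)⁻¹ * Δ.transpose j i := by
      intro i j
      have := hcΔ j i
      have hi := (hc i).ne'
      have hj := (hc j).ne'
      simp only [Matrix.transpose_apply]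
      field_simp
      nlinarith
    have hu' : IsTropicalTSystem Γ.transpose.transpose Δ.transpose.transpose ε l u := by
      rwa [Matrix.transpose_transpose, Matrix.transpose_transpose]
    have hv := scale_tsystem Γ.transpose Δ.transpose ε (fun i => (c i)⁻¹)
      (fun i => inv_pos.mpr (hc i)) hcΓ' hcΔ' l u hu'
    have := h _ _ hv k t ht
    exact mul_left_cancel₀ (inv_ne_zero (ne_of_gt (hc k))) this
end

section
/- Let Γ, Δ be n×n matrices with nonnegative integer entries. Then (Γ, Δ) admits a fixed point labeling if and only if (Γ, Δ) admits a strictly subadditive labeling. -/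
open Filter


/-- For `n × n` matrices `Γ, Δ` with nonnegative integer entries,
`(Γ, Δ)` admits a fixed point labeling (a vector `ρ` with all entries `> 1` such that
`ρ k ^ 2 = ∏ i, ρ i ^ Γ i k + ∏ j, ρ j ^ Δ j k` for all `k`) if and only if it admits
a strictly subadditive labeling (a positive vector `ν` with
`2 ν k > ∑ i, Γ i k * ν i` and `2 ν k > ∑ j, Δ j k * ν j` for all `k`). -/
theorem fixed_point_labeling_iff_strictly_subadditive_labeling
    (n : ℕ) (Γ Δ : Matrix (Fin n) (Fin n) ℕ) :
    (∃ ρ : Fin n → ℝ, (∀ k, 1 < ρ k) ∧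
      ∀ k, ρ k ^ 2 = (∏ i, ρ i ^ (Γ i k)) + (∏ j, ρ j ^ (Δ j k))) ↔
    (∃ ν : Fin n → ℝ, (∀ k, 0 < ν k) ∧
      ∀ k, (∑ i, (Γ i k : ℝ) * ν i < 2 * ν k) ∧ (∑ j, (Δ j k : ℝ) * ν j < 2 * ν k)) := by
  have sqrt2_one : (1:ℝ) < Real.sqrt 2 := by
    nlinarith [Real.sq_sqrt (by norm_num : (0:ℝ) ≤ 2), Real.sqrt_nonneg 2]
  constructor
  · rintro ⟨ρ, hρ1, hρeq⟩
    have hρpos : ∀ i, 0 < ρ i := fun i => lt_trans one_pos (hρ1 i)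
    refine ⟨fun k => Real.log (ρ k), fun k => Real.log_pos (hρ1 k), fun k => ?_⟩
    have hP : 0 < ∏ i, ρ i ^ Γ i k := Finset.prod_pos fun i _ => pow_pos (hρpos i) _
    have hQ : 0 < ∏ j, ρ j ^ Δ j k := Finset.prod_pos fun j _ => pow_pos (hρpos j) _
    have key : ∀ (M : Matrix (Fin n) (Fin n) ℕ), (∏ i, ρ i ^ M i k) < ρ k ^ 2 →
        0 < ∏ i, ρ i ^ M i k →
        ∑ i, (M i k : ℝ) * Real.log (ρ i) < 2 * Real.log (ρ k) := by
      intro M hlt hpos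
      have h := Real.log_lt_log hpos hlt
      rw [Real.log_prod (fun i _ => (pow_pos (hρpos i) _).ne')] at h
      simp only [Real.log_pow] at h
      push_cast at h ⊢
      convert h using 2
    constructor
    · exact key Γ (by linarith [hρeq k]) hP
    · exact key Δ (by linarith [hρeq k]) hQ
  · rintro ⟨ν, hν, hsub⟩
    have hgapΓ : ∀ k, 0 < 2 * ν k - ∑ i, (Γ i k : ℝ) * ν i := fun k => by linarith [(hsub k).1]
    have hgapΔ : ∀ k, 0 < 2 * ν k - ∑ j, (Δ j k : ℝ) * ν j := fun k => by linarith [(hsub k).2]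
    obtain ⟨t, ht⟩ : ∃ t : ℝ,
        ∀ k, Real.log 2 ≤ t * ν k ∧
          Real.log 2 ≤ t * (2 * ν k - ∑ i, (Γ i k : ℝ) * ν i) ∧
          Real.log 2 ≤ t * (2 * ν k - ∑ j, (Δ j k : ℝ) * ν j) := by
      have key : ∀ c : ℝ, 0 < c → ∀ᶠ t : ℝ in atTop, Real.log 2 ≤ t * c := by
        intro c hc
        filter_upwards [eventually_ge_atTop (Real.log 2 / c)] with t htc
        exact (div_le_iff₀ hc).mp htc
      exact (eventually_all.mpr fun k =>
        ((key _ (hν k)).and ((key _ (hgapΓ k)).and (key _ (hgapΔ k))))).exists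
    -- the map G and basic facts
    set u : Fin n → ℝ := fun k => Real.exp (t * ν k) with hu
    set G : (Fin n → ℝ) → (Fin n → ℝ) :=
      fun x k => Real.sqrt ((∏ i, x i ^ Γ i k) + ∏ j, x j ^ Δ j k) with hG
    have hGmono : ∀ x y : Fin n → ℝ, (∀ i, 0 ≤ x i) → x ≤ y → G x ≤ G y := by
      intro x y hx hxy k
      apply Real.sqrt_le_sqrt
      gcongr <;> first
        | exact hx _
        | exact hxy _
        | exact fun i _ => pow_nonneg (hx i) _
    have hprod_one : ∀ (x : Fin n → ℝ), (∀ i, (1:ℝ) ≤ x i) → ∀ (M : Matrix (Fin n) (Fin n) ℕ)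
        (k : Fin n), (1:ℝ) ≤ ∏ i, x i ^ M i k := by
      intro x hx M k
      calc (1:ℝ) = ∏ _i : Fin n, 1 := by simp
        _ ≤ ∏ i, x i ^ M i k := Finset.prod_le_prod (by simp) fun i _ => one_le_pow₀ (hx i)
    have hGlow : ∀ (x : Fin n → ℝ), (∀ i, (1:ℝ) ≤ x i) → ∀ k, Real.sqrt 2 ≤ G x k := by
      intro x hx k
      apply Real.sqrt_le_sqrt
      linarith [hprod_one x hx Γ k, hprod_one x hx Δ k]
    have hGu : G u ≤ u := by
      intro k
      have hexp : ∀ (M : Matrix (Fin n) (Fin n) ℕ),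
          (∏ i, u i ^ M i k) = Real.exp (t * ∑ i, (M i k : ℝ) * ν i) := by
        intro M
        simp only [hu, ← Real.exp_nat_mul, ← Real.exp_sum]
        congr 1
        rw [Finset.mul_sum]
        exact Finset.sum_congr rfl fun i _ => by ring
      have key : ∀ a : ℝ, Real.log 2 ≤ t * (2 * ν k - a) →
          Real.exp (t * a) ≤ Real.exp (t * ν k + t * ν k) / 2 := by
        intro a hA
        have h1 : t * a ≤ (t * ν k + t * ν k) - Real.log 2 := by nlinarith
        calc Real.exp (t * a) ≤ Real.exp ((t * ν k + t * ν k) - Real.log 2) :=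
              Real.exp_le_exp.mpr h1
          _ = Real.exp (t * ν k + t * ν k) / 2 := by
              rw [Real.exp_sub, Real.exp_log two_pos]
      have hle : (∏ i, u i ^ Γ i k) + (∏ j, u j ^ Δ j k) ≤ u k ^ 2 := by
        rw [hexp Γ, hexp Δ]
        have h2 : u k ^ 2 = Real.exp (t * ν k + t * ν k) := by
          rw [hu]; rw [Real.exp_add]; ring
        rw [h2]
        linarith [key _ (ht k).2.1, key _ (ht k).2.2]
      calc G u k ≤ Real.sqrt (u k ^ 2) := Real.sqrt_le_sqrt hle
        _ = u k := Real.sqrt_sq (Real.exp_nonneg _)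
    set low : Fin n → ℝ := fun _ => Real.sqrt 2 with hlow
    have hlow_one : ∀ i, (1:ℝ) ≤ low i := fun _ => le_of_lt sqrt2_one
    have hlow_u : low ≤ u := by
      intro k
      have h2 : (2:ℝ) ≤ Real.exp (t * ν k) := by
        calc (2:ℝ) = Real.exp (Real.log 2) := (Real.exp_log two_pos).symm
          _ ≤ _ := Real.exp_le_exp.mpr (ht k).1
      have hs2 : Real.sqrt 2 ≤ 2 := by
        nlinarith [Real.sq_sqrt (by norm_num : (0:ℝ) ≤ 2), Real.sqrt_nonneg 2]
      calc low k = Real.sqrt 2 := rfl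
        _ ≤ 2 := hs2
        _ ≤ u k := h2
    set A : Set (Fin n → ℝ) := {x | low ≤ x ∧ x ≤ u ∧ x ≤ G x} with hA
    have hlowA : low ∈ A := ⟨le_refl _, hlow_u, fun k => hGlow low hlow_one k⟩
    have hNe : A.Nonempty := ⟨low, hlowA⟩
    have hBdd : BddAbove A := ⟨u, fun x hx => hx.2.1⟩
    set s : Fin n → ℝ := sSup A with hs
    have hls : low ≤ s := le_csSup hBdd hlowA
    have hs_one : ∀ i, (1:ℝ) ≤ s i := fun i => le_trans (hlow_one i) (hls i)
    have hs_nonneg : ∀ i, (0:ℝ) ≤ s i := fun i => le_trans zero_le_one (hs_one i)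
    have hsu : s ≤ u := csSup_le hNe fun x hx => hx.2.1
    have hsGs : s ≤ G s := by
      apply csSup_le hNe
      intro x hx
      have hx_nonneg : ∀ i, (0:ℝ) ≤ x i := fun i =>
        le_trans (le_trans zero_le_one (hlow_one i)) (hx.1 i)
      exact le_trans hx.2.2 (hGmono x s hx_nonneg (le_csSup hBdd hx))
    have hGsA : G s ∈ A :=
      ⟨fun k => hGlow s hs_one k,
       le_trans (hGmono s u hs_nonneg hsu) hGu,
       hGmono s (G s) hs_nonneg hsGs⟩
    have hfix : G s = s := le_antisymm (le_csSup hBdd hGsA) hsGs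
    refine ⟨s, fun k => lt_of_lt_of_le sqrt2_one (hls k), fun k => ?_⟩
    have hnn : 0 ≤ (∏ i, s i ^ Γ i k) + ∏ j, s j ^ Δ j k := by
      have := hprod_one s hs_one Γ k
      have := hprod_one s hs_one Δ k
      linarith
    conv_lhs => rw [← hfix]
    exact Real.sq_sqrt hnn
end

section
/- Let Γ, Δ be n×n matrices with nonnegative integer entries and define the map Z on vectors ρ ∈ ℝⁿ with entries ≥ 1 by (Zρ)_k = sqrt( Π_i ρ_i^{Γ_{ik}} + Π_j ρ_j^{Δ_{jk}} ). If there exists ρ⁰ ∈ ℝⁿ with all entries strictly greater than 1 such that (Zρ⁰)_k < ρ⁰_k for every k, then there exists ρ ∈ ℝⁿ with all entries strictly greater than 1 such that Zρ = ρ, i.e., (Γ, Δ) admits a fixed point labeling. -/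
/-- Define `(Zρ) k = √(∏ i, ρ i ^ Γ i k + ∏ j, ρ j ^ Δ j k)`. If there is a
vector `ρ⁰` with all entries `> 1` such that `(Zρ⁰) k < ρ⁰ k` for all `k`, then `Z` has a
fixed point with all entries `> 1`, i.e. `(Γ, Δ)` admits a fixed point labeling. -/
theorem fixed_point_labeling_of_Z_decreasing_point
    (n : ℕ) (Γ Δ : Matrix (Fin n) (Fin n) ℕ)
    (ρ0 : Fin n → ℝ) (hρ0 : ∀ k, 1 < ρ0 k)
    (hZ : ∀ k, Real.sqrt ((∏ i, ρ0 i ^ (Γ i k)) + (∏ j, ρ0 j ^ (Δ j k))) < ρ0 k) :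
    ∃ ρ : Fin n → ℝ, (∀ k, 1 < ρ k) ∧
      ∀ k, Real.sqrt ((∏ i, ρ i ^ (Γ i k)) + (∏ j, ρ j ^ (Δ j k))) = ρ k := by
  classical
  set lo : Fin n → ℝ := fun _ => Real.sqrt 2 with hlo_def
  have h1lt2 : (1:ℝ) < Real.sqrt 2 := by
    rw [show (1:ℝ) = Real.sqrt 1 by simp]
    exact Real.sqrt_lt_sqrt (by norm_num) (by norm_num)
  have hprod1 : ∀ (ρ : Fin n → ℝ), (∀ i, 1 ≤ ρ i) → ∀ (M : Matrix (Fin n) (Fin n) ℕ) (k : Fin n),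
      (1:ℝ) ≤ ∏ i, ρ i ^ M i k := by
    intro ρ hρ M k
    calc (1:ℝ) = ∏ _i : Fin n, (1:ℝ) := by simp
    _ ≤ ∏ i, ρ i ^ M i k :=
      Finset.prod_le_prod (fun i _ => zero_le_one) (fun i _ => one_le_pow₀ (hρ i))
  have hZlo : ∀ (ρ : Fin n → ℝ), (∀ i, 1 ≤ ρ i) → ∀ k,
      Real.sqrt 2 ≤ Real.sqrt ((∏ i, ρ i ^ (Γ i k)) + (∏ j, ρ j ^ (Δ j k))) := by
    intro ρ hρ k
    apply Real.sqrt_le_sqrt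
    linarith [hprod1 ρ hρ Γ k, hprod1 ρ hρ Δ k]
  have hmono : ∀ (ρ σ : Fin n → ℝ), (∀ i, 0 ≤ ρ i) → ρ ≤ σ → ∀ k,
      Real.sqrt ((∏ i, ρ i ^ (Γ i k)) + (∏ j, ρ j ^ (Δ j k)))
        ≤ Real.sqrt ((∏ i, σ i ^ (Γ i k)) + (∏ j, σ j ^ (Δ j k))) := by
    intro ρ σ hρ hle k
    apply Real.sqrt_le_sqrt
    have h1 : (∏ i, ρ i ^ (Γ i k)) ≤ ∏ i, σ i ^ (Γ i k) :=
      Finset.prod_le_prod (fun i _ => pow_nonneg (hρ i) _)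
        (fun i _ => pow_le_pow_left₀ (hρ i) (hle i) _)
    have h2 : (∏ j, ρ j ^ (Δ j k)) ≤ ∏ j, σ j ^ (Δ j k) :=
      Finset.prod_le_prod (fun i _ => pow_nonneg (hρ i) _)
        (fun i _ => pow_le_pow_left₀ (hρ i) (hle i) _)
    linarith
  have hlo_lt : ∀ k, Real.sqrt 2 < ρ0 k := fun k =>
    lt_of_le_of_lt (hZlo ρ0 (fun i => (hρ0 i).le) k) (hZ k)
  have hlo_le : lo ≤ ρ0 := fun k => (hlo_lt k).le
  haveI : Fact (lo ≤ ρ0) := ⟨hlo_le⟩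
  have hmem : ∀ ρ : Fin n → ℝ, ρ ∈ Set.Icc lo ρ0 →
      (fun k => Real.sqrt ((∏ i, ρ i ^ (Γ i k)) + (∏ j, ρ j ^ (Δ j k)))) ∈ Set.Icc lo ρ0 := by
    intro ρ ⟨hρlo, hρhi⟩
    have hρ1 : ∀ i, 1 ≤ ρ i := fun i => le_trans h1lt2.le (hρlo i)
    constructor
    · intro k
      exact hZlo ρ hρ1 k
    · intro k
      exact le_trans (hmono ρ ρ0 (fun i => le_trans zero_le_one (hρ1 i)) hρhi k) (hZ k).le
  let F : Set.Icc lo ρ0 →o Set.Icc lo ρ0 :=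
    { toFun := fun ρ =>
        ⟨fun k => Real.sqrt ((∏ i, (ρ : Fin n → ℝ) i ^ (Γ i k)) + (∏ j, (ρ : Fin n → ℝ) j ^ (Δ j k))),
          hmem ρ ρ.2⟩
      monotone' := by
        intro ρ σ hle
        intro k
        exact hmono ρ σ (fun i => le_trans (le_trans zero_le_one h1lt2.le) (ρ.2.1 i))
          (Subtype.coe_le_coe.mpr hle) k }
  obtain ⟨ρf, hfix⟩ : ∃ ρf : Set.Icc lo ρ0, F ρf = ρf := ⟨_, F.map_lfp⟩
  refine ⟨(ρf : Fin n → ℝ), fun k => lt_of_lt_of_le h1lt2 (ρf.2.1 k), fun k => ?_⟩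
  have := congrFun (congrArg Subtype.val hfix) k
  exact this
end

section
/- Let Γ, Δ be n×n matrices with nonnegative integer entries having disjoint supports (Γ_{ij} > 0 implies Δ_{ij} = 0), let ε : {1,…,n} → {0,1} be a coloring with Γ_{ij} = Δ_{ij} = 0 whenever ε_i = ε_j, assume ΓΔ = ΔΓ, and assume there exists c ∈ ℝⁿ with positive entries satisfying c_i Γ_{ij} = c_j Γ_{ji} and c_i Δ_{ij} = c_j Δ_{ji} for all i, j. Suppose there is an integer N ≥ 1 such that for every λ ∈ ℝⁿ there exists a tropical T-system for (Γ, Δ, ε) with initial labeling λ, and every tropical T-system for (Γ, Δ, ε) with any initial labeling is periodic with period N. Then (Γ, Δ) admits a strictly subadditive labeling. -/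
namespace TropicalAux

open Matrix Finset

variable {n : ℕ}

lemma dot_self_nonneg (x : Fin n → ℝ) : 0 ≤ x ⬝ᵥ x :=
  Finset.sum_nonneg fun i _ => mul_self_nonneg (x i)

lemma eq_zero_of_dot_self (x : Fin n → ℝ) (h : x ⬝ᵥ x = 0) : x = 0 := by
  funext i
  have h1 : ∀ i ∈ Finset.univ (α := Fin n), 0 ≤ x i * x i := fun i _ => mul_self_nonneg _
  exact mul_self_eq_zero.mp ((Finset.sum_eq_zero_iff_of_nonneg h1).mp h i (Finset.mem_univ i))

lemma dot_self_pos (x : Fin n → ℝ) (hx : x ≠ 0) : 0 < x ⬝ᵥ x := by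
  rcases lt_or_eq_of_le (dot_self_nonneg x) with h | h
  · exact h
  · exact absurd (eq_zero_of_dot_self x h.symm) hx

lemma mulVec_apply' (F : Matrix (Fin n) (Fin n) ℝ) (x : Fin n → ℝ) (i : Fin n) :
    (F.mulVec x) i = ∑ j, F i j * x j := by
  simp [Matrix.mulVec, dotProduct]

lemma injphi (F : Matrix (Fin n) (Fin n) ℝ)
    (hpd : ∀ v : Fin n → ℝ, v ≠ 0 → v ⬝ᵥ F.mulVec v < 2 * (v ⬝ᵥ v))
    (y z : Fin n → ℝ) (h : (2:ℝ) • y - F.mulVec y = (2:ℝ) • z - F.mulVec z) : y = z := by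
  by_contra hne
  set v := y - z with hv
  have hvne : v ≠ 0 := sub_ne_zero.mpr hne
  have h2 : (2:ℝ) • v - F.mulVec v = 0 := by
    rw [hv, smul_sub, Matrix.mulVec_sub]
    linear_combination (norm := abel) h
  have hFv : F.mulVec v = (2:ℝ) • v := by linear_combination (norm := abel) -h2
  have := hpd v hvne
  rw [hFv, dotProduct_smul] at this
  simp only [smul_eq_mul] at this
  exact lt_irrefl _ this

lemma solve (F : Matrix (Fin n) (Fin n) ℝ) (hnn : ∀ i j, 0 ≤ F i j)
    (hpd : ∀ v : Fin n → ℝ, v ≠ 0 → v ⬝ᵥ F.mulVec v < 2 * (v ⬝ᵥ v))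
    (c : Fin n → ℝ) (hc : ∀ i, 0 ≤ c i) :
    ∃ y : Fin n → ℝ, ((2:ℝ) • y - F.mulVec y = c) ∧ (∀ i, 0 ≤ y i) ∧
      (∀ i, c i ≤ 2 * y i) := by
  classical
  set T : (Fin n → ℝ) →ₗ[ℝ] (Fin n → ℝ) := (2:ℝ) • LinearMap.id - F.mulVecLin with hT
  have hTapp : ∀ x, T x = (2:ℝ) • x - F.mulVec x := by
    intro x; simp [hT]
  have hinj : Function.Injective T := by
    intro x y hxy
    apply injphi F hpd
    rw [← hTapp, ← hTapp, hxy]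
  have hsurj : Function.Surjective T := LinearMap.injective_iff_surjective.mp hinj
  obtain ⟨y, hy⟩ := hsurj c
  rw [hTapp] at hy
  have hynn : ∀ i, 0 ≤ y i := by
    by_contra hng
    push_neg at hng
    set m : Fin n → ℝ := fun i => max (-y i) 0 with hm
    set p : Fin n → ℝ := fun i => max (y i) 0 with hp
    have hm0 : ∀ i, 0 ≤ m i := fun i => le_max_right _ _
    have hp0 : ∀ i, 0 ≤ p i := fun i => le_max_right _ _
    have hmne : m ≠ 0 := by
      obtain ⟨i, hi⟩ := hng
      intro h0
      have h1 : m i = 0 := congrFun h0 i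
      have h2 : -y i ≤ 0 := by
        by_contra h3
        push_neg at h3
        have : m i = -y i := max_eq_left h3.le
        linarith [h1 ▸ this]
      linarith
    have hymp : y = p - m := by
      funext i; simp only [hp, hm, Pi.sub_apply]
      rcases le_total (y i) 0 with h | h
      · rw [max_eq_right h, max_eq_left (by linarith)]; ring
      · rw [max_eq_left h, max_eq_right (by linarith)]; ring
    have hmp : m ⬝ᵥ p = 0 := by
      apply Finset.sum_eq_zero
      intro i _
      rcases le_total (y i) 0 with h | h
      · simp [hm, hp, max_eq_right h]
      · simp [hm, hp, max_eq_right (neg_nonpos_of_nonneg h)]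
    have hmFp : 0 ≤ m ⬝ᵥ F.mulVec p := by
      apply Finset.sum_nonneg
      intro i _
      apply mul_nonneg (hm0 i)
      rw [mulVec_apply']
      exact Finset.sum_nonneg fun j _ => mul_nonneg (hnn i j) (hp0 j)
    have hQ : m ⬝ᵥ F.mulVec m < 2 * (m ⬝ᵥ m) := hpd m hmne
    have hmc : 0 ≤ m ⬝ᵥ c := Finset.sum_nonneg fun i _ => mul_nonneg (hm0 i) (hc i)
    have hexpand : m ⬝ᵥ c = 2 * (m ⬝ᵥ p) - m ⬝ᵥ F.mulVec p - (2 * (m ⬝ᵥ m) - m ⬝ᵥ F.mulVec m) := by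
      rw [← hy, hymp, smul_sub, Matrix.mulVec_sub]
      rw [show ((2:ℝ) • p - (2:ℝ) • m - (F.mulVec p - F.mulVec m))
          = ((2:ℝ) • p - (2:ℝ) • m) - (F.mulVec p - F.mulVec m) by abel]
      rw [dotProduct_sub, dotProduct_sub, dotProduct_sub,
        dotProduct_smul, dotProduct_smul]
      simp only [smul_eq_mul]; ring
    rw [hexpand, hmp] at hmc
    linarith
  refine ⟨y, hy, hynn, fun i => ?_⟩
  have h1 := congrFun hy i
  simp only [Pi.sub_apply, Pi.smul_apply, smul_eq_mul] at h1
  have h2 : 0 ≤ (F.mulVec y) i := by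
    rw [mulVec_apply']
    exact Finset.sum_nonneg fun j _ => mul_nonneg (hnn i j) (hynn j)
  linarith

lemma rayleigh (F : Matrix (Fin n) (Fin n) ℝ)
    (hsym : ∀ i j, F i j = F j i) (hnn : ∀ i j, 0 ≤ F i j)
    (v : Fin n → ℝ) (hv : v ≠ 0) (hv2 : 2 * (v ⬝ᵥ v) ≤ v ⬝ᵥ F.mulVec v) :
    ∃ (w : Fin n → ℝ) (μ : ℝ), (∀ i, 0 ≤ w i) ∧ w ≠ 0 ∧ 2 ≤ μ ∧
      ∀ i, (F.mulVec w) i = μ * w i := by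
  classical
  set f : (Fin n → ℝ) → ℝ := fun x => x ⬝ᵥ F.mulVec x with hf
  set K : Set (Fin n → ℝ) := {x | x ⬝ᵥ x = 1} with hK
  have expand : ∀ (x y : Fin n → ℝ), x ⬝ᵥ F.mulVec y = ∑ i, ∑ j, F i j * x i * y j := by
    intro x y
    simp only [dotProduct, Matrix.mulVec]
    apply Finset.sum_congr rfl; intro i _
    rw [Finset.mul_sum]; apply Finset.sum_congr rfl; intro j _; ring
  have hsymdot : ∀ x y : Fin n → ℝ, x ⬝ᵥ F.mulVec y = y ⬝ᵥ F.mulVec x := by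
    intro x y
    rw [expand, expand, Finset.sum_comm]
    apply Finset.sum_congr rfl; intro j _
    apply Finset.sum_congr rfl; intro i _
    rw [hsym i j]; ring
  have hfsmul : ∀ (s : ℝ) (x : Fin n → ℝ), f (s • x) = s ^ 2 * f x := by
    intro s x
    simp only [hf]
    rw [Matrix.mulVec_smul, dotProduct_smul, smul_dotProduct]
    simp only [smul_eq_mul]; ring
  have hqsmul : ∀ (s : ℝ) (x : Fin n → ℝ), (s • x) ⬝ᵥ (s • x) = s ^ 2 * (x ⬝ᵥ x) := by
    intro s x
    rw [dotProduct_smul, smul_dotProduct]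
    simp only [smul_eq_mul]; ring
  have hnorm : ∀ x : Fin n → ℝ, x ≠ 0 → ((Real.sqrt (x ⬝ᵥ x))⁻¹ • x) ∈ K := by
    intro x hx
    have hS : 0 < x ⬝ᵥ x := dot_self_pos x hx
    have hs2 : ((Real.sqrt (x ⬝ᵥ x))⁻¹) ^ 2 = (x ⬝ᵥ x)⁻¹ := by
      rw [inv_pow, Real.sq_sqrt hS.le]
    simp only [hK, Set.mem_setOf_eq]
    rw [hqsmul, hs2, inv_mul_cancel₀ hS.ne']
  have hcontq : Continuous fun x : Fin n → ℝ => x ⬝ᵥ x := by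
    apply continuous_finset_sum
    intro i _
    exact (continuous_apply i).mul (continuous_apply i)
  have hcont : Continuous f := by
    simp only [hf, dotProduct, Matrix.mulVec]
    apply continuous_finset_sum
    intro i _
    exact (continuous_apply i).mul
      (continuous_finset_sum _ fun j _ => continuous_const.mul (continuous_apply j))
  have hKclosed : IsClosed K := by
    have : K = (fun x : Fin n → ℝ => x ⬝ᵥ x) ⁻¹' {1} := by
      ext x; simp [hK]
    rw [this]
    exact IsClosed.preimage hcontq isClosed_singleton
  have hKbdd : Bornology.IsBounded K := by
    apply (Metric.isBounded_closedBall (x := (0 : Fin n → ℝ)) (r := 1)).subset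
    intro x hx
    simp only [hK, Set.mem_setOf_eq] at hx
    simp only [Metric.mem_closedBall, dist_zero_right]
    rw [pi_norm_le_iff_of_nonneg zero_le_one]
    intro i
    have h1 : x i * x i ≤ 1 := by
      have := Finset.single_le_sum (f := fun j => x j * x j)
        (fun j _ => mul_self_nonneg (x j)) (Finset.mem_univ i)
      have hsum : (∑ j, x j * x j) = 1 := hx
      simpa using this.trans_eq hsum
    rw [Real.norm_eq_abs]
    nlinarith [abs_nonneg (x i), abs_mul_abs_self (x i)]
  have hKc : IsCompact K := Metric.isCompact_of_isClosed_isBounded hKclosed hKbdd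
  have hKne : K.Nonempty := ⟨_, hnorm v hv⟩
  obtain ⟨w₀, hw₀K, hw₀max⟩ := hKc.exists_isMaxOn hKne hcont.continuousOn
  set μ := f w₀ with hμdef
  have hbound : ∀ x : Fin n → ℝ, f x ≤ μ * (x ⬝ᵥ x) := by
    intro x
    by_cases hx : x = 0
    · subst hx
      simp [hf]
    · have hS : 0 < x ⬝ᵥ x := dot_self_pos x hx
      have hz := hw₀max (hnorm x hx)
      simp only [Set.mem_setOf_eq] at hz
      rw [hfsmul] at hz
      have hs2 : ((Real.sqrt (x ⬝ᵥ x))⁻¹) ^ 2 = (x ⬝ᵥ x)⁻¹ := by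
        rw [inv_pow, Real.sq_sqrt hS.le]
      rw [hs2] at hz
      calc f x = (x ⬝ᵥ x) * ((x ⬝ᵥ x)⁻¹ * f x) := by
            field_simp
        _ ≤ (x ⬝ᵥ x) * μ := by
            apply mul_le_mul_of_nonneg_left hz hS.le
        _ = μ * (x ⬝ᵥ x) := by ring
  have hμ2 : 2 ≤ μ := by
    have h1 := hbound v
    have h2 : 0 < v ⬝ᵥ v := dot_self_pos v hv
    nlinarith [hv2]
  have heigen : ∀ w' : Fin n → ℝ, w' ⬝ᵥ w' = 1 → f w' = μ →
      ∀ i, (F.mulVec w') i = μ * w' i := by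
    intro w' hw'1 hw'μ
    have key : ∀ y : Fin n → ℝ, y ⬝ᵥ F.mulVec w' = μ * (y ⬝ᵥ w') := by
      intro y
      have hA0 : 0 ≤ μ * (y ⬝ᵥ y) - f y := by have := hbound y; linarith
      have hquad : ∀ s : ℝ, 2 * s * (y ⬝ᵥ F.mulVec w' - μ * (y ⬝ᵥ w'))
          ≤ s ^ 2 * (μ * (y ⬝ᵥ y) - f y) := by
        intro s
        have h1 := hbound (w' + s • y)
        have e1 : f (w' + s • y) = f w' + 2 * s * (y ⬝ᵥ F.mulVec w') + s ^ 2 * f y := by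
          simp only [hf]
          simp only [Matrix.mulVec_add, Matrix.mulVec_smul, add_dotProduct,
            dotProduct_add, dotProduct_smul, smul_dotProduct,
            smul_eq_mul]
          rw [hsymdot w' y]
          ring
        have e2 : (w' + s • y) ⬝ᵥ (w' + s • y)
            = 1 + 2 * s * (y ⬝ᵥ w') + s ^ 2 * (y ⬝ᵥ y) := by
          simp only [add_dotProduct, dotProduct_add,
            smul_dotProduct, dotProduct_smul, smul_eq_mul]
          rw [dotProduct_comm w' y, hw'1]
          ring
        rw [e1, e2, hw'μ] at h1
        nlinarith [h1]
      set B := y ⬝ᵥ F.mulVec w' - μ * (y ⬝ᵥ w') with hB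
      have hBzero : B = 0 := by
        by_contra hB0
        set A := μ * (y ⬝ᵥ y) - f y with hA
        have hApos : (0:ℝ) < A + 1 := by linarith
        have h := hquad (B / (A + 1))
        have hB2 : 0 < B ^ 2 := by positivity
        rw [div_pow] at h
        have h' : 2 * (B / (A + 1)) * B = 2 * B ^ 2 / (A + 1) := by ring
        rw [h'] at h
        have h'' : B ^ 2 / (A + 1) ^ 2 * A = B ^ 2 * A / (A + 1) ^ 2 := by ring
        rw [h''] at h
        rw [div_le_div_iff₀ hApos (by positivity)] at h
        nlinarith [h, hB2, hA0]
      linarith [hBzero]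
    intro i
    have := key (Pi.single i 1)
    rwa [single_dotProduct, single_dotProduct, one_mul, one_mul] at this
  set w : Fin n → ℝ := fun i => |w₀ i| with hw
  have hqw : w ⬝ᵥ w = 1 := by
    have : w ⬝ᵥ w = w₀ ⬝ᵥ w₀ := by
      apply Finset.sum_congr rfl
      intro i _
      simp only [hw]
      exact abs_mul_abs_self (w₀ i)
    rw [this]
    exact hw₀K
  have hfww : f w₀ ≤ f w := by
    simp only [hf]
    rw [expand, expand]
    apply Finset.sum_le_sum
    intro i _
    apply Finset.sum_le_sum
    intro j _
    calc F i j * w₀ i * w₀ j ≤ |F i j * w₀ i * w₀ j| := le_abs_self _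
      _ = F i j * |w₀ i| * |w₀ j| := by
          rw [abs_mul, abs_mul, abs_of_nonneg (hnn i j)]
  have hfw : f w = μ := le_antisymm (hw₀max hqw) hfww
  refine ⟨w, μ, fun i => abs_nonneg _, ?_, hμ2, heigen w hqw hfw⟩
  intro h0
  rw [h0] at hqw
  simp at hqw

lemma fin2cases (j : Fin 2) : j = 0 ∨ j = 1 := by omega

lemma parity_eq_of_even (t : ℤ) (x y : Fin 2) (hx : Even (t + ((x : ℕ) : ℤ)))
    (hy : Even (t + ((y : ℕ) : ℤ))) : x = y := by
  rw [Int.even_iff] at hx hy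
  have h1 : (x : ℕ) < 2 := x.isLt
  have h2 : (y : ℕ) < 2 := y.isLt
  have : (x : ℕ) = (y : ℕ) := by omega
  exact Fin.val_injective this

lemma parity_eq_of_odd (t : ℤ) (x y : Fin 2) (hx : Odd (t + ((x : ℕ) : ℤ)))
    (hy : Odd (t + ((y : ℕ) : ℤ))) : x = y := by
  rw [Int.odd_iff] at hx hy
  have h1 : (x : ℕ) < 2 := x.isLt
  have h2 : (y : ℕ) < 2 := y.isLt
  have : (x : ℕ) = (y : ℕ) := by omega
  exact Fin.val_injective this

lemma tContra (ε : Fin n → Fin 2) (M : Matrix (Fin n) (Fin n) ℝ)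
    (hbipM : ∀ i j, ε i = ε j → M i j = 0)
    (N : ℕ) (hN : 1 ≤ N)
    (a : Fin n → ℝ) (ha0 : ∀ i, 0 ≤ a i) (hane : a ≠ 0)
    (μ : ℝ) (hμ : 2 ≤ μ)
    (heig : ∀ i, ∑ k, M i k * a k = μ * a i)
    (hsys : ∀ l : Fin n → ℝ, ∃ u : Fin n → ℤ → ℝ,
      (∀ k, ε k = 0 → u k 0 = l k) ∧ (∀ k, ε k = 1 → u k 1 = l k) ∧
      (∀ (k : Fin n) (t : ℤ), Odd (t + ((ε k : ℕ) : ℤ)) →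
         (∑ i, M i k * u i t) ≤ u k (t + 1) + u k (t - 1)) ∧
      (∀ (k : Fin n) (t : ℤ), Even (t + ((ε k : ℕ) : ℤ)) → u k (t + 2 * N) = u k t)) :
    False := by
  classical
  have hcol : ∀ b : Fin 2, ∃ k, ε k = b ∧ 0 < a k := by
    intro b
    by_contra hno
    push_neg at hno
    have hzero : ∀ k, ε k = b → a k = 0 := fun k hk =>
      le_antisymm (hno k hk) (ha0 k)
    apply hane
    funext i
    show a i = 0
    rcases eq_or_ne (ε i) b with hb | hb
    · exact hzero i hb
    · have hz : ∑ k, M i k * a k = 0 := by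
        apply Finset.sum_eq_zero
        intro k _
        rcases eq_or_ne (ε k) b with hkb | hkb
        · rw [hzero k hkb, mul_zero]
        · have : ε i = ε k := by
            rcases fin2cases b with h0 | h0 <;> rcases fin2cases (ε i) with h1 | h1 <;>
              rcases fin2cases (ε k) with h2 | h2 <;> simp_all
          rw [hbipM i k this, zero_mul]
      have h2 := heig i
      rw [hz] at h2
      rcases mul_eq_zero.mp h2.symm with h | h
      · linarith
      · exact h
  obtain ⟨k0, hk0, hk0pos⟩ := hcol 0
  obtain ⟨k1, hk1, hk1pos⟩ := hcol 1
  set p : ℝ := ∑ k, if ε k = 0 then a k * a k else 0 with hpdef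
  set q : ℝ := ∑ k, if ε k = 1 then a k * a k else 0 with hqdef
  have hp : 0 < p := by
    apply Finset.sum_pos' (fun k _ => by split <;> [exact mul_self_nonneg _; rfl])
    exact ⟨k0, Finset.mem_univ k0, by rw [if_pos hk0]; exact mul_pos hk0pos hk0pos⟩
  have hq : 0 < q := by
    apply Finset.sum_pos' (fun k _ => by split <;> [exact mul_self_nonneg _; rfl])
    exact ⟨k1, Finset.mem_univ k1, by rw [if_pos hk1]; exact mul_pos hk1pos hk1pos⟩
  set l : Fin n → ℝ := fun k => if ε k = 0 then a k / p else 2 * a k / q with hldef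
  obtain ⟨u, hu0, hu1, hurec, huper⟩ := hsys l
  set L : ℤ → ℝ := fun t => ∑ k, if Even (t + ((ε k : ℕ) : ℤ)) then a k * u k t else 0
    with hLdef
  have hL0 : L 0 = 1 := by
    have hterm : ∀ k : Fin n, (if Even ((0:ℤ) + ((ε k : ℕ) : ℤ)) then a k * u k 0 else 0)
        = if ε k = 0 then a k * a k / p else 0 := by
      intro k
      rcases fin2cases (ε k) with h | h
      · rw [h]
        simp only [if_pos rfl]
        rw [hu0 k h, hldef]
        simp only [if_pos h]
        norm_num
        ring
      · rw [h]
        norm_num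
    simp only [hLdef]
    rw [Finset.sum_congr rfl (fun k _ => hterm k)]
    rw [show (∑ k, if ε k = 0 then a k * a k / p else 0)
        = (∑ k, if ε k = 0 then a k * a k else 0) / p by
      rw [Finset.sum_div]; apply Finset.sum_congr rfl; intro k _; split <;> simp]
    rw [← hpdef, div_self hp.ne']
  have hL1 : L 1 = 2 := by
    have hterm : ∀ k : Fin n, (if Even ((1:ℤ) + ((ε k : ℕ) : ℤ)) then a k * u k 1 else 0)
        = if ε k = 1 then 2 * (a k * a k) / q else 0 := by
      intro k
      rcases fin2cases (ε k) with h | h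
      · rw [h]
        norm_num
      · rw [h]
        simp only [if_pos rfl]
        rw [hu1 k h, hldef]
        have hne : ε k ≠ 0 := by rw [h]; decide
        simp only [if_neg hne]
        norm_num
        ring
    simp only [hLdef]
    rw [Finset.sum_congr rfl (fun k _ => hterm k)]
    rw [show (∑ k, if ε k = 1 then 2 * (a k * a k) / q else 0)
        = 2 * (∑ k, if ε k = 1 then a k * a k else 0) / q by
      rw [Finset.mul_sum, Finset.sum_div]; apply Finset.sum_congr rfl; intro k _
      split
      · ring
      · simp]
    rw [← hqdef, mul_div_assoc, div_self hq.ne', mul_one]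
  have hstep : ∀ t : ℤ, μ * L t ≤ L (t + 1) + L (t - 1) := by
    intro t
    have hc1 : ∀ k : Fin n, (Even ((t + 1) + ((ε k : ℕ) : ℤ)) ↔ Odd (t + ((ε k : ℕ) : ℤ))) := by
      intro k
      rw [show (t + 1) + ((ε k : ℕ) : ℤ) = (t + ((ε k : ℕ) : ℤ)) + 1 by ring,
        Int.even_add_one, Int.not_even_iff_odd]
    have hc2 : ∀ k : Fin n, (Even ((t - 1) + ((ε k : ℕ) : ℤ)) ↔ Odd (t + ((ε k : ℕ) : ℤ))) := by
      intro k
      rw [show (t - 1) + ((ε k : ℕ) : ℤ) = (t + ((ε k : ℕ) : ℤ)) - 1 by ring,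
        Int.even_sub_one, Int.not_even_iff_odd]
    have hLp : L (t + 1) + L (t - 1)
        = ∑ k, if Odd (t + ((ε k : ℕ) : ℤ)) then a k * (u k (t+1) + u k (t-1)) else 0 := by
      simp only [hLdef]
      rw [← Finset.sum_add_distrib]
      apply Finset.sum_congr rfl
      intro k _
      by_cases h : Odd (t + ((ε k : ℕ) : ℤ))
      · rw [if_pos ((hc1 k).mpr h), if_pos ((hc2 k).mpr h), if_pos h]; ring
      · rw [if_neg (fun hh => h ((hc1 k).mp hh)), if_neg (fun hh => h ((hc2 k).mp hh)),
          if_neg h]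
        norm_num
    have hlow : (∑ k, if Odd (t + ((ε k : ℕ) : ℤ)) then a k * (∑ i, M i k * u i t) else 0)
        ≤ ∑ k, if Odd (t + ((ε k : ℕ) : ℤ)) then a k * (u k (t+1) + u k (t-1)) else 0 := by
      apply Finset.sum_le_sum
      intro k _
      by_cases h : Odd (t + ((ε k : ℕ) : ℤ))
      · rw [if_pos h, if_pos h]
        exact mul_le_mul_of_nonneg_left (hurec k t h) (ha0 k)
      · rw [if_neg h, if_neg h]
    have hid : (∑ k, if Odd (t + ((ε k : ℕ) : ℤ)) then a k * (∑ i, M i k * u i t) else 0)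
        = μ * L t := by
      have hR : ∀ k : Fin n, (if Odd (t + ((ε k : ℕ) : ℤ)) then a k * (∑ i, M i k * u i t) else 0)
          = ∑ i, (if Odd (t + ((ε k : ℕ) : ℤ)) then M i k * a k * u i t else 0) := by
        intro k
        by_cases h : Odd (t + ((ε k : ℕ) : ℤ))
        · rw [if_pos h, Finset.mul_sum]
          apply Finset.sum_congr rfl; intro i _; rw [if_pos h]; ring
        · rw [if_neg h]; symm; apply Finset.sum_eq_zero; intro i _; rw [if_neg h]
      rw [Finset.sum_congr rfl (fun k _ => hR k), Finset.sum_comm]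
      have hI : ∀ i : Fin n, (∑ k, if Odd (t + ((ε k : ℕ) : ℤ)) then M i k * a k * u i t else 0)
          = if Even (t + ((ε i : ℕ) : ℤ)) then μ * (a i * u i t) else 0 := by
        intro i
        by_cases hi : Even (t + ((ε i : ℕ) : ℤ))
        · rw [if_pos hi]
          have hterm : ∀ k : Fin n, (if Odd (t + ((ε k : ℕ) : ℤ)) then M i k * a k * u i t else 0)
              = M i k * a k * u i t := by
            intro k
            by_cases hk : Odd (t + ((ε k : ℕ) : ℤ))
            · rw [if_pos hk]
            · rw [if_neg hk]
              have hkE : Even (t + ((ε k : ℕ) : ℤ)) := Int.not_odd_iff_even.mp hk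
              rw [hbipM i k (parity_eq_of_even t (ε i) (ε k) hi hkE), zero_mul, zero_mul]
          rw [Finset.sum_congr rfl (fun k _ => hterm k)]
          rw [show (∑ k, M i k * a k * u i t) = (∑ k, M i k * a k) * u i t from
            (Finset.sum_mul _ _ _).symm]
          rw [heig i]; ring
        · rw [if_neg hi]
          apply Finset.sum_eq_zero
          intro k _
          by_cases hk : Odd (t + ((ε k : ℕ) : ℤ))
          · have hiO : Odd (t + ((ε i : ℕ) : ℤ)) := Int.not_even_iff_odd.mp hi
            rw [if_pos hk, hbipM i k (parity_eq_of_odd t (ε i) (ε k) hiO hk), zero_mul,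
              zero_mul]
          · rw [if_neg hk]
      rw [Finset.sum_congr rfl (fun i _ => hI i)]
      simp only [hLdef]
      rw [Finset.mul_sum]
      apply Finset.sum_congr rfl
      intro i _
      by_cases hi : Even (t + ((ε i : ℕ) : ℤ))
      · rw [if_pos hi, if_pos hi]
      · rw [if_neg hi, if_neg hi, mul_zero]
    rw [hLp, ← hid]
    exact hlow
  have hmono : ∀ m : ℕ, 1 ≤ L m ∧ L m + 1 ≤ L ((m : ℤ) + 1) := by
    intro m
    induction m with
    | zero =>
      constructor
      · rw [show ((0:ℕ):ℤ) = (0:ℤ) by norm_num, hL0]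
      · rw [show ((0:ℕ):ℤ) = (0:ℤ) by norm_num, hL0, show (0:ℤ) + 1 = 1 by ring, hL1]
        norm_num
    | succ m ih =>
      obtain ⟨h1, h2⟩ := ih
      have hcast : ((m + 1 : ℕ) : ℤ) = (m : ℤ) + 1 := by push_cast; ring
      have h1' : 1 ≤ L ((m : ℤ) + 1) := by linarith
      constructor
      · rw [hcast]; exact h1'
      · rw [hcast]
        have hs := hstep ((m : ℤ) + 1)
        have harg : (m : ℤ) + 1 - 1 = (m : ℤ) := by ring
        rw [harg] at hs
        have hmul : 2 * L ((m : ℤ) + 1) ≤ μ * L ((m : ℤ) + 1) := by nlinarith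
        linarith
  have hgrow : ∀ m : ℕ, (m : ℝ) + 1 ≤ L m := by
    intro m
    induction m with
    | zero => rw [show ((0:ℕ):ℤ) = (0:ℤ) by norm_num, hL0]; norm_num
    | succ m ih =>
      have hcast : ((m + 1 : ℕ) : ℤ) = (m : ℤ) + 1 := by push_cast; ring
      rw [hcast]
      have := (hmono m).2
      push_cast
      linarith
  have hper0 : L (2 * (N : ℤ)) = 1 := by
    rw [← hL0]
    simp only [hLdef]
    apply Finset.sum_congr rfl
    intro k _
    by_cases hk : Even ((0:ℤ) + ((ε k : ℕ) : ℤ))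
    · have h2 : Even (2 * (N : ℤ) + ((ε k : ℕ) : ℤ)) := by
        rcases hk with ⟨m, hm⟩
        exact ⟨(N : ℤ) + m, by omega⟩
      rw [if_pos h2, if_pos hk]
      have hu := huper k 0 hk
      rw [zero_add] at hu
      rw [hu]
    · have h2 : ¬ Even (2 * (N : ℤ) + ((ε k : ℕ) : ℤ)) := by
        intro hh
        apply hk
        rcases hh with ⟨m, hm⟩
        exact ⟨m - (N : ℤ), by omega⟩
      rw [if_neg h2, if_neg hk]
  have hg := hgrow (2 * N)
  have hcast2 : ((2 * N : ℕ) : ℤ) = 2 * (N : ℤ) := by push_cast; ring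
  rw [hcast2, hper0] at hg
  have hNr : (1 : ℝ) ≤ (N : ℝ) := by exact_mod_cast hN
  push_cast at hg
  linarith

lemma translate (M A : Matrix (Fin n) (Fin n) ℝ) (c d : Fin n → ℝ)
    (hd0 : ∀ i, 0 < d i) (hdsq : ∀ i, d i * d i = c i)
    (hcM : ∀ i j, c i * M i j = c j * M j i)
    (hA : ∀ i j, A i j = d i * M i j * (d j)⁻¹)
    (z : Fin n → ℝ) (k : Fin n) :
    ∑ i, M i k * (d i * z i) = d k * (A.mulVec z) k := by
  rw [mulVec_apply', Finset.mul_sum]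
  apply Finset.sum_congr rfl
  intro i _
  rw [hA k i]
  have h1 := hcM k i
  have h2 := hdsq k
  have h3 := hdsq i
  have hi := (hd0 i).ne'
  field_simp
  linear_combination z i * M i k * h3 - z i * M k i * h2 - z i * h1

lemma eigtrans (M A : Matrix (Fin n) (Fin n) ℝ) (d : Fin n → ℝ)
    (hd0 : ∀ i, 0 < d i)
    (hA : ∀ i j, A i j = d i * M i j * (d j)⁻¹)
    (w : Fin n → ℝ) (μ : ℝ) (hw : ∀ i, (A.mulVec w) i = μ * w i) :
    ∀ i, ∑ k, M i k * ((d k)⁻¹ * w k) = μ * ((d i)⁻¹ * w i) := by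
  intro i
  have h1 : (A.mulVec w) i = d i * ∑ k, M i k * ((d k)⁻¹ * w k) := by
    rw [mulVec_apply', Finset.mul_sum]
    apply Finset.sum_congr rfl
    intro k _
    rw [hA i k]
    ring
  have h2 := hw i
  rw [h1] at h2
  have hi := (hd0 i).ne'
  calc (∑ k, M i k * ((d k)⁻¹ * w k))
      = (d i)⁻¹ * (d i * ∑ k, M i k * ((d k)⁻¹ * w k)) := by field_simp
    _ = (d i)⁻¹ * (μ * w i) := by rw [h2]
    _ = μ * ((d i)⁻¹ * w i) := by ring

end TropicalAux

/-- Let `Γ, Δ` be matrices with nonnegative integer entries and disjoint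
supports, bipartite with respect to a coloring `ε`, commuting, and skew-symmetrizable
(symmetrizer `c`). If tropical T-systems for `(Γ, Δ, ε)` exist for every initial labeling
and all of them are periodic with period `N ≥ 1`, then `(Γ, Δ)` admits a strictly
subadditive labeling. -/
theorem tropical_periodicity_implies_strictly_subadditive
    (n : ℕ) (Γ Δ : Matrix (Fin n) (Fin n) ℝ)
    (hΓint : ∀ i j, ∃ a : ℕ, Γ i j = (a : ℝ)) (hΔint : ∀ i j, ∃ a : ℕ, Δ i j = (a : ℝ))
    (hdisj : ∀ i j, 0 < Γ i j → Δ i j = 0)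
    (ε : Fin n → Fin 2)
    (hbip : ∀ i j, ε i = ε j → Γ i j = 0 ∧ Δ i j = 0)
    (hcomm : Γ * Δ = Δ * Γ)
    (c : Fin n → ℝ) (hc : ∀ i, 0 < c i)
    (hcΓ : ∀ i j, c i * Γ i j = c j * Γ j i)
    (hcΔ : ∀ i j, c i * Δ i j = c j * Δ j i)
    (N : ℕ) (hN : 1 ≤ N)
    (hexists : ∀ l : Fin n → ℝ, ∃ u : Fin n → ℤ → ℝ, IsTropicalTSystem Γ Δ ε l u)
    (hper : ∀ (l : Fin n → ℝ) (u : Fin n → ℤ → ℝ),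
      IsTropicalTSystem Γ Δ ε l u → IsPeriodicTropicalTSystem ε N u) :
    ∃ ν : Fin n → ℝ, (∀ k, 0 < ν k) ∧
      ∀ k, (∑ i, Γ i k * ν i < 2 * ν k) ∧ (∑ j, Δ j k * ν j < 2 * ν k) := by
  classical
  open Matrix Finset TropicalAux in
  have hΓ0 : ∀ i j, 0 ≤ Γ i j := by
    intro i j; obtain ⟨a, ha⟩ := hΓint i j; rw [ha]; positivity
  have hΔ0 : ∀ i j, 0 ≤ Δ i j := by
    intro i j; obtain ⟨a, ha⟩ := hΔint i j; rw [ha]; positivity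
  set d : Fin n → ℝ := fun i => Real.sqrt (c i) with hddef
  have hd0 : ∀ i, 0 < d i := fun i => Real.sqrt_pos.mpr (hc i)
  have hdsq : ∀ i, d i * d i = c i := fun i => Real.mul_self_sqrt (hc i).le
  set F : Matrix (Fin n) (Fin n) ℝ := fun i j => d i * Γ i j * (d j)⁻¹ with hFdef
  set G : Matrix (Fin n) (Fin n) ℝ := fun i j => d i * Δ i j * (d j)⁻¹ with hGdef
  have hFapp : ∀ i j, F i j = d i * Γ i j * (d j)⁻¹ := fun i j => by rw [hFdef]
  have hGapp : ∀ i j, G i j = d i * Δ i j * (d j)⁻¹ := fun i j => by rw [hGdef]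
  have hFnn : ∀ i j, 0 ≤ F i j := by
    intro i j
    rw [hFapp]
    have h1 := hΓ0 i j
    have h2 := (hd0 i).le
    have h3 := (hd0 j).le
    positivity
  have hGnn : ∀ i j, 0 ≤ G i j := by
    intro i j
    rw [hGapp]
    have h1 := hΔ0 i j
    have h2 := (hd0 i).le
    have h3 := (hd0 j).le
    positivity
  have hFsym : ∀ i j, F i j = F j i := by
    intro i j
    rw [hFapp, hFapp]
    have hi := (hd0 i).ne'
    have hj := (hd0 j).ne'
    field_simp
    first
      | linear_combination hcΓ i j + Γ i j * hdsq i - Γ j i * hdsq j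
      | linear_combination - hcΓ i j - Γ i j * hdsq i + Γ j i * hdsq j
  have hGsym : ∀ i j, G i j = G j i := by
    intro i j
    rw [hGapp, hGapp]
    have hi := (hd0 i).ne'
    have hj := (hd0 j).ne'
    field_simp
    first
      | linear_combination hcΔ i j + Δ i j * hdsq i - Δ j i * hdsq j
      | linear_combination - hcΔ i j - Δ i j * hdsq i + Δ j i * hdsq j
  have hFG : F * G = G * F := by
    ext i j
    rw [Matrix.mul_apply, Matrix.mul_apply]
    have hcom' : (∑ k, Γ i k * Δ k j) = ∑ k, Δ i k * Γ k j := by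
      have h : (Γ * Δ) i j = (Δ * Γ) i j := by rw [hcomm]
      rwa [Matrix.mul_apply, Matrix.mul_apply] at h
    have e1 : (∑ k, F i k * G k j) = (d i * (∑ k, Γ i k * Δ k j)) * (d j)⁻¹ := by
      rw [Finset.mul_sum, Finset.sum_mul]
      apply Finset.sum_congr rfl
      intro k _
      rw [hFapp, hGapp]
      have hk := (hd0 k).ne'
      rw [show (d i * Γ i k * (d k)⁻¹) * (d k * Δ k j * (d j)⁻¹)
          = (d k * (d k)⁻¹) * (d i * (Γ i k * Δ k j) * (d j)⁻¹) by ring,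
        mul_inv_cancel₀ hk, one_mul]
    have e2 : (∑ k, G i k * F k j) = (d i * (∑ k, Δ i k * Γ k j)) * (d j)⁻¹ := by
      rw [Finset.mul_sum, Finset.sum_mul]
      apply Finset.sum_congr rfl
      intro k _
      rw [hFapp, hGapp]
      have hk := (hd0 k).ne'
      rw [show (d i * Δ i k * (d k)⁻¹) * (d k * Γ k j * (d j)⁻¹)
          = (d k * (d k)⁻¹) * (d i * (Δ i k * Γ k j) * (d j)⁻¹) by ring,
        mul_inv_cancel₀ hk, one_mul]
    rw [e1, e2, hcom']
  -- packaged T-systems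
  have hsysΓ : ∀ l : Fin n → ℝ, ∃ u : Fin n → ℤ → ℝ,
      (∀ k, ε k = 0 → u k 0 = l k) ∧ (∀ k, ε k = 1 → u k 1 = l k) ∧
      (∀ (k : Fin n) (t : ℤ), Odd (t + ((ε k : ℕ) : ℤ)) →
         (∑ i, Γ i k * u i t) ≤ u k (t + 1) + u k (t - 1)) ∧
      (∀ (k : Fin n) (t : ℤ), Even (t + ((ε k : ℕ) : ℤ)) → u k (t + 2 * N) = u k t) := by
    intro l
    obtain ⟨u, hu⟩ := hexists l
    refine ⟨u, hu.1, hu.2.1, ?_, hper l u hu⟩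
    intro k t ht
    rw [hu.2.2 k t ht]
    exact le_max_left _ _
  have hsysΔ : ∀ l : Fin n → ℝ, ∃ u : Fin n → ℤ → ℝ,
      (∀ k, ε k = 0 → u k 0 = l k) ∧ (∀ k, ε k = 1 → u k 1 = l k) ∧
      (∀ (k : Fin n) (t : ℤ), Odd (t + ((ε k : ℕ) : ℤ)) →
         (∑ i, Δ i k * u i t) ≤ u k (t + 1) + u k (t - 1)) ∧
      (∀ (k : Fin n) (t : ℤ), Even (t + ((ε k : ℕ) : ℤ)) → u k (t + 2 * N) = u k t) := by
    intro l
    obtain ⟨u, hu⟩ := hexists l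
    refine ⟨u, hu.1, hu.2.1, ?_, hper l u hu⟩
    intro k t ht
    rw [hu.2.2 k t ht]
    exact le_max_right _ _
  -- Case A for Γ
  by_cases hAF : ∃ v : Fin n → ℝ, v ≠ 0 ∧ 2 * (v ⬝ᵥ v) ≤ v ⬝ᵥ F.mulVec v
  · exfalso
    obtain ⟨v, hv, hv2⟩ := hAF
    obtain ⟨w, μ, hw0, hwne, hμ2, hweig⟩ := TropicalAux.rayleigh F hFsym hFnn v hv hv2
    have ha0 : ∀ i, 0 ≤ (fun i => (d i)⁻¹ * w i) i := fun i =>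
      mul_nonneg (inv_nonneg.mpr (hd0 i).le) (hw0 i)
    have hane : (fun i => (d i)⁻¹ * w i) ≠ 0 := by
      intro h0
      apply hwne
      funext i
      have h1 : (d i)⁻¹ * w i = 0 := congrFun h0 i
      rcases mul_eq_zero.mp h1 with h | h
      · exact absurd h (inv_ne_zero (hd0 i).ne')
      · exact h
    have heig := TropicalAux.eigtrans Γ F d hd0 hFapp w μ hweig
    exact TropicalAux.tContra ε Γ (fun i j h => (hbip i j h).1) N hN
      (fun i => (d i)⁻¹ * w i) ha0 hane μ hμ2 heig hsysΓ
  by_cases hAG : ∃ v : Fin n → ℝ, v ≠ 0 ∧ 2 * (v ⬝ᵥ v) ≤ v ⬝ᵥ G.mulVec v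
  · exfalso
    obtain ⟨v, hv, hv2⟩ := hAG
    obtain ⟨w, μ, hw0, hwne, hμ2, hweig⟩ := TropicalAux.rayleigh G hGsym hGnn v hv hv2
    have ha0 : ∀ i, 0 ≤ (fun i => (d i)⁻¹ * w i) i := fun i =>
      mul_nonneg (inv_nonneg.mpr (hd0 i).le) (hw0 i)
    have hane : (fun i => (d i)⁻¹ * w i) ≠ 0 := by
      intro h0
      apply hwne
      funext i
      have h1 : (d i)⁻¹ * w i = 0 := congrFun h0 i
      rcases mul_eq_zero.mp h1 with h | h
      · exact absurd h (inv_ne_zero (hd0 i).ne')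
      · exact h
    have heig := TropicalAux.eigtrans Δ G d hd0 hGapp w μ hweig
    exact TropicalAux.tContra ε Δ (fun i j h => (hbip i j h).2) N hN
      (fun i => (d i)⁻¹ * w i) ha0 hane μ hμ2 heig hsysΔ
  -- Case B : both quadratic forms are < 2
  push_neg at hAF hAG
  have hpdF : ∀ v : Fin n → ℝ, v ≠ 0 → v ⬝ᵥ F.mulVec v < 2 * (v ⬝ᵥ v) := fun v hv =>
    hAF v hv
  have hpdG : ∀ v : Fin n → ℝ, v ≠ 0 → v ⬝ᵥ G.mulVec v < 2 * (v ⬝ᵥ v) := fun v hv =>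
    hAG v hv
  obtain ⟨r, hr_eq, hr0, hr1⟩ := TropicalAux.solve F hFnn hpdF (fun _ => 1)
    (fun _ => zero_le_one)
  obtain ⟨y, hy_eq, hy0, hy1⟩ := TropicalAux.solve G hGnn hpdG (fun _ => 1)
    (fun _ => zero_le_one)
  obtain ⟨x, hx_eq, hx0, hx2⟩ := TropicalAux.solve F hFnn hpdF y hy0
  have hypos : ∀ k, 0 < y k := by
    intro k
    have := hy1 k
    linarith
  have hrpos : ∀ k, 0 < r k := by
    intro k
    have := hr1 k
    linarith
  have hxpos : ∀ k, 0 < x k := by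
    intro k
    have h1 := hx2 k
    have h2 := hypos k
    linarith
  have hGx : (2:ℝ) • x - G.mulVec x = r := by
    apply TropicalAux.injphi F hpdF
    have hcomv : F.mulVec (G.mulVec x) = G.mulVec (F.mulVec x) := by
      rw [Matrix.mulVec_mulVec, Matrix.mulVec_mulVec, hFG]
    calc (2:ℝ) • ((2:ℝ) • x - G.mulVec x) - F.mulVec ((2:ℝ) • x - G.mulVec x)
        = (2:ℝ) • ((2:ℝ) • x - F.mulVec x) - G.mulVec ((2:ℝ) • x - F.mulVec x) := by
          rw [Matrix.mulVec_sub, Matrix.mulVec_sub, Matrix.mulVec_smul, Matrix.mulVec_smul,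
            hcomv]
          module
      _ = (2:ℝ) • y - G.mulVec y := by rw [hx_eq]
      _ = (fun _ => (1:ℝ)) := hy_eq
      _ = (2:ℝ) • r - F.mulVec r := hr_eq.symm
  refine ⟨fun k => d k * x k, fun k => mul_pos (hd0 k) (hxpos k), fun k => ?_⟩
  have hFxk : (F.mulVec x) k = 2 * x k - y k := by
    have h1 := congrFun hx_eq k
    simp only [Pi.sub_apply, Pi.smul_apply, smul_eq_mul] at h1
    linarith
  have hGxk : (G.mulVec x) k = 2 * x k - r k := by
    have h1 := congrFun hGx k
    simp only [Pi.sub_apply, Pi.smul_apply, smul_eq_mul] at h1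
    linarith
  constructor
  · have ht := TropicalAux.translate Γ F c d hd0 hdsq hcΓ hFapp x k
    rw [show (∑ i, Γ i k * (d i * x i)) = ∑ i, Γ i k * ((fun k => d k * x k) i) from rfl] at ht
    rw [ht, hFxk]
    show d k * (2 * x k - y k) < 2 * (d k * x k)
    have := hypos k
    have := hd0 k
    nlinarith
  · have ht := TropicalAux.translate Δ G c d hd0 hdsq hcΔ hGapp x k
    rw [show (∑ i, Δ i k * (d i * x i)) = ∑ i, Δ i k * ((fun k => d k * x k) i) from rfl] at ht
    rw [ht, hGxk]
    show d k * (2 * x k - r k) < 2 * (d k * x k)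
    have := hrpos k
    have := hd0 k
    nlinarith
end

section
/- Let Γ, Δ be n×n real matrices with nonnegative entries such that ΓΔ = ΔΓ and Γ + Δ is irreducible. Assume that every real eigenvalue μ of Γ satisfies μ < 2 and every real eigenvalue μ of Δ satisfies μ < 2. Then (Γ, Δ) admits a strictly subadditive labeling: there exists ν ∈ ℝⁿ with all entries positive such that for every k, 2ν_k > Σ_i Γ_{ik} ν_i and 2ν_k > Σ_j Δ_{jk} ν_j. -/
open Matrix Finset Filter Topology

namespace SSL
variable {n : ℕ}

lemma mul_nonneg' {A B : Matrix (Fin n) (Fin n) ℝ} (hA : ∀ i j, 0 ≤ A i j)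
    (hB : ∀ i j, 0 ≤ B i j) : ∀ i j, 0 ≤ (A * B) i j := by
  intro i j
  rw [Matrix.mul_apply]
  exact Finset.sum_nonneg fun k _ => mul_nonneg (hA i k) (hB k j)

lemma pow_nonneg' {A : Matrix (Fin n) (Fin n) ℝ} (hA : ∀ i j, 0 ≤ A i j) :
    ∀ (k : ℕ) i j, 0 ≤ (A ^ k) i j := by
  intro k
  induction k with
  | zero =>
    intro i j
    rw [pow_zero]
    by_cases h : i = j <;> simp [Matrix.one_apply, h]
  | succ k ih =>
    rw [pow_succ]
    exact mul_nonneg' ih hA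

/-- partial sums of the geometric series -/
noncomputable def P (M : Matrix (Fin n) (Fin n) ℝ) (N : ℕ) : Matrix (Fin n) (Fin n) ℝ :=
  ∑ k ∈ Finset.range N, M ^ k

lemma P_nonneg {M : Matrix (Fin n) (Fin n) ℝ} (hM : ∀ i j, 0 ≤ M i j) (N : ℕ) :
    ∀ i j, 0 ≤ P M N i j := by
  intro i j
  simp only [P, Matrix.sum_apply]
  exact Finset.sum_nonneg fun k _ => pow_nonneg' hM k i j

lemma P_mono {M : Matrix (Fin n) (Fin n) ℝ} (hM : ∀ i j, 0 ≤ M i j) (i j : Fin n) :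
    Monotone fun N => P M N i j := by
  intro N N' h
  simp only [P, Matrix.sum_apply]
  exact Finset.sum_le_sum_of_subset_of_nonneg (Finset.range_subset_range.2 h)
    (fun k _ _ => pow_nonneg' hM k i j)

lemma geo {M : Matrix (Fin n) (Fin n) ℝ} (hM : ∀ i j, 0 ≤ M i j)
    (hB : ∃ C, ∀ N i j, P M N i j ≤ C) :
    ∃ S : Matrix (Fin n) (Fin n) ℝ, (∀ i j, 0 ≤ S i j) ∧
      (∀ N i j, P M N i j ≤ S i j) ∧
      (1 - M) * S = 1 ∧ S * (1 - M) = 1 := by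
  obtain ⟨C, hC⟩ := hB
  have hbdd : ∀ i j, BddAbove (Set.range fun N => P M N i j) := by
    intro i j
    exact ⟨C, by rintro x ⟨N, rfl⟩; exact hC N i j⟩
  set S : Matrix (Fin n) (Fin n) ℝ := Matrix.of fun i j => ⨆ N, P M N i j with hS
  have hle : ∀ N i j, P M N i j ≤ S i j := fun N i j => le_ciSup (hbdd i j) N
  have htend : ∀ i j, Tendsto (fun N => P M N i j) atTop (𝓝 (S i j)) := fun i j =>
    tendsto_atTop_ciSup (P_mono hM i j) (hbdd i j)
  have htendM : Tendsto (fun N => P M N) atTop (𝓝 S) := by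
    apply tendsto_pi_nhds.2
    intro i
    rw [tendsto_pi_nhds]
    intro j
    exact htend i j
  have hpow0 : Tendsto (fun N => M ^ N) atTop (𝓝 0) := by
    have : ∀ (N : ℕ), M ^ N = P M (N + 1) - P M N := by
      intro N
      simp [P, Finset.sum_range_succ]
    simp only [this]
    have h1 : Tendsto (fun N => P M (N + 1)) atTop (𝓝 S) :=
      htendM.comp (tendsto_add_atTop_nat 1)
    simpa using h1.sub htendM
  have key1 : (1 - M) * S = 1 := by
    have h1 : Tendsto (fun N => (1 - M) * P M N) atTop (𝓝 ((1 - M) * S)) :=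
      (Continuous.matrix_mul continuous_const continuous_id).continuousAt.tendsto.comp htendM
    have h2 : ∀ N, (1 - M) * P M N = 1 - M ^ N := by
      intro N
      have := mul_geom_sum M N
      rw [P]
      linear_combination (norm := noncomm_ring) -this
    simp only [h2] at h1
    have h3 : Tendsto (fun N => (1 : Matrix (Fin n) (Fin n) ℝ) - M ^ N) atTop (𝓝 (1 - 0)) :=
      tendsto_const_nhds.sub hpow0
    rw [sub_zero] at h3
    exact tendsto_nhds_unique h1 h3
  have key2 : S * (1 - M) = 1 := by
    have h1 : Tendsto (fun N => P M N * (1 - M)) atTop (𝓝 (S * (1 - M))) :=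
      (Continuous.matrix_mul continuous_id continuous_const).continuousAt.tendsto.comp htendM
    have h2 : ∀ N, P M N * (1 - M) = 1 - M ^ N := by
      intro N
      have := geom_sum_mul M N
      rw [P]
      linear_combination (norm := noncomm_ring) -this
    simp only [h2] at h1
    have h3 : Tendsto (fun N => (1 : Matrix (Fin n) (Fin n) ℝ) - M ^ N) atTop (𝓝 (1 - 0)) :=
      tendsto_const_nhds.sub hpow0
    rw [sub_zero] at h3
    exact tendsto_nhds_unique h1 h3
  refine ⟨S, fun i j => le_trans (P_nonneg hM 0 i j) (hle 0 i j), hle, key1, key2⟩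

lemma small {M : Matrix (Fin n) (Fin n) ℝ} {c : ℝ} (hM0 : ∀ i j, 0 ≤ M i j)
    (hc : 0 ≤ c) (hMc : ∀ i j, M i j ≤ c) (hnc : (n : ℝ) * c ≤ 1 / 2) :
    ∀ N i j, P M N i j ≤ 2 := by
  rcases Nat.eq_zero_or_pos n with hn | hn
  · subst hn; intro N i j; exact i.elim0
  have hc2 : c ≤ 1 / 2 := by
    calc c = 1 * c := (one_mul c).symm
    _ ≤ (n : ℝ) * c := by
      apply mul_le_mul_of_nonneg_right _ hc
      exact_mod_cast hn
    _ ≤ 1 / 2 := hnc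
  have hpow : ∀ (k : ℕ) i j, (M ^ (k + 1)) i j ≤ c * (1 / 2) ^ k := by
    intro k
    induction k with
    | zero => intro i j; simpa using hMc i j
    | succ k ih =>
      intro i j
      have : M ^ (k + 2) = M * M ^ (k + 1) := by
        rw [← pow_succ']
      rw [this, Matrix.mul_apply]
      calc ∑ l, M i l * (M ^ (k + 1)) l j
          ≤ ∑ _l : Fin n, c * (c * (1 / 2) ^ k) := by
            apply Finset.sum_le_sum
            intro l _
            exact mul_le_mul (hMc i l) (ih l j) (pow_nonneg' hM0 (k+1) l j) hc
        _ = (n : ℝ) * c * (c * (1 / 2) ^ k) := by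
            simp [Finset.sum_const, mul_assoc]
        _ ≤ (1 / 2) * (c * (1 / 2) ^ k) := by
            apply mul_le_mul_of_nonneg_right hnc
            positivity
        _ = c * (1 / 2) ^ (k + 1) := by ring
  intro N i j
  rcases Nat.eq_zero_or_pos N with hN | hN
  · subst hN; simp [P]
  obtain ⟨N', rfl⟩ := Nat.exists_eq_add_of_lt hN
  rw [zero_add] at *
  rw [P, Matrix.sum_apply, Finset.sum_range_succ']
  have h1 : (M ^ 0) i j ≤ 1 := by
    rw [pow_zero]
    by_cases h : i = j <;> simp [Matrix.one_apply, h]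
  have h2 : ∑ k ∈ Finset.range N', (M ^ (k + 1)) i j ≤ 1 := by
    calc ∑ k ∈ Finset.range N', (M ^ (k + 1)) i j
        ≤ ∑ k ∈ Finset.range N', c * (1 / 2) ^ k :=
          Finset.sum_le_sum fun k _ => hpow k i j
      _ = c * ∑ k ∈ Finset.range N', (1 / 2) ^ k := by rw [Finset.mul_sum]
      _ ≤ c * 2 := by
          apply mul_le_mul_of_nonneg_left _ hc
          exact sum_geometric_two_le N'
      _ ≤ 1 := by linarith
  linarith

lemma step {M : Matrix (Fin n) (Fin n) ℝ} (hM0 : ∀ i j, 0 ≤ M i j)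
    (hB : ∃ C, ∀ N i j, P M N i j ≤ C) :
    ∃ r : ℝ, 1 < r ∧ ∃ C, ∀ N i j, P (r • M) N i j ≤ C := by
  obtain ⟨C, hC⟩ := hB
  -- powers of M tend to zero entrywise
  have hbdd : ∀ i j, BddAbove (Set.range fun N => P M N i j) := fun i j =>
    ⟨C, by rintro x ⟨N, rfl⟩; exact hC N i j⟩
  have htend : ∀ i j, Tendsto (fun N => P M N i j) atTop (𝓝 (⨆ N, P M N i j)) := fun i j =>
    tendsto_atTop_ciSup (P_mono hM0 i j) (hbdd i j)
  have hpm : ∀ i j, Tendsto (fun N => (M ^ N) i j) atTop (𝓝 0) := by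
    intro i j
    have heq : ∀ N, (M ^ N) i j = P M (N + 1) i j - P M N i j := by
      intro N; simp [P, Matrix.sum_apply, Finset.sum_range_succ]
    simp only [heq]
    have h1 : Tendsto (fun N => P M (N + 1) i j) atTop (𝓝 (⨆ N, P M N i j)) :=
      (htend i j).comp (tendsto_add_atTop_nat 1)
    simpa using h1.sub (htend i j)
  set c : ℝ := 1 / (8 * ((n : ℝ) + 1)) with hc_def
  have hcpos : 0 < c := by positivity
  have hev : ∀ᶠ N in atTop, ∀ i j, (M ^ N) i j < c :=
    Filter.eventually_all.mpr fun i => Filter.eventually_all.mpr fun j =>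
      (hpm i j).eventually (gt_mem_nhds hcpos)
  obtain ⟨m, hmc, hm1⟩ := (hev.and (eventually_ge_atTop 1)).exists
  have hm0 : (m : ℝ) ≠ 0 := by positivity
  set r : ℝ := (2 : ℝ) ^ ((m : ℝ)⁻¹) with hr_def
  have hr1 : 1 < r := by
    rw [hr_def]
    apply Real.one_lt_rpow_iff_of_pos (by norm_num) |>.2
    exact Or.inl ⟨one_lt_two, by positivity⟩
  have hrm : r ^ m = 2 := by
    rw [hr_def, ← Real.rpow_natCast ((2:ℝ) ^ ((m : ℝ)⁻¹)) m, ← Real.rpow_mul (by norm_num),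
      inv_mul_cancel₀ hm0, Real.rpow_one]
  have hr0 : 0 ≤ r := le_of_lt (lt_trans one_pos hr1)
  have hrM0 : ∀ i j, 0 ≤ (r • M) i j := fun i j => by
    rw [Matrix.smul_apply, smul_eq_mul]; exact mul_nonneg hr0 (hM0 i j)
  set M' : Matrix (Fin n) (Fin n) ℝ := (r • M) ^ m with hM'_def
  have hM'0 : ∀ i j, 0 ≤ M' i j := pow_nonneg' hrM0 m
  have hM'c : ∀ i j, M' i j ≤ 2 * c := by
    intro i j
    rw [hM'_def, smul_pow, Matrix.smul_apply, smul_eq_mul, hrm]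
    exact mul_le_mul_of_nonneg_left (le_of_lt (hmc i j)) (by norm_num)
  have hsmall : ∀ N i j, P M' N i j ≤ 2 := by
    apply small hM'0 (by positivity) hM'c
    rw [hc_def]
    have hn0 : (0:ℝ) ≤ (n : ℝ) := Nat.cast_nonneg n
    have hpos : (0:ℝ) < 8 * ((n:ℝ) + 1) := by positivity
    rw [mul_one_div, ← mul_div_assoc, div_le_div_iff₀ hpos (by norm_num : (0:ℝ) < 2)]
    nlinarith
  set Y : Matrix (Fin n) (Fin n) ℝ := P (r • M) m with hY_def
  have hY0 : ∀ i j, 0 ≤ Y i j := P_nonneg hrM0 m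
  set K : ℝ := ∑ i, ∑ j, Y i j with hK_def
  have hK0 : 0 ≤ K := Finset.sum_nonneg fun i _ => Finset.sum_nonneg fun j _ => hY0 i j
  have hYK : ∀ i j, Y i j ≤ K := by
    intro i j
    calc Y i j ≤ ∑ j', Y i j' :=
          Finset.single_le_sum (fun j' _ => hY0 i j') (Finset.mem_univ j)
      _ ≤ K := Finset.single_le_sum (f := fun i' => ∑ j', Y i' j')
          (fun i' _ => Finset.sum_nonneg fun j' _ => hY0 i' j') (Finset.mem_univ i)
  refine ⟨r, hr1, (n : ℝ) * (2 * K), ?_⟩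
  intro N i j
  have key : P (r • M) N i j ≤ (P M' N * Y) i j := by
    rw [P, Matrix.sum_apply]
    have hterm : ∀ p, ((r • M) ^ p) i j = (M' ^ (p / m) * (r • M) ^ (p % m)) i j := by
      intro p
      conv_lhs => rw [← Nat.div_add_mod p m]
      rw [pow_add, pow_mul, ← hM'_def]
    simp only [hterm]
    have hinj : ∀ p ∈ Finset.range N, ∀ q ∈ Finset.range N,
        (fun p => (p / m, p % m)) p = (fun p => (p / m, p % m)) q → p = q := by
      intro p _ q _ h
      simp only [Prod.mk.injEq] at h
      rw [← Nat.div_add_mod p m, ← Nat.div_add_mod q m, h.1, h.2]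
    have heqimg : (∑ p ∈ Finset.range N, (M' ^ (p / m) * (r • M) ^ (p % m)) i j) =
        ∑ x ∈ (Finset.range N).image (fun p => (p / m, p % m)),
          (M' ^ x.1 * (r • M) ^ x.2) i j := (Finset.sum_image (f := fun x : ℕ × ℕ => (M' ^ x.1 * (r • M) ^ x.2) i j) hinj).symm
    rw [heqimg]
    have hsub : (Finset.range N).image (fun p => (p / m, p % m)) ⊆
        Finset.range N ×ˢ Finset.range m := by
      intro x hx
      obtain ⟨p, hp, rfl⟩ := Finset.mem_image.mp hx
      rw [Finset.mem_product, Finset.mem_range, Finset.mem_range] at *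
      exact ⟨lt_of_le_of_lt (Nat.div_le_self p m) hp, Nat.mod_lt p hm1⟩
    calc ∑ x ∈ (Finset.range N).image (fun p => (p / m, p % m)), (M' ^ x.1 * (r • M) ^ x.2) i j
        ≤ ∑ x ∈ Finset.range N ×ˢ Finset.range m, (M' ^ x.1 * (r • M) ^ x.2) i j :=
          Finset.sum_le_sum_of_subset_of_nonneg hsub fun x _ _ =>
            mul_nonneg' (pow_nonneg' hM'0 x.1) (pow_nonneg' hrM0 x.2) i j
      _ = (P M' N * Y) i j := by
          simp only [P, hY_def, Finset.sum_mul, Finset.mul_sum, Matrix.sum_apply,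
            Finset.sum_product]
          rw [Finset.sum_comm]
  refine le_trans key ?_
  rw [Matrix.mul_apply]
  calc ∑ l, P M' N i l * Y l j ≤ ∑ _l : Fin n, 2 * K := by
        apply Finset.sum_le_sum
        intro l _
        exact mul_le_mul (hsmall N i l) (hYK l j) (hY0 l j) (by norm_num)
    _ = (n : ℝ) * (2 * K) := by simp [Finset.sum_const, mul_assoc]

lemma smul_entry_nonneg {A : Matrix (Fin n) (Fin n) ℝ} (hA0 : ∀ i j, 0 ≤ A i j)
    {t : ℝ} (ht : 0 ≤ t) : ∀ i j, 0 ≤ (t • A) i j := by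
  intro i j
  rw [Matrix.smul_apply, smul_eq_mul]
  exact mul_nonneg ht (hA0 i j)

lemma down {A : Matrix (Fin n) (Fin n) ℝ} (hA0 : ∀ i j, 0 ≤ A i j) {t t' C : ℝ}
    (ht : 0 ≤ t) (htt' : t ≤ t')
    (h : ∀ N i j, P (t' • A) N i j ≤ C) : ∀ N i j, P (t • A) N i j ≤ C := by
  intro N i j
  refine le_trans ?_ (h N i j)
  simp only [P, Matrix.sum_apply]
  apply Finset.sum_le_sum
  intro k _
  simp only [smul_pow, Matrix.smul_apply, smul_eq_mul]
  exact mul_le_mul_of_nonneg_right (pow_le_pow_left₀ ht htt' k) (pow_nonneg' hA0 k i j)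

lemma inv_exists {A : Matrix (Fin n) (Fin n) ℝ} (hA0 : ∀ i j, 0 ≤ A i j)
    (hdet : ∀ t : ℝ, 0 < t → t ≤ 1 → ((1 : Matrix (Fin n) (Fin n) ℝ) - t • A).det ≠ 0) :
    ∃ S : Matrix (Fin n) (Fin n) ℝ, (∀ i j, 0 ≤ S i j) ∧
      (1 - A) * S = 1 ∧ S * (1 - A) = 1 := by
  set Bs : Set ℝ := {t | 0 ≤ t ∧ ∃ C, ∀ N i j, P (t • A) N i j ≤ C} with hBs
  have hdownB : ∀ t t' : ℝ, 0 ≤ t → t ≤ t' → t' ∈ Bs → t ∈ Bs := by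
    rintro t t' ht htt' ⟨-, C, hC⟩
    exact ⟨ht, C, down hA0 ht htt' hC⟩
  -- the base point δ
  set KA : ℝ := ∑ i, ∑ j, A i j with hKA_def
  have hKA0 : 0 ≤ KA := Finset.sum_nonneg fun i _ => Finset.sum_nonneg fun j _ => hA0 i j
  have hAK : ∀ i j, A i j ≤ KA := by
    intro i j
    calc A i j ≤ ∑ j', A i j' :=
          Finset.single_le_sum (fun j' _ => hA0 i j') (Finset.mem_univ j)
      _ ≤ KA := Finset.single_le_sum (f := fun i' => ∑ j', A i' j')
          (fun i' _ => Finset.sum_nonneg fun j' _ => hA0 i' j') (Finset.mem_univ i)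
  set δ : ℝ := 1 / (2 * ((n : ℝ) + 1) * (KA + 1)) with hδ_def
  have hδpos : 0 < δ := by positivity
  have hδB : δ ∈ Bs := by
    refine ⟨hδpos.le, 2, small (smul_entry_nonneg hA0 hδpos.le) (c := 1/(2*((n:ℝ)+1)))
      (by positivity) ?_ ?_⟩
    · intro i j
      rw [Matrix.smul_apply, smul_eq_mul, hδ_def]
      rw [div_mul_eq_mul_div, one_mul, div_le_div_iff₀ (by positivity) (by positivity)]
      have := hAK i j
      have h0 := hA0 i j
      nlinarith [Nat.cast_nonneg (α := ℝ) n]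
    · rw [mul_one_div, div_le_div_iff₀ (by positivity) (by norm_num : (0:ℝ) < 2)]
      nlinarith [Nat.cast_nonneg (α := ℝ) n]
  by_cases h1 : (1:ℝ) ∈ Bs
  · obtain ⟨-, C, hC⟩ := h1
    obtain ⟨S, hS0, -, hS1, hS2⟩ := geo hA0 ⟨C, by simpa [one_smul] using hC⟩
    exact ⟨S, hS0, hS1, hS2⟩
  exfalso
  set E : Set ℝ := Bs ∩ Set.Icc (0:ℝ) 1 with hE_def
  have hδ'E : min δ 1 ∈ E :=
    ⟨hdownB _ _ (le_min hδpos.le zero_le_one) (min_le_left _ _) hδB,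
      le_min hδpos.le zero_le_one, min_le_right _ _⟩
  have hEne : E.Nonempty := ⟨min δ 1, hδ'E⟩
  have hEbdd : BddAbove E := ⟨1, fun x hx => hx.2.2⟩
  set s : ℝ := sSup E with hs_def
  have hs1 : s ≤ 1 := csSup_le hEne fun x hx => hx.2.2
  have hsge : min δ 1 ≤ s := le_csSup hEbdd hδ'E
  have hspos : 0 < s := lt_of_lt_of_le (lt_min hδpos one_pos) hsge
  have hsnot : s ∉ Bs := by
    intro hs
    obtain ⟨r, hr1, C, hC⟩ := step (smul_entry_nonneg hA0 hspos.le) hs.2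
    have hrs : (r * s) ∈ Bs := ⟨by positivity, C, by simpa [smul_smul] using hC⟩
    have hmem : min (r * s) 1 ∈ E :=
      ⟨hdownB _ _ (le_min (by positivity) zero_le_one) (min_le_left _ _) hrs,
        le_min (by positivity) zero_le_one, min_le_right _ _⟩
    have hle := le_csSup hEbdd hmem
    rcases le_or_gt (r * s) 1 with h | h
    · rw [min_eq_left h] at hle
      nlinarith
    · rw [min_eq_right h.le] at hle
      exact h1 (hdownB 1 (r * s) zero_le_one h.le hrs)
  have hsub : ∀ t : ℝ, 0 ≤ t → t < s → t ∈ Bs := by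
    intro t ht hts
    obtain ⟨u, huE, htu⟩ := exists_lt_of_lt_csSup hEne hts
    exact hdownB t u ht htu.le huE.1
  have hgne : ∀ t ∈ Set.Icc (0:ℝ) s, ((1 : Matrix (Fin n) (Fin n) ℝ) - t • A).det ≠ 0 := by
    rintro t ⟨ht0, hts⟩
    rcases eq_or_lt_of_le ht0 with h0 | h0
    · rw [← h0]
      simp
    rcases eq_or_lt_of_le hts with hse | hlt
    · rw [hse]
      exact hdet s hspos hs1
    · obtain ⟨-, C, hC⟩ := hsub t ht0 hlt
      obtain ⟨S, -, -, hS1, -⟩ := geo (smul_entry_nonneg hA0 ht0) ⟨C, hC⟩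
      intro hd0
      have := congrArg Matrix.det hS1
      rw [Matrix.det_mul, hd0, zero_mul, Matrix.det_one] at this
      exact zero_ne_one this
  have hcont : Continuous fun t : ℝ => (1 : Matrix (Fin n) (Fin n) ℝ) - t • A :=
    continuous_const.sub (continuous_id.smul continuous_const)
  set f : ℝ → Matrix (Fin n) (Fin n) ℝ := fun t =>
    (((1 : Matrix (Fin n) (Fin n) ℝ) - t • A).det)⁻¹ •
      ((1 : Matrix (Fin n) (Fin n) ℝ) - t • A).adjugate with hf_def
  have hfco : ContinuousOn f (Set.Icc 0 s) :=
    (hcont.matrix_det.continuousOn.inv₀ hgne).smul hcont.matrix_adjugate.continuousOn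
  set φ : ℝ → ℝ := fun t => ∑ i, ∑ j, |f t i j| with hφ_def
  have hφco : ContinuousOn φ (Set.Icc 0 s) := by
    apply continuousOn_finset_sum
    intro i _
    apply continuousOn_finset_sum
    intro j _
    exact (((continuous_apply j).comp (continuous_apply i)).comp_continuousOn hfco).abs
  obtain ⟨t0, ht0mem, ht0max'⟩ := isCompact_Icc.exists_isMaxOn
    (Set.nonempty_Icc.mpr hspos.le) hφco
  rw [isMaxOn_iff] at ht0max'
  have ht0max : ∀ t ∈ Set.Icc (0:ℝ) s, φ t ≤ φ t0 := ht0max'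
  set C : ℝ := φ t0 with hC_def
  have hPb : ∀ t : ℝ, 0 ≤ t → t < s → ∀ N i j, P (t • A) N i j ≤ C := by
    intro t ht hts N i j
    obtain ⟨-, C', hC'⟩ := hsub t ht hts
    obtain ⟨S, hS0, hle, hS1, hS2⟩ := geo (smul_entry_nonneg hA0 ht) ⟨C', hC'⟩
    have hSf : S = f t := by
      have hinv : ((1 : Matrix (Fin n) (Fin n) ℝ) - t • A)⁻¹ = S := Matrix.inv_eq_right_inv hS1
      rw [← hinv, Matrix.inv_def, Ring.inverse_eq_inv']
    calc P (t • A) N i j ≤ S i j := hle N i j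
      _ = f t i j := by rw [hSf]
      _ ≤ |f t i j| := le_abs_self _
      _ ≤ ∑ j', |f t i j'| :=
          Finset.single_le_sum (f := fun j' => |f t i j'|)
            (fun j' _ => abs_nonneg _) (Finset.mem_univ j)
      _ ≤ φ t := Finset.single_le_sum (f := fun i' => ∑ j', |f t i' j'|)
          (fun i' _ => Finset.sum_nonneg fun j' _ => abs_nonneg _) (Finset.mem_univ i)
      _ ≤ C := ht0max t ⟨ht, hts.le⟩
  apply hsnot
  refine ⟨hspos.le, C, ?_⟩
  intro N i j
  set u : ℕ → ℝ := fun k => s - s / ((k : ℝ) + 1) with hu_def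
  have hu_lt : ∀ k, u k < s := by
    intro k
    have : 0 < s / ((k : ℝ) + 1) := by positivity
    simp only [hu_def]
    linarith
  have hu_0 : ∀ k, 0 ≤ u k := by
    intro k
    have : s / ((k : ℝ) + 1) ≤ s := by
      apply div_le_self hspos.le
      have : (0:ℝ) ≤ (k : ℝ) := Nat.cast_nonneg k
      linarith
    simp only [hu_def]
    linarith
  have hu_tend : Tendsto u atTop (𝓝 s) := by
    have h1 : Tendsto (fun k : ℕ => s / ((k : ℝ) + 1)) atTop (𝓝 0) := by
      apply Tendsto.div_atTop tendsto_const_nhds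
      exact tendsto_atTop_add_const_right atTop 1 tendsto_natCast_atTop_atTop
    simpa using tendsto_const_nhds.sub h1
  have hψ : Continuous fun t : ℝ => P (t • A) N i j := by
    simp only [P, Matrix.sum_apply, smul_pow, Matrix.smul_apply, smul_eq_mul]
    exact continuous_finset_sum _ fun k _ => (continuous_pow k).mul continuous_const
  have htt : Tendsto (fun k => P (u k • A) N i j) atTop (𝓝 (P (s • A) N i j)) :=
    (hψ.tendsto s).comp hu_tend
  exact le_of_tendsto htt (Filter.Eventually.of_forall fun k => hPb (u k) (hu_0 k) (hu_lt k) N i j)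

lemma det_ne {n : ℕ} {Γ : Matrix (Fin n) (Fin n) ℝ}
    (heig : ∀ μ : ℝ, (∃ v : Fin n → ℝ, v ≠ 0 ∧ Γ.mulVec v = μ • v) → μ < 2) :
    ∀ t : ℝ, 0 < t → t ≤ 1 →
      ((1 : Matrix (Fin n) (Fin n) ℝ) - t • ((2⁻¹ : ℝ) • Γ)).det ≠ 0 := by
  intro t ht ht1 hd
  obtain ⟨v, hv0, hv⟩ := Matrix.exists_mulVec_eq_zero_iff.mpr hd
  rw [smul_smul] at hv
  set c : ℝ := t * 2⁻¹ with hc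
  have hcpos : 0 < c := by positivity
  rw [Matrix.sub_mulVec, Matrix.one_mulVec, Matrix.smul_mulVec, sub_eq_zero] at hv
  have h2 : Γ.mulVec v = c⁻¹ • v := by
    rw [eq_inv_smul_iff₀ (ne_of_gt hcpos)]
    exact hv.symm
  have hlt := heig c⁻¹ ⟨v, hv0, h2⟩
  have hcc : c * c⁻¹ = 1 := mul_inv_cancel₀ (ne_of_gt hcpos)
  have hch : c ≤ 2⁻¹ := by rw [hc]; nlinarith
  nlinarith

end SSL

/-- Commuting nonnegative matrices `Γ, Δ` with `Γ + Δ` irreducible and all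
real eigenvalues of each strictly less than `2` admit a strictly subadditive labeling. -/
theorem strictly_subadditive_labeling_of_eigenvalues_lt_two
    (n : ℕ) (Γ Δ : Matrix (Fin n) (Fin n) ℝ)
    (hΓ0 : ∀ i j, 0 ≤ Γ i j) (hΔ0 : ∀ i j, 0 ≤ Δ i j)
    (hcomm : Γ * Δ = Δ * Γ)
    (hirr : ∀ i j, ∃ m : ℕ, 1 ≤ m ∧ 0 < ((Γ + Δ) ^ m) i j)
    (hΓeig : ∀ μ : ℝ, (∃ v : Fin n → ℝ, v ≠ 0 ∧ Γ.mulVec v = μ • v) → μ < 2)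
    (hΔeig : ∀ μ : ℝ, (∃ v : Fin n → ℝ, v ≠ 0 ∧ Δ.mulVec v = μ • v) → μ < 2) :
    ∃ ν : Fin n → ℝ, (∀ k, 0 < ν k) ∧
      ∀ k, (∑ i, Γ i k * ν i < 2 * ν k) ∧ (∑ j, Δ j k * ν j < 2 * ν k) := by
  classical
  set A : Matrix (Fin n) (Fin n) ℝ := (2⁻¹ : ℝ) • Γ with hA_def
  set B : Matrix (Fin n) (Fin n) ℝ := (2⁻¹ : ℝ) • Δ with hB_def
  have hA0 : ∀ i j, 0 ≤ A i j := SSL.smul_entry_nonneg hΓ0 (by norm_num)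
  have hB0 : ∀ i j, 0 ≤ B i j := SSL.smul_entry_nonneg hΔ0 (by norm_num)
  obtain ⟨S, hS0, hS1, hS2⟩ := SSL.inv_exists hA0 (SSL.det_ne hΓeig)
  obtain ⟨T, hT0, hT1, hT2⟩ := SSL.inv_exists hB0 (SSL.det_ne hΔeig)
  have hABcomm : A * B = B * A := by
    rw [hA_def, hB_def, Matrix.smul_mul, Matrix.mul_smul, hcomm, Matrix.smul_mul,
      Matrix.mul_smul]
  have hAB : (1 - A) * (1 - B) = (1 - B) * (1 - A) := by
    simp only [Matrix.sub_mul, Matrix.mul_sub, mul_one, one_mul, hABcomm]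
    abel
  have hTA : T * (1 - A) = (1 - A) * T := by
    calc T * (1 - A) = T * (1 - A) * ((1 - B) * T) := by rw [hT1, mul_one]
      _ = T * ((1 - A) * (1 - B)) * T := by rw [← mul_assoc, mul_assoc T (1 - A) (1 - B)]
      _ = T * ((1 - B) * (1 - A)) * T := by rw [hAB]
      _ = (T * (1 - B)) * (1 - A) * T := by rw [← mul_assoc]
      _ = (1 - A) * T := by rw [hT2, one_mul]
  have hSTA : S * T * (1 - A) = T := by
    calc S * T * (1 - A) = S * (T * (1 - A)) := mul_assoc S T (1 - A)
      _ = S * ((1 - A) * T) := by rw [hTA]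
      _ = (S * (1 - A)) * T := (mul_assoc S (1 - A) T).symm
      _ = T := by rw [hS2, one_mul]
  have hSTB : S * T * (1 - B) = S := by rw [mul_assoc, hT2, mul_one]
  have hS_eq : S = 1 + A * S := by
    have h := hS1
    rw [Matrix.sub_mul, one_mul] at h
    rw [← h]
    abel
  have hT_eq : T = 1 + B * T := by
    have h := hT1
    rw [Matrix.sub_mul, one_mul] at h
    rw [← h]
    abel
  have hSdiag : ∀ k, 1 ≤ S k k := by
    intro k
    rw [hS_eq]
    simp only [Matrix.add_apply, Matrix.one_apply_eq]
    have := SSL.mul_nonneg' hA0 hS0 k k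
    linarith
  have hTdiag : ∀ k, 1 ≤ T k k := by
    intro k
    rw [hT_eq]
    simp only [Matrix.add_apply, Matrix.one_apply_eq]
    have := SSL.mul_nonneg' hB0 hT0 k k
    linarith
  set ST : Matrix (Fin n) (Fin n) ℝ := S * T with hST_def
  have hST0 : ∀ i j, 0 ≤ ST i j := SSL.mul_nonneg' hS0 hT0
  have hSTdiag : ∀ k, 1 ≤ ST k k := by
    intro k
    rw [hST_def, Matrix.mul_apply]
    calc (1 : ℝ) = 1 * 1 := (one_mul 1).symm
      _ ≤ S k k * T k k := mul_le_mul (hSdiag k) (hTdiag k) zero_le_one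
          (le_trans zero_le_one (hSdiag k))
      _ ≤ ∑ l, S k l * T l k := Finset.single_le_sum
          (f := fun l => S k l * T l k)
          (fun l _ => mul_nonneg (hS0 k l) (hT0 l k)) (Finset.mem_univ k)
  have hswap : ∀ (M : Matrix (Fin n) (Fin n) ℝ) (k : Fin n),
      (∑ i, M i k * (∑ l, ST l i)) = ∑ l, (ST * M) l k := by
    intro M k
    simp only [Matrix.mul_apply, Finset.mul_sum, Finset.sum_mul]
    rw [Finset.sum_comm]
    apply Finset.sum_congr rfl
    intro l _
    apply Finset.sum_congr rfl
    intro i _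
    ring
  have hSTApart : ST * A = ST - T := by
    have h := hSTA
    rw [Matrix.mul_sub, mul_one] at h
    rw [← h]
    abel
  have hSTBpart : ST * B = ST - S := by
    have h := hSTB
    rw [Matrix.mul_sub, mul_one] at h
    rw [← h]
    abel
  refine ⟨fun k => ∑ i, ST i k, ?_, ?_⟩
  · intro k
    have h2 : ST k k ≤ ∑ i, ST i k := Finset.single_le_sum
      (f := fun i => ST i k) (fun i _ => hST0 i k) (Finset.mem_univ k)
    have := hSTdiag k
    linarith
  · intro k
    have hsumT : (1 : ℝ) ≤ ∑ l, T l k := le_trans (hTdiag k)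
      (Finset.single_le_sum (f := fun l => T l k) (fun l _ => hT0 l k) (Finset.mem_univ k))
    have hsumS : (1 : ℝ) ≤ ∑ l, S l k := le_trans (hSdiag k)
      (Finset.single_le_sum (f := fun l => S l k) (fun l _ => hS0 l k) (Finset.mem_univ k))
    constructor
    · rw [hswap Γ k]
      have hΓ2A : Γ = (2 : ℝ) • A := by
        rw [hA_def, smul_smul]
        norm_num
      have hSTΓ : ST * Γ = (2 : ℝ) • (ST - T) := by
        rw [hΓ2A, Matrix.mul_smul, hSTApart]
      rw [hSTΓ]
      simp only [Matrix.smul_apply, Matrix.sub_apply, smul_eq_mul, mul_sub]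
      rw [Finset.sum_sub_distrib, ← Finset.mul_sum, ← Finset.mul_sum]
      have h2T : (2 : ℝ) ≤ 2 * ∑ l, T l k := by linarith
      linarith
    · rw [hswap Δ k]
      have hΔ2B : Δ = (2 : ℝ) • B := by
        rw [hB_def, smul_smul]
        norm_num
      have hSTΔ : ST * Δ = (2 : ℝ) • (ST - S) := by
        rw [hΔ2B, Matrix.mul_smul, hSTBpart]
      rw [hSTΔ]
      simp only [Matrix.smul_apply, Matrix.sub_apply, smul_eq_mul, mul_sub]
      rw [Finset.sum_sub_distrib, ← Finset.mul_sum, ← Finset.mul_sum]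
      linarith
end

section
/- Let n ≥ 3 and let A be the Coxeter adjacency matrix of the Dynkin diagram D_n. Define v ∈ ℝⁿ by v_1 = v_2 = 1/2 and v_k = cos((k−2)π/(2n−2)) for k = 3,…,n. Then every entry of v is strictly positive and A v = 2cos(π/(2n−2)) · v. -/
private lemma deltaSum {n : ℕ} (a : Fin n) (v : Fin n → ℝ) :
    ∑ j, (if j = a then (1:ℝ) else 0) * v j = v a := by
  simp

private lemma deltaSum2 {n : ℕ} (a b : Fin n) (v : Fin n → ℝ) :
    ∑ j, ((if j = a then (1:ℝ) else 0) + (if j = b then 1 else 0)) * v j = v a + v b := by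
  simp [add_mul, Finset.sum_add_distrib]

private lemma deltaSum3 {n : ℕ} (a b c : Fin n) (v : Fin n → ℝ) :
    ∑ j, ((if j = a then (1:ℝ) else 0) + (if j = b then 1 else 0) + (if j = c then 1 else 0)) * v j
      = v a + v b + v c := by
  simp [add_mul, Finset.sum_add_distrib]

private lemma cosKey (a c : ℝ) :
    Real.cos ((a - 1) * c) + Real.cos ((a + 1) * c) = 2 * Real.cos c * Real.cos (a * c) := by
  rw [show (a - 1) * c = a * c - c by ring, show (a + 1) * c = a * c + c by ring,
    Real.cos_sub, Real.cos_add]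
  ring

/-- The Coxeter adjacency matrix of `D_n` (0-indexed: vertices `0` and `1`
each joined to vertex `2`, and vertices `2, 3, …, n-1` forming a path; 1-indexed this is
vertices `1, 2` joined to `3` and path `3 − 4 − ⋯ − n`) has dominant eigenvector `v` with
`v 0 = v 1 = 1/2` and `v k = cos((k−1)π/(2n−2))` for `k ≥ 2` (1-indexed:
`v_k = cos((k−2)π/(2n−2))` for `k ≥ 3`), all entries strictly positive, and eigenvalue
`2 cos(π/(2n−2))`. -/
theorem typeD_dominant_eigenvector
    (n : ℕ) (hn : 3 ≤ n)
    (A : Matrix (Fin n) (Fin n) ℝ)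
    (hA : ∀ i j : Fin n, A i j =
      if ((i : ℕ) = 0 ∧ (j : ℕ) = 2) ∨ ((i : ℕ) = 2 ∧ (j : ℕ) = 0) ∨
         ((i : ℕ) = 1 ∧ (j : ℕ) = 2) ∨ ((i : ℕ) = 2 ∧ (j : ℕ) = 1) then 1
      else if (2 ≤ (i : ℕ) ∧ (i : ℕ) + 1 = (j : ℕ)) ∨
              (2 ≤ (j : ℕ) ∧ (j : ℕ) + 1 = (i : ℕ)) then 1 else 0)
    (v : Fin n → ℝ)
    (hv01 : ∀ k : Fin n, (k : ℕ) = 0 ∨ (k : ℕ) = 1 → v k = 1 / 2)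
    (hv : ∀ k : Fin n, 2 ≤ (k : ℕ) →
      v k = Real.cos ((((k : ℕ) : ℝ) - 1) * Real.pi / (2 * (n : ℝ) - 2))) :
    (∀ k, 0 < v k) ∧ A.mulVec v = (2 * Real.cos (Real.pi / (2 * (n : ℝ) - 2))) • v := by
  have hn3 : (3:ℝ) ≤ (n:ℝ) := by exact_mod_cast hn
  have hD : (0:ℝ) < 2 * (n:ℝ) - 2 := by linarith
  set c : ℝ := Real.pi / (2 * (n:ℝ) - 2) with hc
  have hcpos : 0 < c := div_pos Real.pi_pos hD
  have hhalf : ((n:ℝ) - 1) * c = Real.pi / 2 := by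
    rw [hc, mul_div_assoc', div_eq_div_iff hD.ne' two_ne_zero]; ring
  have hvk : ∀ k : Fin n, 2 ≤ (k:ℕ) → v k = Real.cos ((((k:ℕ):ℝ) - 1) * c) := by
    intro k hk; rw [hv k hk, hc, mul_div_assoc]
  constructor
  · intro k
    by_cases hk : 2 ≤ (k:ℕ)
    · rw [hvk k hk]
      have hk2 : (2:ℝ) ≤ ((k:ℕ):ℝ) := by exact_mod_cast hk
      have hkn : ((k:ℕ):ℝ) < (n:ℝ) := by exact_mod_cast k.isLt
      apply Real.cos_pos_of_mem_Ioo
      constructor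
      · have h0 : 0 ≤ (((k:ℕ):ℝ) - 1) * c := mul_nonneg (by linarith) hcpos.le
        have := Real.pi_pos
        linarith
      · have h1 : (((k:ℕ):ℝ) - 1) * c < ((n:ℝ) - 1) * c :=
          mul_lt_mul_of_pos_right (by linarith) hcpos
        rw [hhalf] at h1; exact h1
    · rw [hv01 k (by omega)]; norm_num
  · funext i
    have hiv := i.isLt
    simp only [Matrix.mulVec, dotProduct, Pi.smul_apply, smul_eq_mul]
    by_cases h01 : (i:ℕ) = 0 ∨ (i:ℕ) = 1
    · -- rows 0 and 1 : single neighbour 2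
      have hrow : ∀ j : Fin n, A i j = (if j = (⟨2, by omega⟩ : Fin n) then (1:ℝ) else 0) := by
        intro j
        have hjv := j.isLt
        rw [hA]
        simp only [Fin.ext_iff]
        split_ifs <;> first | (exfalso; omega) | norm_num
      rw [Finset.sum_congr rfl fun j _ => by rw [hrow j], deltaSum,
        hvk _ (Nat.le_refl 2), hv01 i h01]
      norm_num
      ring
    · by_cases h2 : (i:ℕ) = 2
      · by_cases hn3' : n = 3
        · -- row 2 when n = 3 (it is also the last row)
          have hrow : ∀ j : Fin n, A i j =
              (if j = (⟨0, by omega⟩ : Fin n) then (1:ℝ) else 0) +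
              (if j = (⟨1, by omega⟩ : Fin n) then 1 else 0) := by
            intro j
            have hjv := j.isLt
            rw [hA]
            simp only [Fin.ext_iff]
            split_ifs <;> first | (exfalso; omega) | norm_num
          rw [Finset.sum_congr rfl fun j _ => by rw [hrow j], deltaSum2,
            hv01 _ (Or.inl rfl), hv01 _ (Or.inr rfl), hvk i (by omega), h2]
          have hncast : ((n:ℕ):ℝ) = 3 := by rw [hn3']; norm_num
          have h2c : (2:ℝ) * c = Real.pi / 2 := by
            rw [hc, hncast]; norm_num; ring
          have key := cosKey 1 c
          rw [show (1:ℝ) - 1 = 0 by norm_num, zero_mul, Real.cos_zero,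
            show ((1:ℝ) + 1) * c = Real.pi / 2 by rw [← h2c]; ring,
            Real.cos_pi_div_two] at key
          norm_num at key ⊢
          linarith
        · -- row 2 when n ≥ 4 : neighbours 0, 1, 3
          have hn4 : 4 ≤ n := by omega
          have hrow : ∀ j : Fin n, A i j =
              (if j = (⟨0, by omega⟩ : Fin n) then (1:ℝ) else 0) +
              (if j = (⟨1, by omega⟩ : Fin n) then 1 else 0) +
              (if j = (⟨3, by omega⟩ : Fin n) then 1 else 0) := by
            intro j
            have hjv := j.isLt
            rw [hA]
            simp only [Fin.ext_iff]
            split_ifs <;> first | (exfalso; omega) | norm_num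
          rw [Finset.sum_congr rfl fun j _ => by rw [hrow j], deltaSum3,
            hv01 _ (Or.inl rfl), hv01 _ (Or.inr rfl), hvk _ (by norm_num : 2 ≤ ((⟨3, by omega⟩ : Fin n) : ℕ)),
            hvk i (by omega), h2]
          norm_num
          rw [Real.cos_two_mul]
          ring
      · by_cases hlast : (i:ℕ) = n - 1
        · -- last row, n ≥ 4 : single neighbour n-2
          have hn4 : 4 ≤ n := by omega
          have hrow : ∀ j : Fin n, A i j =
              (if j = (⟨n - 2, by omega⟩ : Fin n) then (1:ℝ) else 0) := by
            intro j
            have hjv := j.isLt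
            rw [hA]
            simp only [Fin.ext_iff]
            split_ifs <;> first | (exfalso; omega) | norm_num
          rw [Finset.sum_congr rfl fun j _ => by rw [hrow j], deltaSum,
            hvk _ (by simp; omega), hvk i (by omega), hlast]
          have c1 : (((n - 2 : ℕ) : ℝ)) = (n:ℝ) - 2 := by
            push_cast [Nat.cast_sub (by omega : 2 ≤ n)]; ring
          have c2 : (((n - 1 : ℕ) : ℝ)) = (n:ℝ) - 1 := by
            push_cast [Nat.cast_sub (by omega : 1 ≤ n)]; ring
          rw [c1, c2]
          have key := cosKey ((n:ℝ) - 2) c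
          rw [show ((n:ℝ) - 2 + 1) * c = Real.pi / 2 by rw [← hhalf]; ring,
            Real.cos_pi_div_two, add_zero] at key
          rw [show ((n:ℝ) - 1 - 1) = (n:ℝ) - 2 by ring]
          exact key
        · -- middle row : neighbours i-1 and i+1
          have h3 : 3 ≤ (i:ℕ) := by omega
          have hle : (i:ℕ) + 1 < n := by omega
          have hrow : ∀ j : Fin n, A i j =
              (if j = (⟨(i:ℕ) - 1, by omega⟩ : Fin n) then (1:ℝ) else 0) +
              (if j = (⟨(i:ℕ) + 1, by omega⟩ : Fin n) then 1 else 0) := by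
            intro j
            have hjv := j.isLt
            rw [hA]
            simp only [Fin.ext_iff]
            split_ifs <;> first | (exfalso; omega) | norm_num
          rw [Finset.sum_congr rfl fun j _ => by rw [hrow j], deltaSum2,
            hvk _ (by simp; omega), hvk _ (by simp; omega), hvk i (by omega)]
          have c1 : (((i:ℕ) - 1 : ℕ) : ℝ) = ((i:ℕ):ℝ) - 1 := by
            push_cast [Nat.cast_sub (by omega : 1 ≤ (i:ℕ))]; ring
          have c2 : (((i:ℕ) + 1 : ℕ) : ℝ) = ((i:ℕ):ℝ) + 1 := by push_cast; ring
          rw [c1, c2,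
            show (((i:ℕ):ℝ) - 1 - 1) * c = ((((i:ℕ):ℝ) - 1) - 1) * c from rfl,
            show (((i:ℕ):ℝ) + 1 - 1) * c = ((((i:ℕ):ℝ) - 1) + 1) * c by ring,
            cosKey]
end

section
/- Let (n, h) be one of (6, 12), (7, 18), (8, 30), let A be the Coxeter adjacency matrix of the Dynkin diagram E_n, and set θ = π/h. Define v ∈ ℝⁿ by v_1 = sin θ / sin 3θ, v_2 = sin θ / sin 2θ, v_3 = sin 2θ / sin 3θ, v_4 = 1, and v_k = sin((n+1−k)θ) / sin((n−3)θ) for k = 5,…,n. Then every entry of v is strictly positive and A v = 2cos(π/h) · v. -/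
private lemma typeE_aux_r1 (s c : ℝ) (hs : s ≠ 0) (hc : c ≠ 0) :
    1 = 2*c*(s/(2*s*c)) := by
  field_simp

private lemma typeE_aux_r2 (s c : ℝ) (h3 : 3*s-4*s^3 ≠ 0) (P : s^2+c^2 = 1) :
    s/(3*s-4*s^3) + 1 = 2*c*(2*s*c/(3*s-4*s^3)) := by
  field_simp
  grind

private lemma typeE_aux_r2b (s c : ℝ) (h3 : 3*s-4*s^3 ≠ 0) (P : s^2+c^2 = 1) :
    1 + s/(3*s-4*s^3) = 2*c*(2*s*c/(3*s-4*s^3)) := by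
  field_simp
  grind

private lemma typeE_aux_chain3 (s c : ℝ) (h4 : 2*(2*s*c)*(2*c^2-1) ≠ 0) (P : s^2+c^2 = 1) :
    1 + 2*s*c/(2*(2*s*c)*(2*c^2-1)) = 2*c*((3*s-4*s^3)/(2*(2*s*c)*(2*c^2-1))) := by
  field_simp
  grind

private lemma typeE_aux_n7r5 (s c : ℝ) (h4 : 2*(2*s*c)*(2*c^2-1) ≠ 0) (P : s^2+c^2 = 1) :
    (3*s-4*s^3)/(2*(2*s*c)*(2*c^2-1)) + s/(2*(2*s*c)*(2*c^2-1))
      = 2*c*(2*s*c/(2*(2*s*c)*(2*c^2-1))) := by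
  have hs' : s ≠ 0 := fun h => h4 (by rw [h]; ring)
  have hc' : c ≠ 0 := fun h => h4 (by rw [h]; ring)
  have h2' : 2*c^2-1 ≠ 0 := fun h => h4 (by linear_combination (4*s*c)*h)
  field_simp
  grind

private lemma typeE_aux_n8r4 (s c : ℝ)
    (h5 : 2*s*c*(4*c^3-3*c)+(2*c^2-1)*(3*s-4*s^3) ≠ 0) (P : s^2+c^2 = 1) :
    1 + (3*s-4*s^3)/(2*s*c*(4*c^3-3*c)+(2*c^2-1)*(3*s-4*s^3))
      = 2*c*((2*(2*s*c)*(2*c^2-1))/(2*s*c*(4*c^3-3*c)+(2*c^2-1)*(3*s-4*s^3))) := by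
  field_simp
  grind

private lemma typeE_aux_n8r5 (s c : ℝ)
    (h5 : 2*s*c*(4*c^3-3*c)+(2*c^2-1)*(3*s-4*s^3) ≠ 0) (P : s^2+c^2 = 1) :
    (2*(2*s*c)*(2*c^2-1))/(2*s*c*(4*c^3-3*c)+(2*c^2-1)*(3*s-4*s^3))
      + 2*s*c/(2*s*c*(4*c^3-3*c)+(2*c^2-1)*(3*s-4*s^3))
      = 2*c*((3*s-4*s^3)/(2*s*c*(4*c^3-3*c)+(2*c^2-1)*(3*s-4*s^3))) := by
  field_simp
  grind

private lemma typeE_aux_n8r6 (s c : ℝ)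
    (h5 : 2*s*c*(4*c^3-3*c)+(2*c^2-1)*(3*s-4*s^3) ≠ 0) (P : s^2+c^2 = 1) :
    (3*s-4*s^3)/(2*s*c*(4*c^3-3*c)+(2*c^2-1)*(3*s-4*s^3))
      + s/(2*s*c*(4*c^3-3*c)+(2*c^2-1)*(3*s-4*s^3))
      = 2*c*(2*s*c/(2*s*c*(4*c^3-3*c)+(2*c^2-1)*(3*s-4*s^3))) := by
  field_simp
  grind

private lemma typeE_aux_branch6 (s c : ℝ) (hs : s ≠ 0) (hc : c ≠ 0) (h3 : 3*s-4*s^3 ≠ 0)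
    (P : s^2+c^2 = 1) (M : 16*c^4-16*c^2+1 = 0) :
    s/(2*s*c) + 2*s*c/(3*s-4*s^3) + 2*s*c/(3*s-4*s^3) = 2*c := by
  field_simp
  grind

private lemma typeE_aux_branch7 (s c : ℝ) (hs : s ≠ 0) (hc : c ≠ 0) (h3 : 3*s-4*s^3 ≠ 0)
    (h4 : 2*(2*s*c)*(2*c^2-1) ≠ 0)
    (P : s^2+c^2 = 1) (M : 64*c^6-96*c^4+36*c^2-3 = 0) :
    s/(2*s*c) + 2*s*c/(3*s-4*s^3) + (3*s-4*s^3)/(2*(2*s*c)*(2*c^2-1)) = 2*c := by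
  have hs' : s ≠ 0 := fun h => h4 (by rw [h]; ring)
  have hc' : c ≠ 0 := fun h => h4 (by rw [h]; ring)
  have h2' : 2*c^2-1 ≠ 0 := fun h => h4 (by linear_combination (4*s*c)*h)
  have h3' : 3 - s^2*4 ≠ 0 := fun h => h3 (by linear_combination s*h)
  field_simp
  grind

private lemma typeE_aux_branch8 (s c : ℝ) (hs : s ≠ 0) (hc : c ≠ 0) (h3 : 3*s-4*s^3 ≠ 0)
    (h5 : 2*s*c*(4*c^3-3*c)+(2*c^2-1)*(3*s-4*s^3) ≠ 0)
    (P : s^2+c^2 = 1) (M : 256*c^8-448*c^6+224*c^4-32*c^2+1 = 0) :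
    s/(2*s*c) + 2*s*c/(3*s-4*s^3)
      + (2*(2*s*c)*(2*c^2-1))/(2*s*c*(4*c^3-3*c)+(2*c^2-1)*(3*s-4*s^3)) = 2*c := by
  have h3' : 3 - s^2*4 ≠ 0 := fun h => h3 (by linear_combination s*h)
  have h5' : 2*c^2*(c^2*4-3)+(3-s^2*4)*(2*c^2-1) ≠ 0 := fun h => h5 (by linear_combination s*h)
  field_simp
  rw [show s^2 = 1 - c^2 by linarith]
  linear_combination (-1)*M

private lemma typeE_aux_M30 (s c : ℝ) (P : s^2+c^2 = 1)
    (h : 4*((2*c^2-1)*(4*c^3-3*c)-2*s*c*(3*s-4*s^3))^3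
        - 3*((2*c^2-1)*(4*c^3-3*c)-2*s*c*(3*s-4*s^3)) = 0)
    (h1 : c ≠ 0) (h2 : 4*c^2-3 ≠ 0) (h3 : 16*c^4-20*c^2+5 ≠ 0) :
    256*c^8-448*c^6+224*c^4-32*c^2+1 = 0 := by
  have hfac : c*((4*c^2-3)*((16*c^4-20*c^2+5)*(256*c^8-448*c^6+224*c^4-32*c^2+1))) = 0 := by
    linear_combination h + (6*c - 416*c^3 + 4528*c^5 - 19808*c^7 + 40832*c^9 - 39424*c^11
      + 14336*c^13 + 24*s^2*c - 1040*s^2*c^3 + 7808*s^2*c^5 - 22656*s^2*c^7 + 29696*s^2*c^9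
      - 14336*s^2*c^11 + 1120*s^4*c^3 - 1152*s^4*c^5 - 6144*s^4*c^7 + 8192*s^4*c^9
      - 3200*s^6*c^3 + 7168*s^6*c^5 - 8192*s^6*c^7 + 2560*s^8*c^3 + 2048*s^8*c^5
      - 2048*s^10*c^3)*P
  rcases mul_eq_zero.1 hfac with h'|hfac; · exact absurd h' h1
  rcases mul_eq_zero.1 hfac with h'|hfac; · exact absurd h' h2
  rcases mul_eq_zero.1 hfac with h'|hfac; · exact absurd h' h3
  exact hfac

private lemma typeE_aux_cb (θ c : ℝ) (h1 : 1 - θ^2/2 ≤ c) (h2 : 0 < θ) (h3 : θ ≤ 0.105) :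
    (0.994:ℝ) < c := by nlinarith

private lemma typeE_aux_ineq30 (c : ℝ) (h : (0.994:ℝ) < c) (h0 : 0 < c) :
    4*c^2-3 ≠ 0 ∧ 16*c^4-20*c^2+5 ≠ 0 := by
  have hc2 : (0.988:ℝ) < c^2 := by nlinarith
  constructor
  · nlinarith
  · nlinarith [hc2, sq_nonneg (c^2-1)]

set_option maxHeartbeats 1600000 in


/-- For `(n, h) ∈ {(6,12), (7,18), (8,30)}`, the Coxeter adjacency matrix
of `E_n` (0-indexed: vertex `1` joined to vertex `3`, remaining vertices forming the path
`0 − 2 − 3 − 4 − ⋯ − (n-1)`; 1-indexed: vertex `2` joined to `4`, path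
`1 − 3 − 4 − 5 − ⋯ − n`) has dominant eigenvector `v` given (with `θ = π/h`) by
`v 0 = sin θ / sin 3θ`, `v 1 = sin θ / sin 2θ`, `v 2 = sin 2θ / sin 3θ`, `v 3 = 1`, and
`v k = sin((n−k)θ)/sin((n−3)θ)` for `k ≥ 4` (1-indexed: `v_k = sin((n+1−k)θ)/sin((n−3)θ)`
for `k ≥ 5`), all entries strictly positive, with eigenvalue `2 cos(π/h)`. -/
theorem typeE_dominant_eigenvector
    (n h : ℕ)
    (hnh : (n = 6 ∧ h = 12) ∨ (n = 7 ∧ h = 18) ∨ (n = 8 ∧ h = 30))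
    (A : Matrix (Fin n) (Fin n) ℝ)
    (hA : ∀ i j : Fin n, A i j =
      if ((i : ℕ) = 0 ∧ (j : ℕ) = 2) ∨ ((i : ℕ) = 2 ∧ (j : ℕ) = 0) ∨
         ((i : ℕ) = 1 ∧ (j : ℕ) = 3) ∨ ((i : ℕ) = 3 ∧ (j : ℕ) = 1) ∨
         ((i : ℕ) = 2 ∧ (j : ℕ) = 3) ∨ ((i : ℕ) = 3 ∧ (j : ℕ) = 2) then 1
      else if (3 ≤ (i : ℕ) ∧ (i : ℕ) + 1 = (j : ℕ)) ∨
              (3 ≤ (j : ℕ) ∧ (j : ℕ) + 1 = (i : ℕ)) then 1 else 0)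
    (θ : ℝ) (hθ : θ = Real.pi / (h : ℝ))
    (v : Fin n → ℝ)
    (hv0 : ∀ k : Fin n, (k : ℕ) = 0 → v k = Real.sin θ / Real.sin (3 * θ))
    (hv1 : ∀ k : Fin n, (k : ℕ) = 1 → v k = Real.sin θ / Real.sin (2 * θ))
    (hv2 : ∀ k : Fin n, (k : ℕ) = 2 → v k = Real.sin (2 * θ) / Real.sin (3 * θ))
    (hv3 : ∀ k : Fin n, (k : ℕ) = 3 → v k = 1)
    (hv4 : ∀ k : Fin n, 4 ≤ (k : ℕ) →
      v k = Real.sin (((n : ℝ) - ((k : ℕ) : ℝ)) * θ) / Real.sin (((n : ℝ) - 3) * θ)) :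
    (∀ k, 0 < v k) ∧ A.mulVec v = (2 * Real.cos (Real.pi / (h : ℝ))) • v := by
  obtain ⟨hn, hh⟩ | ⟨hn, hh⟩ | ⟨hn, hh⟩ := hnh
  · subst hn; subst hh
    have hπ := Real.pi_pos
    have hπ' : Real.pi < 3.15 := Real.pi_lt_d2
    have hθ' : θ = Real.pi / 12 := by rw [hθ]; norm_num
    have hθp : 0 < θ := by rw [hθ']; linarith
    have hθb : θ ≤ 0.2625 := by rw [hθ']; linarith
    have C1 : 0 < Real.cos θ :=
      Real.cos_pos_of_mem_Ioo ⟨by rw [hθ']; linarith, by rw [hθ']; linarith⟩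
    have S1 : 0 < Real.sin θ :=
      Real.sin_pos_of_pos_of_lt_pi (by rw [hθ']; linarith) (by rw [hθ']; linarith)
    have S2 : 0 < Real.sin (2*θ) :=
      Real.sin_pos_of_pos_of_lt_pi (by rw [hθ']; linarith) (by rw [hθ']; linarith)
    have S3 : 0 < Real.sin (3*θ) :=
      Real.sin_pos_of_pos_of_lt_pi (by rw [hθ']; linarith) (by rw [hθ']; linarith)
    have P : Real.sin θ^2 + Real.cos θ^2 = 1 := Real.sin_sq_add_cos_sq θ
    have E2 : Real.sin (2*θ) = 2*Real.sin θ*Real.cos θ := Real.sin_two_mul θ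
    have E3 : Real.sin (3*θ) = 3*Real.sin θ - 4*Real.sin θ^3 := Real.sin_three_mul θ
    have hclb : 1 - θ^2/2 ≤ Real.cos θ := Real.one_sub_sq_div_two_le_cos
    have hcb : (0.96:ℝ) < Real.cos θ := by nlinarith
    have h6 : Real.cos (2*(3*θ)) = 0 := by
      rw [hθ', show 2*(3*(Real.pi/12)) = Real.pi/2 by ring]; exact Real.cos_pi_div_two
    rw [Real.cos_two_mul, Real.cos_three_mul] at h6
    have M : 16*Real.cos θ^4 - 16*Real.cos θ^2 + 1 = 0 := by
      have hne : 2*Real.cos θ^2 - 1 ≠ 0 := by nlinarith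
      have hfac : (2*Real.cos θ^2-1)*(16*Real.cos θ^4-16*Real.cos θ^2+1) = 0 := by
        linear_combination h6
      exact (mul_eq_zero.1 hfac).resolve_left hne
    have hD3 : 3*Real.sin θ - 4*Real.sin θ^3 ≠ 0 := by rw [← E3]; exact S3.ne'
    have V0 : v 0 = Real.sin θ / Real.sin (3*θ) := hv0 0 rfl
    have V1 : v 1 = Real.sin θ / Real.sin (2*θ) := hv1 1 rfl
    have V2 : v 2 = Real.sin (2*θ) / Real.sin (3*θ) := hv2 2 rfl
    have V3 : v 3 = 1 := hv3 3 rfl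
    have V4 : v 4 = Real.sin (2*θ) / Real.sin (3*θ) := by
      rw [hv4 4 (by decide)]; norm_num [show ((4:Fin 6):ℕ) = 4 from rfl]
    have V5 : v 5 = Real.sin θ / Real.sin (3*θ) := by
      rw [hv4 5 (by decide)]; norm_num [show ((5:Fin 6):ℕ) = 5 from rfl]
    constructor
    · intro k; fin_cases k
      · show 0 < v 0; rw [V0]; exact div_pos S1 S3
      · show 0 < v 1; rw [V1]; exact div_pos S1 S2
      · show 0 < v 2; rw [V2]; exact div_pos S2 S3
      · show 0 < v 3; rw [V3]; norm_num
      · show 0 < v 4; rw [V4]; exact div_pos S2 S3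
      · show 0 < v 5; rw [V5]; exact div_pos S1 S3
    · rw [← hθ]
      funext i
      fin_cases i <;>
        simp only [Matrix.mulVec, dotProduct, hA, Fin.sum_univ_six, Pi.smul_apply,
          smul_eq_mul] <;>
        norm_num [show ((0:Fin 6):ℕ)=0 from rfl, show ((1:Fin 6):ℕ)=1 from rfl,
          show ((2:Fin 6):ℕ)=2 from rfl, show ((3:Fin 6):ℕ)=3 from rfl,
          show ((4:Fin 6):ℕ)=4 from rfl, show ((5:Fin 6):ℕ)=5 from rfl]
      · show v 2 = 2*Real.cos θ * v 0
        rw [V2, V0, E2]; ring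
      · show v 3 = 2*Real.cos θ * v 1
        rw [V3, V1, E2]; exact typeE_aux_r1 _ _ S1.ne' C1.ne'
      · show v 0 + v 3 = 2*Real.cos θ * v 2
        rw [V0, V3, V2, E2, E3]; exact typeE_aux_r2 _ _ hD3 P
      · show v 1 + v 2 + v 4 = 2*Real.cos θ * v 3
        rw [V1, V2, V4, V3, mul_one, E2, E3]
        exact typeE_aux_branch6 _ _ S1.ne' C1.ne' hD3 P M
      · show v 3 + v 5 = 2*Real.cos θ * v 4
        rw [V3, V5, V4, E2, E3]; exact typeE_aux_r2b _ _ hD3 P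
      · show v 4 = 2*Real.cos θ * v 5
        rw [V4, V5, E2]; ring
  · subst hn; subst hh
    have hπ := Real.pi_pos
    have hπ' : Real.pi < 3.15 := Real.pi_lt_d2
    have hθ' : θ = Real.pi / 18 := by rw [hθ]; norm_num
    have hθp : 0 < θ := by rw [hθ']; linarith
    have hθb : θ ≤ 0.175 := by rw [hθ']; linarith
    have C1 : 0 < Real.cos θ :=
      Real.cos_pos_of_mem_Ioo ⟨by rw [hθ']; linarith, by rw [hθ']; linarith⟩
    have S1 : 0 < Real.sin θ :=
      Real.sin_pos_of_pos_of_lt_pi (by rw [hθ']; linarith) (by rw [hθ']; linarith)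
    have S2 : 0 < Real.sin (2*θ) :=
      Real.sin_pos_of_pos_of_lt_pi (by rw [hθ']; linarith) (by rw [hθ']; linarith)
    have S3 : 0 < Real.sin (3*θ) :=
      Real.sin_pos_of_pos_of_lt_pi (by rw [hθ']; linarith) (by rw [hθ']; linarith)
    have S4 : 0 < Real.sin (4*θ) :=
      Real.sin_pos_of_pos_of_lt_pi (by rw [hθ']; linarith) (by rw [hθ']; linarith)
    have P : Real.sin θ^2 + Real.cos θ^2 = 1 := Real.sin_sq_add_cos_sq θ
    have E2 : Real.sin (2*θ) = 2*Real.sin θ*Real.cos θ := Real.sin_two_mul θ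
    have E3 : Real.sin (3*θ) = 3*Real.sin θ - 4*Real.sin θ^3 := Real.sin_three_mul θ
    have E4 : Real.sin (4*θ) = 2*(2*Real.sin θ*Real.cos θ)*(2*Real.cos θ^2-1) := by
      rw [show (4:ℝ)*θ = 2*(2*θ) by ring, Real.sin_two_mul, Real.sin_two_mul,
        Real.cos_two_mul]
    have hclb : 1 - θ^2/2 ≤ Real.cos θ := Real.one_sub_sq_div_two_le_cos
    have hcb : (0.984:ℝ) < Real.cos θ := by nlinarith
    have h9 : Real.cos (3*(3*θ)) = 0 := by
      rw [hθ', show 3*(3*(Real.pi/18)) = Real.pi/2 by ring]; exact Real.cos_pi_div_two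
    rw [Real.cos_three_mul, Real.cos_three_mul] at h9
    have M : 64*Real.cos θ^6 - 96*Real.cos θ^4 + 36*Real.cos θ^2 - 3 = 0 := by
      have h2ne : 4*Real.cos θ^2 - 3 ≠ 0 := by nlinarith
      have hfac : Real.cos θ*((4*Real.cos θ^2-3)*(64*Real.cos θ^6 - 96*Real.cos θ^4
          + 36*Real.cos θ^2 - 3)) = 0 := by linear_combination h9
      rcases mul_eq_zero.1 hfac with h'|hfac
      · exact absurd h' C1.ne'
      rcases mul_eq_zero.1 hfac with h'|hfac
      · exact absurd h' h2ne
      exact hfac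
    have hD3 : 3*Real.sin θ - 4*Real.sin θ^3 ≠ 0 := by rw [← E3]; exact S3.ne'
    have hS4 : 2*(2*Real.sin θ*Real.cos θ)*(2*Real.cos θ^2-1) ≠ 0 := by
      rw [← E4]; exact S4.ne'
    have V0 : v 0 = Real.sin θ / Real.sin (3*θ) := hv0 0 rfl
    have V1 : v 1 = Real.sin θ / Real.sin (2*θ) := hv1 1 rfl
    have V2 : v 2 = Real.sin (2*θ) / Real.sin (3*θ) := hv2 2 rfl
    have V3 : v 3 = 1 := hv3 3 rfl
    have V4 : v 4 = Real.sin (3*θ) / Real.sin (4*θ) := by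
      rw [hv4 4 (by decide)]; norm_num [show ((4:Fin 7):ℕ) = 4 from rfl]
    have V5 : v 5 = Real.sin (2*θ) / Real.sin (4*θ) := by
      rw [hv4 5 (by decide)]; norm_num [show ((5:Fin 7):ℕ) = 5 from rfl]
    have V6 : v 6 = Real.sin θ / Real.sin (4*θ) := by
      rw [hv4 6 (by decide)]; norm_num [show ((6:Fin 7):ℕ) = 6 from rfl]
    constructor
    · intro k; fin_cases k
      · show 0 < v 0; rw [V0]; exact div_pos S1 S3
      · show 0 < v 1; rw [V1]; exact div_pos S1 S2
      · show 0 < v 2; rw [V2]; exact div_pos S2 S3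
      · show 0 < v 3; rw [V3]; norm_num
      · show 0 < v 4; rw [V4]; exact div_pos S3 S4
      · show 0 < v 5; rw [V5]; exact div_pos S2 S4
      · show 0 < v 6; rw [V6]; exact div_pos S1 S4
    · rw [← hθ]
      funext i
      fin_cases i <;>
        simp only [Matrix.mulVec, dotProduct, hA, Fin.sum_univ_seven, Pi.smul_apply,
          smul_eq_mul] <;>
        norm_num [show ((0:Fin 7):ℕ)=0 from rfl, show ((1:Fin 7):ℕ)=1 from rfl,
          show ((2:Fin 7):ℕ)=2 from rfl, show ((3:Fin 7):ℕ)=3 from rfl,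
          show ((4:Fin 7):ℕ)=4 from rfl, show ((5:Fin 7):ℕ)=5 from rfl,
          show ((6:Fin 7):ℕ)=6 from rfl]
      · show v 2 = 2*Real.cos θ * v 0
        rw [V2, V0, E2]; ring
      · show v 3 = 2*Real.cos θ * v 1
        rw [V3, V1, E2]; exact typeE_aux_r1 _ _ S1.ne' C1.ne'
      · show v 0 + v 3 = 2*Real.cos θ * v 2
        rw [V0, V3, V2, E2, E3]; exact typeE_aux_r2 _ _ hD3 P
      · show v 1 + v 2 + v 4 = 2*Real.cos θ * v 3
        rw [V1, V2, V4, V3, mul_one, E2, E3, E4]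
        exact typeE_aux_branch7 _ _ S1.ne' C1.ne' hD3 hS4 P M
      · show v 3 + v 5 = 2*Real.cos θ * v 4
        rw [V3, V5, V4, E2, E3, E4]; exact typeE_aux_chain3 _ _ hS4 P
      · show v 4 + v 6 = 2*Real.cos θ * v 5
        rw [V4, V6, V5, E2, E3, E4]; exact typeE_aux_n7r5 _ _ hS4 P
      · show v 5 = 2*Real.cos θ * v 6
        rw [V5, V6, E2]; ring
  · subst hn; subst hh
    have hπ := Real.pi_pos
    have hπ' : Real.pi < 3.15 := Real.pi_lt_d2
    have hθ' : θ = Real.pi / 30 := by rw [hθ]; norm_num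
    have hθp : 0 < θ := by rw [hθ']; linarith
    have hθb : θ ≤ 0.105 := by rw [hθ']; linarith
    have C1 : 0 < Real.cos θ :=
      Real.cos_pos_of_mem_Ioo ⟨by rw [hθ']; linarith, by rw [hθ']; linarith⟩
    have S1 : 0 < Real.sin θ :=
      Real.sin_pos_of_pos_of_lt_pi (by rw [hθ']; linarith) (by rw [hθ']; linarith)
    have S2 : 0 < Real.sin (2*θ) :=
      Real.sin_pos_of_pos_of_lt_pi (by rw [hθ']; linarith) (by rw [hθ']; linarith)
    have S3 : 0 < Real.sin (3*θ) :=
      Real.sin_pos_of_pos_of_lt_pi (by rw [hθ']; linarith) (by rw [hθ']; linarith)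
    have S4 : 0 < Real.sin (4*θ) :=
      Real.sin_pos_of_pos_of_lt_pi (by rw [hθ']; linarith) (by rw [hθ']; linarith)
    have S5 : 0 < Real.sin (5*θ) :=
      Real.sin_pos_of_pos_of_lt_pi (by rw [hθ']; linarith) (by rw [hθ']; linarith)
    have P : Real.sin θ^2 + Real.cos θ^2 = 1 := Real.sin_sq_add_cos_sq θ
    have E2 : Real.sin (2*θ) = 2*Real.sin θ*Real.cos θ := Real.sin_two_mul θ
    have E3 : Real.sin (3*θ) = 3*Real.sin θ - 4*Real.sin θ^3 := Real.sin_three_mul θ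
    have hclb : 1 - θ^2/2 ≤ Real.cos θ := Real.one_sub_sq_div_two_le_cos
    have hcb : (0.994:ℝ) < Real.cos θ := typeE_aux_cb θ _ hclb hθp hθb
    obtain ⟨hne1, hne2⟩ := typeE_aux_ineq30 _ hcb C1
    have E4 : Real.sin (4*θ) = 2*(2*Real.sin θ*Real.cos θ)*(2*Real.cos θ^2-1) := by
      rw [show (4:ℝ)*θ = 2*(2*θ) by ring, Real.sin_two_mul, Real.sin_two_mul,
        Real.cos_two_mul]
    have E5 : Real.sin (5*θ) = 2*Real.sin θ*Real.cos θ*(4*Real.cos θ^3-3*Real.cos θ)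
        + (2*Real.cos θ^2-1)*(3*Real.sin θ-4*Real.sin θ^3) := by
      rw [show (5:ℝ)*θ = 2*θ+3*θ by ring, Real.sin_add, Real.sin_two_mul,
        Real.cos_two_mul, Real.sin_three_mul, Real.cos_three_mul]
    have E5c : Real.cos (5*θ) = (2*Real.cos θ^2-1)*(4*Real.cos θ^3-3*Real.cos θ)
        - 2*Real.sin θ*Real.cos θ*(3*Real.sin θ-4*Real.sin θ^3) := by
      rw [show (5:ℝ)*θ = 2*θ+3*θ by ring, Real.cos_add, Real.cos_two_mul,
        Real.cos_three_mul, Real.sin_two_mul, Real.sin_three_mul]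
    have h15 : Real.cos (3*(5*θ)) = 0 := by
      rw [hθ', show 3*(5*(Real.pi/30)) = Real.pi/2 by ring]; exact Real.cos_pi_div_two
    rw [Real.cos_three_mul, E5c] at h15
    have M : 256*Real.cos θ^8 - 448*Real.cos θ^6 + 224*Real.cos θ^4 - 32*Real.cos θ^2 + 1
        = 0 := typeE_aux_M30 _ _ P h15 C1.ne' hne1 hne2
    have hD3 : 3*Real.sin θ - 4*Real.sin θ^3 ≠ 0 := by rw [← E3]; exact S3.ne'
    have hS5 : 2*Real.sin θ*Real.cos θ*(4*Real.cos θ^3-3*Real.cos θ)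
        + (2*Real.cos θ^2-1)*(3*Real.sin θ-4*Real.sin θ^3) ≠ 0 := by
      rw [← E5]; exact S5.ne'
    have V0 : v 0 = Real.sin θ / Real.sin (3*θ) := hv0 0 rfl
    have V1 : v 1 = Real.sin θ / Real.sin (2*θ) := hv1 1 rfl
    have V2 : v 2 = Real.sin (2*θ) / Real.sin (3*θ) := hv2 2 rfl
    have V3 : v 3 = 1 := hv3 3 rfl
    have V4 : v 4 = Real.sin (4*θ) / Real.sin (5*θ) := by
      rw [hv4 4 (by decide)]; norm_num [show ((4:Fin 8):ℕ) = 4 from rfl]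
    have V5 : v 5 = Real.sin (3*θ) / Real.sin (5*θ) := by
      rw [hv4 5 (by decide)]; norm_num [show ((5:Fin 8):ℕ) = 5 from rfl]
    have V6 : v 6 = Real.sin (2*θ) / Real.sin (5*θ) := by
      rw [hv4 6 (by decide)]; norm_num [show ((6:Fin 8):ℕ) = 6 from rfl]
    have V7 : v 7 = Real.sin θ / Real.sin (5*θ) := by
      rw [hv4 7 (by decide)]; norm_num [show ((7:Fin 8):ℕ) = 7 from rfl]
    constructor
    · intro k; fin_cases k
      · show 0 < v 0; rw [V0]; exact div_pos S1 S3
      · show 0 < v 1; rw [V1]; exact div_pos S1 S2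
      · show 0 < v 2; rw [V2]; exact div_pos S2 S3
      · show 0 < v 3; rw [V3]; norm_num
      · show 0 < v 4; rw [V4]; exact div_pos S4 S5
      · show 0 < v 5; rw [V5]; exact div_pos S3 S5
      · show 0 < v 6; rw [V6]; exact div_pos S2 S5
      · show 0 < v 7; rw [V7]; exact div_pos S1 S5
    · rw [← hθ]
      funext i
      fin_cases i <;>
        simp only [Matrix.mulVec, dotProduct, hA, Fin.sum_univ_eight, Pi.smul_apply,
          smul_eq_mul] <;>
        norm_num [show ((0:Fin 8):ℕ)=0 from rfl, show ((1:Fin 8):ℕ)=1 from rfl,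
          show ((2:Fin 8):ℕ)=2 from rfl, show ((3:Fin 8):ℕ)=3 from rfl,
          show ((4:Fin 8):ℕ)=4 from rfl, show ((5:Fin 8):ℕ)=5 from rfl,
          show ((6:Fin 8):ℕ)=6 from rfl, show ((7:Fin 8):ℕ)=7 from rfl]
      · show v 2 = 2*Real.cos θ * v 0
        rw [V2, V0, E2]; ring
      · show v 3 = 2*Real.cos θ * v 1
        rw [V3, V1, E2]; exact typeE_aux_r1 _ _ S1.ne' C1.ne'
      · show v 0 + v 3 = 2*Real.cos θ * v 2
        rw [V0, V3, V2, E2, E3]; exact typeE_aux_r2 _ _ hD3 P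
      · show v 1 + v 2 + v 4 = 2*Real.cos θ * v 3
        rw [V1, V2, V4, V3, mul_one, E2, E3, E4, E5]
        exact typeE_aux_branch8 _ _ S1.ne' C1.ne' hD3 hS5 P M
      · show v 3 + v 5 = 2*Real.cos θ * v 4
        rw [V3, V5, V4, E3, E4, E5]; exact typeE_aux_n8r4 _ _ hS5 P
      · show v 4 + v 6 = 2*Real.cos θ * v 5
        rw [V4, V6, V5, E2, E3, E4, E5]; exact typeE_aux_n8r5 _ _ hS5 P
      · show v 5 + v 7 = 2*Real.cos θ * v 6
        rw [V5, V7, V6, E2, E3, E5]; exact typeE_aux_n8r6 _ _ hS5 P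
      · show v 6 = 2*Real.cos θ * v 7
        rw [V6, V7, E2]; ring
end

section
/- Let p ≥ 1 and n ≥ 1, and let m be an n×n real matrix with nonnegative entries that is irreducible. If φ_p(m) = 0, then there exists a vector v ∈ ℝⁿ with all entries strictly positive such that (2I − m)v has all entries strictly positive; that is, for every k, Σ_j m_{kj} v_j < 2 v_k. (Equivalently, 2I − m satisfies Vinberg's criterion for a generalized Cartan matrix of finite type.) -/
open Polynomial Finset


/-- The Chebyshev-like polynomials `φ_0 = 0`, `φ_1 = 1`,
`φ_{r+2} = X·φ_{r+1} − φ_r`. -/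
noncomputable def phi : ℕ → Polynomial ℝ
  | 0 => 0
  | 1 => 1
  | (r + 2) => Polynomial.X * phi (r + 1) - phi r

lemma phi_add_two (r : ℕ) : phi (r+2) = X * phi (r+1) - phi r := rfl

lemma phi_mul_id (r : ℕ) : phi (r+2) * phi r = phi (r+1)^2 - 1 := by
  induction r with
  | zero => simp [phi]
  | succ r ih =>
    rw [phi_add_two (r+1), phi_add_two r] at *
    linear_combination ih

lemma phi_eval_two (r : ℕ) : (phi r).eval 2 = r := by
  induction r using Nat.twoStepInduction with
  | zero => simp [phi]
  | one => simp [phi]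
  | more r ih1 ih2 =>
    rw [phi_add_two, eval_sub, eval_mul, eval_X, ih1, ih2]
    push_cast; ring

lemma X_mul_phi (r : ℕ) : X * phi (r+1) = phi (r+2) + phi r := by
  rw [phi_add_two]; ring

noncomputable def dd : ℕ → ℕ → ℝ
  | 0, i => if i = 0 then 1 else 0
  | (k+1), 0 => dd k 1
  | (k+1), (i+1) => dd k i + dd k (i+2)

lemma dd_nonneg : ∀ k i, 0 ≤ dd k i := by
  intro k
  induction k with
  | zero => intro i; unfold dd; split <;> norm_num
  | succ k ih =>
    intro i
    match i with
    | 0 => exact ih 1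
    | (i+1) => exact add_nonneg (ih i) (ih (i+2))

lemma dd_zero : ∀ k i, k + 1 ≤ i → dd k i = 0 := by
  intro k
  induction k with
  | zero => intro i hi; unfold dd; rw [if_neg (by omega)]
  | succ k ih =>
    intro i hi
    match i, hi with
    | (i+1), hi =>
      show dd k i + dd k (i+2) = 0
      rw [ih i (by omega), ih (i+2) (by omega), add_zero]

lemma pow_expansion : ∀ k, (X:Polynomial ℝ)^k = ∑ i ∈ range (k+1), C (dd k i) * phi (i+1) := by
  intro k
  induction k with
  | zero => simp [dd, phi]
  | succ k ih =>
    have h2 : ∑ i ∈ range (k+1), C (dd k i) * phi i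
        = C (dd k 1) * phi 1 + ∑ i ∈ range (k+1), C (dd k (i+2)) * phi (i+2) := by
      rw [Finset.sum_range_succ' (fun i => C (dd k i) * phi i) k]
      have e0 : C (dd k 0) * phi 0 = 0 := by simp [phi]
      rw [e0, add_zero]
      have hext : ∑ i ∈ range k, C (dd k (i+1)) * phi (i+1)
          = ∑ i ∈ range (k+1), C (dd k (i+1)) * phi (i+1) := by
        rw [Finset.sum_range_succ, dd_zero k (k+1) (by omega)]
        simp
      rw [hext, Finset.sum_range_succ' (fun i => C (dd k (i+1)) * phi (i+1)) k]
      have hext2 : ∑ i ∈ range k, C (dd k (i+2)) * phi (i+2)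
          = ∑ i ∈ range (k+1), C (dd k (i+2)) * phi (i+2) := by
        rw [Finset.sum_range_succ, dd_zero k (k+2) (by omega)]
        simp
      rw [hext2]; ring
    calc (X:Polynomial ℝ)^(k+1) = X * X^k := by ring
      _ = ∑ i ∈ range (k+1), C (dd k i) * (X * phi (i+1)) := by
          rw [ih, Finset.mul_sum]; apply Finset.sum_congr rfl; intro i _; ring
      _ = ∑ i ∈ range (k+1), C (dd k i) * phi (i+2)
            + ∑ i ∈ range (k+1), C (dd k i) * phi i := by
          rw [← Finset.sum_add_distrib]
          apply Finset.sum_congr rfl; intro i _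
          rw [X_mul_phi]; ring
      _ = ∑ i ∈ range (k+2), C (dd (k+1) i) * phi (i+1) := by
          rw [h2, Finset.sum_range_succ' (fun i => C (dd (k+1) i) * phi (i+1)) (k+1)]
          show _ = (∑ i ∈ range (k+1), C (dd k i + dd k (i+2)) * phi (i+2)) + C (dd k 1) * phi 1
          have hco : ∑ i ∈ range (k+1), C (dd k i + dd k (i+2)) * phi (i+2)
              = ∑ i ∈ range (k+1), C (dd k i) * phi (i+2)
                + ∑ i ∈ range (k+1), C (dd k (i+2)) * phi (i+2) := by
            rw [← Finset.sum_add_distrib]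
            apply Finset.sum_congr rfl; intro i _; rw [map_add]; ring
          rw [hco]; ring

lemma dd_weight (k : ℕ) : ∑ i ∈ range (k+1), dd k i * ((i:ℝ)+1) = 2^k := by
  have h := congrArg (eval 2) (pow_expansion k)
  rw [eval_pow, eval_X, eval_finset_sum] at h
  rw [h]
  apply Finset.sum_congr rfl; intro i _
  rw [eval_mul, eval_C, phi_eval_two]
  push_cast; ring


set_option maxHeartbeats 2000000 in
/-- If `m` is an irreducible nonnegative `n × n` real matrix with
`φ_p(m) = 0`, then there is a strictly positive vector `v` with `(2I − m)v` strictly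
positive, i.e. `∑ j, m k j * v j < 2 * v k` for all `k` (Vinberg's criterion for
`2I − m`). -/
theorem vinberg_of_phi_annihilates
    (p n : ℕ) (hp : 1 ≤ p) (hn : 1 ≤ n)
    (m : Matrix (Fin n) (Fin n) ℝ)
    (hm0 : ∀ i j, 0 ≤ m i j)
    (hirr : ∀ i j, ∃ r : ℕ, 1 ≤ r ∧ 0 < (m ^ r) i j)
    (hphi : Polynomial.aeval m (phi p) = 0) :
    ∃ v : Fin n → ℝ, (∀ k, 0 < v k) ∧ ∀ k, ∑ j, m k j * v j < 2 * v k := by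
  obtain ⟨q, rfl⟩ : ∃ q, p = q + 1 := ⟨p - 1, by omega⟩
  set N : ℕ := 2 * (q + 1) with hNdef
  have hNpos : 0 < N := by omega
  set B : ℕ → Matrix (Fin n) (Fin n) ℝ := fun r => aeval m (phi r) with hBdef
  have hB0 : B 0 = 0 := by simp [hBdef, phi]
  have hB1 : B 1 = 1 := by simp [hBdef, phi]
  have hBrec : ∀ r, B (r+2) = m * B (r+1) - B r := by
    intro r
    show aeval m (phi (r+2)) = _
    rw [phi_add_two, map_sub, map_mul, aeval_X]
  have hmB : ∀ r, m * B r = B r * m := by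
    intro r
    have h : aeval m (X:Polynomial ℝ) * aeval m (phi r)
        = aeval m (phi r) * aeval m (X:Polynomial ℝ) := by
      rw [← map_mul, ← map_mul, mul_comm]
    simpa [aeval_X] using h
  have hBp : B (q+1) = 0 := hphi
  have hBq1 : B (q+2) = - B q := by rw [hBrec q, hBp, mul_zero, zero_sub]
  have hsq : B q * B q = 1 := by
    have h1 : B (q+2) * B q = B (q+1)^2 - 1 := by
      have := congrArg (aeval m) (phi_mul_id q)
      simpa [map_pow] using this
    rw [hBq1, hBp] at h1
    have h2 : -(B q * B q) = -1 := by simpa using h1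
    simpa using neg_injective h2
  have hM3 : ∀ r, B (q+1+r) = -(B q * B r) := by
    intro r
    induction r using Nat.twoStepInduction with
    | zero => simpa [hB0] using hBp
    | one => simp [hBq1, hB1]
    | more r ih1 ih2 =>
      show B ((q+1+r)+2) = _
      rw [hBrec, show q+1+r+1 = q+1+(r+1) from rfl, ih2, ih1, hBrec r]
      have hcm : m * (B q * B (r+1)) = B q * (m * B (r+1)) := by
        rw [← mul_assoc, hmB q, mul_assoc]
      rw [mul_neg, hcm, mul_sub]
      abel
  have hperiod : ∀ r, B (N + r) = B r := by
    intro r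
    have e1 : N + r = (q+1) + ((q+1) + r) := by omega
    rw [e1, hM3, hM3, mul_neg, neg_neg, ← mul_assoc, hsq, one_mul]
  have hBN : B N = 0 := by simpa [hB0] using hperiod 0
  have hBN1 : B (N+1) = 1 := by rw [hperiod 1, hB1]
  have hmod : ∀ j, B j = B (j % N) := by
    have key : ∀ t r, B (N*t + r) = B r := by
      intro t
      induction t with
      | zero => intro r; simp
      | succ t ih =>
        intro r
        have e : N*(t+1) + r = N + (N*t + r) := by ring
        rw [e, hperiod, ih]
    intro j
    conv_lhs => rw [← Nat.div_add_mod j N]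
    exact key _ _
  -- entry bound constant
  set CC : ℝ := ∑ j ∈ range N, ∑ i : Fin n, ∑ l : Fin n, |B j i l| with hCCdef
  have hCC0 : 0 ≤ CC := by positivity
  have hBle : ∀ j (i l : Fin n), |B j i l| ≤ CC := by
    intro j i l
    rw [hmod j]
    have hjN : j % N ∈ range N := mem_range.mpr (Nat.mod_lt _ hNpos)
    calc |B (j % N) i l| ≤ ∑ l', |B (j % N) i l'| :=
          Finset.single_le_sum (f := fun l' => |B (j % N) i l'|)
            (fun _ _ => abs_nonneg _) (mem_univ l)
      _ ≤ ∑ i' : Fin n, ∑ l', |B (j % N) i' l'| :=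
          Finset.single_le_sum (f := fun i' => ∑ l' : Fin n, |B (j % N) i' l'|)
            (fun i' _ => Finset.sum_nonneg fun _ _ => abs_nonneg _) (mem_univ i)
      _ ≤ CC :=
          Finset.single_le_sum (f := fun j' => ∑ i' : Fin n, ∑ l' : Fin n, |B j' i' l'|)
            (fun j' _ => by positivity) hjN
  have i0 : Fin n := ⟨0, hn⟩
  have hmpow_nonneg : ∀ k (i l : Fin n), 0 ≤ (m^k) i l := by
    intro k
    induction k with
    | zero => intro i l; rw [pow_zero, Matrix.one_apply]; split <;> norm_num
    | succ k ih =>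
      intro i l
      rw [pow_succ, Matrix.mul_apply]
      exact Finset.sum_nonneg fun s _ => mul_nonneg (ih i s) (hm0 s l)
  have hmpow_le : ∀ k (i l : Fin n), |(m^k) i l| ≤ CC * 2^k := by
    intro k i l
    have hexp : m ^ k = ∑ j ∈ range (k+1), dd k j • B (j+1) := by
      have h := congrArg (aeval m) (pow_expansion k)
      rw [map_pow, aeval_X, map_sum] at h
      rw [h]
      apply Finset.sum_congr rfl; intro j _
      rw [map_mul, aeval_C, Algebra.smul_def]
    have hent : (m^k) i l = ∑ j ∈ range (k+1), dd k j * B (j+1) i l := by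
      rw [hexp]
      simp [Matrix.sum_apply]
    rw [hent]
    calc |∑ j ∈ range (k+1), dd k j * B (j+1) i l|
        ≤ ∑ j ∈ range (k+1), |dd k j * B (j+1) i l| := Finset.abs_sum_le_sum_abs _ _
      _ ≤ ∑ j ∈ range (k+1), dd k j * ((j:ℝ)+1) * CC := by
          apply Finset.sum_le_sum; intro j _
          rw [abs_mul, abs_of_nonneg (dd_nonneg k j)]
          calc dd k j * |B (j+1) i l| ≤ dd k j * CC :=
                mul_le_mul_of_nonneg_left (hBle _ i l) (dd_nonneg k j)
            _ ≤ dd k j * ((j:ℝ)+1) * CC := by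
                have h1 : dd k j * 1 ≤ dd k j * ((j:ℝ)+1) :=
                  mul_le_mul_of_nonneg_left
                    (by have := Nat.cast_nonneg (α:=ℝ) j; linarith) (dd_nonneg k j)
                nlinarith [dd_nonneg k j]
      _ = (∑ j ∈ range (k+1), dd k j * ((j:ℝ)+1)) * CC := by rw [Finset.sum_mul]
      _ = CC * 2^k := by rw [dd_weight]; ring
  -- constants and choice of x
  set PC : ℝ := (N:ℝ) * CC with hPCdef
  have hPC0 : 0 ≤ PC := by positivity
  set MM : ℝ := (n:ℝ) * PC + 1 with hMMdef
  have hMM1 : 1 ≤ MM := by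
    have : (0:ℝ) ≤ (n:ℝ)*PC := mul_nonneg (Nat.cast_nonneg n) hPC0
    rw [hMMdef]; linarith
  set x : ℝ := 1 - (MM+1)⁻¹ with hxdef
  have hMM0 : 0 < MM + 1 := by linarith
  have hx1 : x < 1 := by
    have : 0 < (MM+1)⁻¹ := by positivity
    simp [hxdef]; linarith
  have hx0 : 0 < x := by
    have h2 : (2:ℝ) ≤ MM + 1 := by linarith
    have : (MM+1)⁻¹ ≤ 2⁻¹ := by
      apply inv_anti₀ <;> linarith
    simp [hxdef]; linarith
  have hxMM : (1-x)*MM < 1 := by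
    rw [show (1-x) = (MM+1)⁻¹ by rw [hxdef]; ring, inv_mul_eq_div, div_lt_one hMM0]
    linarith
  set y : ℝ := x / (1+x^2) with hydef
  have hx2 : (0:ℝ) < 1 + x^2 := by positivity
  have hy0 : 0 < y := div_pos hx0 hx2
  have h2y : 2*y < 1 := by
    rw [hydef, show 2*(x/(1+x^2)) = 2*x/(1+x^2) by ring, div_lt_one hx2]
    nlinarith [sq_nonneg (1-x)]
  have hy1 : 0 ≤ 2*y := by linarith
  have hxy : (1+x^2) * y = x := by
    rw [hydef]; field_simp
  -- the matrices T and A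
  set T : Matrix (Fin n) (Fin n) ℝ := ∑ r ∈ range N, x^r • B (r+1) with hTdef
  have hTle : ∀ i l : Fin n, |T i l| ≤ PC := by
    intro i l
    have hent : T i l = ∑ r ∈ range N, x^r * B (r+1) i l := by
      rw [hTdef]; simp [Matrix.sum_apply]
    rw [hent]
    calc |∑ r ∈ range N, x^r * B (r+1) i l| ≤ ∑ r ∈ range N, |x^r * B (r+1) i l| :=
          Finset.abs_sum_le_sum_abs _ _
      _ ≤ ∑ _r ∈ range N, CC := by
          apply Finset.sum_le_sum; intro r _
          rw [abs_mul, abs_of_nonneg (by positivity : (0:ℝ) ≤ x^r)]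
          calc x^r * |B (r+1) i l| ≤ 1 * CC := by
                apply mul_le_mul (pow_le_one₀ hx0.le hx1.le) (hBle _ i l) (abs_nonneg _)
                norm_num
            _ = CC := one_mul _
      _ = PC := by rw [Finset.sum_const, Finset.card_range, nsmul_eq_mul, hPCdef]
  have hmT : m * T = T * m := by
    rw [hTdef, Finset.mul_sum, Finset.sum_mul]
    apply Finset.sum_congr rfl; intro r _
    rw [mul_smul_comm, smul_mul_assoc, hmB]
  set A : Matrix (Fin n) (Fin n) ℝ := (1+x^2) • (1 : Matrix (Fin n) (Fin n) ℝ) - x • m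
    with hAdef
  have hmBsum : ∀ r, m * B (r+1) = B (r+2) + B r := by
    intro r; rw [hBrec r]; abel
  have hAT : A * T = (1 - x^N) • (1 : Matrix (Fin n) (Fin n) ℝ) := by
    have hstep : ∀ r, A * (x^r • B (r+1))
        = (x^r • B (r+1) - x^(r+1) • B r) - (x^(r+1) • B (r+2) - x^(r+2) • B (r+1)) := by
      intro r
      rw [hAdef, sub_mul, smul_mul_assoc, one_mul, smul_mul_assoc, mul_smul_comm,
        hmBsum r, smul_smul, smul_smul]
      rw [smul_add]
      module
    rw [hTdef, Finset.mul_sum, Finset.sum_congr rfl (fun r _ => hstep r),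
      Finset.sum_range_sub' (fun r => x^r • B (r+1) - x^(r+1) • B r) N]
    rw [hB0, hB1, hBN, hBN1]
    rw [sub_smul, one_smul]
    simp
  have hTA : T * A = (1 - x^N) • (1 : Matrix (Fin n) (Fin n) ℝ) := by
    rw [← hAT, hAdef, sub_mul, mul_sub, smul_mul_assoc, one_mul, mul_smul_comm, mul_one,
      smul_mul_assoc, mul_smul_comm, hmT]
  set Q : ℕ → Matrix (Fin n) (Fin n) ℝ := fun K => ∑ k ∈ range (K+1), y^k • m^k with hQdef
  have hAQ : ∀ K, A * Q K
      = (1+x^2) • ((1 : Matrix (Fin n) (Fin n) ℝ) - y^(K+1) • m^(K+1)) := by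
    intro K
    have hA' : A = (1+x^2) • ((1 : Matrix (Fin n) (Fin n) ℝ) - y • m) := by
      rw [hAdef, smul_sub, smul_smul, hxy]
    have hgeo : ((1 : Matrix (Fin n) (Fin n) ℝ) - y • m) * Q K
        = 1 - y^(K+1) • m^(K+1) := by
      have hstep : ∀ k, ((1 : Matrix (Fin n) (Fin n) ℝ) - y • m) * (y^k • m^k)
          = y^k • m^k - y^(k+1) • m^(k+1) := by
        intro k
        rw [sub_mul, one_mul, smul_mul_assoc, mul_smul_comm, smul_smul,
          ← pow_succ', ← pow_succ']
      rw [hQdef, Finset.mul_sum, Finset.sum_congr rfl (fun k _ => hstep k),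
        Finset.sum_range_sub' (fun k => y^k • m^k) (K+1)]
      simp
    rw [hA', smul_mul_assoc, hgeo]
  have hkey : ∀ K, (1 - x^N) • Q K
      = (1+x^2) • T - ((1+x^2)*y^(K+1)) • (T * m^(K+1)) := by
    intro K
    calc (1 - x^N) • Q K = ((1 - x^N) • (1 : Matrix (Fin n) (Fin n) ℝ)) * Q K := by
          rw [smul_mul_assoc, one_mul]
      _ = (T * A) * Q K := by rw [hTA]
      _ = T * (A * Q K) := by rw [mul_assoc]
      _ = T * ((1+x^2) • ((1 : Matrix (Fin n) (Fin n) ℝ) - y^(K+1) • m^(K+1))) := by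
          rw [hAQ]
      _ = (1+x^2) • (T - y^(K+1) • (T * m^(K+1))) := by
          rw [mul_smul_comm, mul_sub, mul_one, mul_smul_comm]
      _ = (1+x^2) • T - ((1+x^2)*y^(K+1)) • (T * m^(K+1)) := by
          rw [smul_sub, smul_smul]
  have hxN1 : x^N < 1 := pow_lt_one₀ hx0.le hx1 (by omega)
  have hbeta : 0 < 1 - x^N := by linarith
  -- positivity of entries of T
  have hTpos : ∀ i l : Fin n, 0 < T i l := by
    intro i l
    obtain ⟨r, hr1, hr⟩ := hirr i l
    have hee : 0 < y^r * (m^r) i l := mul_pos (pow_pos hy0 r) hr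
    set D : ℝ := (1+x^2)*((n:ℝ)*(PC*CC)) + 1 with hDdef
    have hD0 : 0 < D := by positivity
    obtain ⟨K0, hK0⟩ := exists_pow_lt_of_lt_one
      (div_pos (mul_pos hbeta hee) hD0) h2y
    set K : ℕ := max r K0 with hKdef
    have hK0K : K0 ≤ K + 1 := le_trans (le_max_right r K0) (Nat.le_succ K)
    have h2yK : (2*y)^(K+1) ≤ (2*y)^K0 :=
      pow_le_pow_of_le_one hy1 h2y.le hK0K
    have hQent : Q K i l = ∑ k ∈ range (K+1), y^k * (m^k) i l := by
      show (∑ k ∈ range (K+1), y^k • m^k) i l = _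
      rw [Matrix.sum_apply]
      apply Finset.sum_congr rfl; intro kk _
      rw [Matrix.smul_apply, smul_eq_mul]
    have hQge : y^r * (m^r) i l ≤ Q K i l := by
      rw [hQent]
      apply Finset.single_le_sum (f := fun k => y^k * (m^k) i l)
        (fun k _ => mul_nonneg (pow_nonneg hy0.le k) (hmpow_nonneg k i l))
      exact mem_range.mpr (Nat.lt_succ_of_le (le_max_left r K0))
    have herr : |(T * m^(K+1)) i l| ≤ (n:ℝ) * (PC * (CC * 2^(K+1))) := by
      rw [Matrix.mul_apply]
      calc |∑ s, T i s * (m^(K+1)) s l| ≤ ∑ s, |T i s * (m^(K+1)) s l| :=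
            Finset.abs_sum_le_sum_abs _ _
        _ ≤ ∑ _s : Fin n, PC * (CC * 2^(K+1)) := by
            apply Finset.sum_le_sum; intro s _
            rw [abs_mul]
            exact mul_le_mul (hTle i s) (hmpow_le (K+1) s l) (abs_nonneg _) hPC0
        _ = (n:ℝ) * (PC * (CC * 2^(K+1))) := by
            rw [Finset.sum_const, Finset.card_univ, Fintype.card_fin, nsmul_eq_mul]
    -- entrywise identity from hkey
    have hid : (1 - x^N) * Q K i l
        = (1+x^2) * T i l - ((1+x^2)*y^(K+1)) * (T * m^(K+1)) i l := by
      have := congrFun (congrFun (hkey K) i) l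
      simpa [Matrix.sub_apply, Matrix.smul_apply, smul_eq_mul] using this
    -- assemble
    have hyK2 : y^(K+1) * ((n:ℝ) * (PC * (CC * 2^(K+1)))) = (2*y)^(K+1) * ((n:ℝ)*(PC*CC)) := by
      rw [mul_pow]; ring
    have hband : ((1+x^2)*y^(K+1)) * (T * m^(K+1)) i l
        > -((1 - x^N) * (y^r * (m^r) i l)) := by
      have h1 : |((1+x^2)*y^(K+1)) * (T * m^(K+1)) i l|
          ≤ ((1+x^2)*y^(K+1)) * ((n:ℝ) * (PC * (CC * 2^(K+1)))) := by
        rw [abs_mul, abs_of_nonneg (by positivity : (0:ℝ) ≤ (1+x^2)*y^(K+1))]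
        exact mul_le_mul_of_nonneg_left herr (by positivity)
      have h2 : ((1+x^2)*y^(K+1)) * ((n:ℝ) * (PC * (CC * 2^(K+1))))
          = (1+x^2) * ((2*y)^(K+1) * ((n:ℝ)*(PC*CC))) := by
        rw [mul_pow]; ring
      have h3 : (2*y)^(K+1) * ((1+x^2) * ((n:ℝ)*(PC*CC)))
          < (1 - x^N) * (y^r * (m^r) i l) := by
        have h4 : (2*y)^(K+1) < (1 - x^N) * (y^r * (m^r) i l) / D :=
          lt_of_le_of_lt h2yK hK0
        have h5 : (2*y)^(K+1) * D < (1 - x^N) * (y^r * (m^r) i l) := by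
          rw [← lt_div_iff₀ hD0]; exact h4
        have h6 : (0:ℝ) ≤ (2*y)^(K+1) := by positivity
        nlinarith [h6]
      have h7 := neg_abs_le (((1+x^2)*y^(K+1)) * (T * m^(K+1)) i l)
      linarith [h1, h2, h3, h7]
    have hQb : (1 - x^N) * (y^r * (m^r) i l) ≤ (1 - x^N) * Q K i l :=
      mul_le_mul_of_nonneg_left hQge hbeta.le
    nlinarith [hid, hband, hQb, hx2]
  -- the vector
  refine ⟨fun k => ∑ j, T k j, fun k => Finset.sum_pos (fun j _ => hTpos k j) ⟨i0, mem_univ i0⟩, ?_⟩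
  intro k
  set v : Fin n → ℝ := fun k => ∑ j, T k j with hvdef
  show ∑ j, m k j * v j < 2 * v k
  have hvpos : 0 < v k := Finset.sum_pos (fun j _ => hTpos k j) ⟨i0, mem_univ i0⟩
  have hvle : v k ≤ (n:ℝ) * PC := by
    calc v k ≤ ∑ j, |T k j| := Finset.sum_le_sum fun j _ => le_abs_self _
      _ ≤ ∑ _j : Fin n, PC := Finset.sum_le_sum fun j _ => hTle k j
      _ = (n:ℝ) * PC := by
          rw [Finset.sum_const, Finset.card_univ, Fintype.card_fin, nsmul_eq_mul]
  -- row identity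
  have hrow : (1+x^2) * v k - x * (∑ j, m k j * v j) = 1 - x^N := by
    have h1 : ∑ j, (A * T) k j = ∑ j, ((1 - x^N) • (1 : Matrix (Fin n) (Fin n) ℝ)) k j := by
      rw [hAT]
    have h2 : ∑ j, ((1 - x^N) • (1 : Matrix (Fin n) (Fin n) ℝ)) k j = 1 - x^N := by
      simp [Matrix.smul_apply, Matrix.one_apply, smul_eq_mul]
    have h3 : ∑ j, (A * T) k j = ∑ s, A k s * v s := by
      calc ∑ j, (A * T) k j = ∑ j, ∑ s, A k s * T s j := by
            apply Finset.sum_congr rfl; intro j _; rw [Matrix.mul_apply]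
        _ = ∑ s, ∑ j, A k s * T s j := Finset.sum_comm
        _ = ∑ s, A k s * v s := by
            apply Finset.sum_congr rfl; intro s _
            rw [← Finset.mul_sum]
    have h4 : ∀ s, A k s = (1+x^2) * (1 : Matrix (Fin n) (Fin n) ℝ) k s - x * m k s := by
      intro s
      rw [hAdef, Matrix.sub_apply, Matrix.smul_apply, Matrix.smul_apply, smul_eq_mul,
        smul_eq_mul]
    have h5 : ∑ s, (1 : Matrix (Fin n) (Fin n) ℝ) k s * v s = v k := by
      simp [Matrix.one_apply]
    have h6 : ∑ s, A k s * v s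
        = (1+x^2) * v k - x * (∑ s, m k s * v s) := by
      calc ∑ s, A k s * v s
          = ∑ s, ((1+x^2) * ((1 : Matrix (Fin n) (Fin n) ℝ) k s * v s)
              - x * (m k s * v s)) := by
            apply Finset.sum_congr rfl; intro s _; rw [h4]; ring
        _ = (1+x^2) * (∑ s, (1 : Matrix (Fin n) (Fin n) ℝ) k s * v s)
              - x * (∑ s, m k s * v s) := by
            rw [Finset.sum_sub_distrib, ← Finset.mul_sum, ← Finset.mul_sum]
        _ = (1+x^2) * v k - x * (∑ s, m k s * v s) := by rw [h5]
    rw [← h6, ← h3, h1, h2]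
  -- conclude
  have hxN : x^N ≤ x := pow_le_of_le_one hx0.le hx1.le (by omega)
  have hfin : (1-x)^2 * v k < 1 - x^N := by
    have hb1 : (1-x)^2 * v k ≤ (1-x)^2 * ((n:ℝ) * PC) :=
      mul_le_mul_of_nonneg_left hvle (by positivity)
    have hb2 : (1-x) * ((1-x) * MM) < (1-x) * 1 :=
      mul_lt_mul_of_pos_left hxMM (by linarith)
    have hb3 : (n:ℝ) * PC = MM - 1 := by rw [hMMdef]; ring
    nlinarith [hb1, hb2, hb3, hxN, sq_nonneg (1-x)]
  have hmul : x * (∑ j, m k j * v j) < x * (2 * v k) := by nlinarith [hrow, hfin]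
  exact lt_of_mul_lt_mul_left hmul hx0.le
end

section
/- Let p ≥ 1 and h ≥ 2 be integers with h dividing p, and let m be an n×n real matrix such that m = P D P⁻¹ for some invertible n×n matrix P and some diagonal matrix D, each of whose diagonal entries equals 2cos(kπ/h) for some integer k with 1 ≤ k ≤ h − 1. Then φ_p(m) = 0. (In particular, the Coxeter adjacency matrix of a Dynkin diagram of finite type, whose eigenvalues are 2cos(e_jπ/h) with h its Coxeter number and which is diagonalizable, is annihilated by φ_p whenever h divides p.) -/
lemma phi_eval_cos (θ : ℝ) : ∀ r : ℕ,
    (phi r).eval (2 * Real.cos θ) * Real.sin θ = Real.sin (r * θ)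
  | 0 => by simp [phi]
  | 1 => by simp [phi]
  | (r + 2) => by
    have h1 := phi_eval_cos θ (r + 1)
    have h0 := phi_eval_cos θ r
    have key : Real.sin ((r + 2 : ℕ) * θ)
        = 2 * Real.cos θ * Real.sin ((r + 1 : ℕ) * θ) - Real.sin (r * θ) := by
      push_cast
      have e1 : ((r : ℝ) + 2) * θ = ((r + 1) * θ) + θ := by ring
      have e2 : (r : ℝ) * θ = ((r + 1) * θ) - θ := by ring
      rw [e1, e2, Real.sin_add, Real.sin_sub]
      ring
    rw [key, ← h1, ← h0]
    simp [phi]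
    ring

lemma aeval_conj {n : ℕ} (q : Polynomial ℝ) (A P : Matrix (Fin n) (Fin n) ℝ)
    (h1 : P * P⁻¹ = 1) (h2 : P⁻¹ * P = 1) :
    Polynomial.aeval (P * A * P⁻¹) q = P * Polynomial.aeval A q * P⁻¹ := by
  have hpow : ∀ k : ℕ, (P * A * P⁻¹) ^ k = P * A ^ k * P⁻¹ := by
    intro k
    induction k with
    | zero => simp [h1]
    | succ k ih =>
      rw [pow_succ, pow_succ, ih]
      calc P * A ^ k * P⁻¹ * (P * A * P⁻¹)
          = P * A ^ k * (P⁻¹ * P) * A * P⁻¹ := by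
            simp only [Matrix.mul_assoc]
        _ = P * (A ^ k * A) * P⁻¹ := by rw [h2]; simp only [Matrix.mul_assoc, Matrix.mul_one]
  induction q using Polynomial.induction_on' with
  | add f g hf hg => simp [map_add, hf, hg, Matrix.mul_add, Matrix.add_mul]
  | monomial k a =>
    rw [Polynomial.aeval_monomial, Polynomial.aeval_monomial, hpow,
      Algebra.smul_def a (P * A ^ k * P⁻¹) |>.symm,
      Algebra.smul_def a (A ^ k) |>.symm,
      Matrix.mul_smul, Matrix.smul_mul]

/-- If `h ∣ p` with `p ≥ 1`, `h ≥ 2`, and `m = P D P⁻¹` is diagonalizable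
with each diagonal entry of `D` of the form `2 cos(kπ/h)` for some `1 ≤ k ≤ h − 1`, then
`φ_p(m) = 0`. -/
theorem phi_annihilates_diagonalizable_with_cos_eigenvalues
    (p h n : ℕ) (hp : 1 ≤ p) (hh : 2 ≤ h) (hdvd : h ∣ p)
    (m P : Matrix (Fin n) (Fin n) ℝ) (hP : IsUnit P.det)
    (d : Fin n → ℝ)
    (hd : ∀ i, ∃ k : ℕ, 1 ≤ k ∧ k ≤ h - 1 ∧
      d i = 2 * Real.cos ((k : ℝ) * Real.pi / (h : ℝ)))
    (hm : m = P * Matrix.diagonal d * P⁻¹) :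
    Polynomial.aeval m (phi p) = 0 := by
  -- each eigenvalue is a root of phi p
  have heval : ∀ i, (phi p).eval (d i) = 0 := by
    intro i
    obtain ⟨k, hk1, hk2, hdi⟩ := hd i
    set θ := (k : ℝ) * Real.pi / (h : ℝ)
    have hhpos : (0 : ℝ) < h := by positivity
    have hθpos : 0 < θ := by
      have : (0 : ℝ) < k := by exact_mod_cast hk1
      have := Real.pi_pos
      positivity
    have hθlt : θ < Real.pi := by
      have hk : (k : ℝ) < h := by
        exact_mod_cast (by omega : k < h)
      rw [div_lt_iff₀ hhpos]
      calc (k:ℝ) * Real.pi < (h:ℝ) * Real.pi := by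
            exact mul_lt_mul_of_pos_right hk Real.pi_pos
        _ = Real.pi * h := by ring
    have hsin : Real.sin θ ≠ 0 :=
      ne_of_gt (Real.sin_pos_of_pos_of_lt_pi hθpos hθlt)
    have hkey := phi_eval_cos θ p
    have hpθ : Real.sin (p * θ) = 0 := by
      obtain ⟨c, rfl⟩ := hdvd
      have hhne : (h : ℝ) ≠ 0 := ne_of_gt hhpos
      have : ((h * c : ℕ) : ℝ) * θ = (c * k : ℕ) * Real.pi := by
        push_cast
        simp only [θ]
        have hinv := mul_inv_cancel₀ hhne
        linear_combination ((c : ℝ) * k * Real.pi) * hinv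
      rw [this, Real.sin_nat_mul_pi]
    rw [hpθ] at hkey
    rw [hdi]
    exact (mul_eq_zero.mp hkey).resolve_right hsin
  -- aeval of diagonal
  have hdiag : Polynomial.aeval (Matrix.diagonal d) (phi p) =
      Matrix.diagonal (fun i => (phi p).eval (d i)) := by
    have := Polynomial.aeval_algHom_apply (Matrix.diagonalAlgHom (R := ℝ)) d (phi p)
    rw [show Polynomial.aeval (Matrix.diagonal d) (phi p)
      = (Matrix.diagonalAlgHom ℝ) ((Polynomial.aeval d) (phi p)) from this]
    simp only [Matrix.diagonalAlgHom_apply]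
    have harg : (Polynomial.aeval d) (phi p) = fun i => Polynomial.eval (d i) (phi p) := by
      funext i
      rw [Polynomial.aeval_fn_apply]
      rw [Polynomial.coe_aeval_eq_eval]
    rw [harg]
  have h1 : P * P⁻¹ = 1 := Matrix.mul_nonsing_inv P hP
  have h2 : P⁻¹ * P = 1 := Matrix.nonsing_inv_mul P hP
  rw [hm, aeval_conj _ _ _ h1 h2, hdiag]
  have : Matrix.diagonal (fun i => (phi p).eval (d i)) = 0 := by
    rw [show (fun i => (phi p).eval (d i)) = fun _ => (0:ℝ) from funext heval]
    simp
  rw [this, Matrix.mul_zero, Matrix.zero_mul]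
end
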